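/- arXiv:1310.6467 — 5 statements merged into one kernel-verified Lean document; each statement's English description precedes it below -/
import Mathlib

section
/- For any fixed k ≥ 2, if gcd(m,q) = D and D is factored as D = d₁·d₂²·…·d_k^k with d₁,…,d_{k-1} squarefree and pairwise coprime, then every solution x of x^k ≡ m (mod q) is divisible by d₁d₂⋯d_k. -/
/-- If `gcd(m,q) = D = d₁ d₂² ⋯ d_k^k` with `d₁,…,d_{k-1}` squarefree and pairwise
coprime, then every solution of `x^k ≡ m (mod q)` is divisible by `d₁ d₂ ⋯ d_k`. -/
theorem divisibility_of_solutions (k : ℕ) (hk : 2 ≤ k) (q : ℕ) (hq : 1 ≤ q) (m : ℤ)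
    (d : Fin k → ℕ) (hD : Int.gcd m q = ∏ i : Fin k, d i ^ ((i : ℕ) + 1))
    (hsf : ∀ i : Fin k, (i : ℕ) + 1 < k → Squarefree (d i))
    (hcop : ∀ i j : Fin k, i ≠ j → (i : ℕ) + 1 < k → (j : ℕ) + 1 < k →
      Nat.Coprime (d i) (d j)) :
    ∀ x : ℤ, (q : ℤ) ∣ x ^ k - m → ((∏ i : Fin k, d i : ℕ) : ℤ) ∣ x := by
  intro x hx
  have hq0 : q ≠ 0 := by omega
  have hD0 : Int.gcd m q ≠ 0 := by
    intro h
    obtain ⟨-, h2⟩ := Int.gcd_eq_zero_iff.mp h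
    exact hq0 (by exact_mod_cast h2)
  have hd0 : ∀ i, d i ≠ 0 := by
    intro i hi
    apply hD0
    rw [hD]
    exact Finset.prod_eq_zero (Finset.mem_univ i) (by simp [hi])
  have hDm : ((Int.gcd m q : ℕ) : ℤ) ∣ m := Int.gcd_dvd_left m q
  have hDq : ((Int.gcd m q : ℕ) : ℤ) ∣ (q : ℤ) := Int.gcd_dvd_right m q
  have hDx : ((Int.gcd m q : ℕ) : ℤ) ∣ x ^ k := by
    have h1 : ((Int.gcd m q : ℕ) : ℤ) ∣ x ^ k - m := hDq.trans hx
    have := h1.add hDm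
    simpa using this
  rcases eq_or_ne x 0 with rfl | hx0
  · exact dvd_zero _
  have hX0 : x.natAbs ≠ 0 := Int.natAbs_ne_zero.mpr hx0
  have hDX : Int.gcd m q ∣ x.natAbs ^ k := by
    have := Int.natAbs_dvd_natAbs.mpr hDx
    simpa [Int.natAbs_pow] using this
  have hn0 : (∏ i : Fin k, d i) ≠ 0 := Finset.prod_ne_zero_iff.mpr fun i _ => hd0 i
  have hmain : (∏ i : Fin k, d i) ∣ x.natAbs := by
    rw [← Nat.factorization_le_iff_dvd hn0 hX0]
    intro p
    by_cases hp : p.Prime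
    swap
    · simp [Nat.factorization_eq_zero_of_not_prime _ hp]
    set f : Fin k → ℕ := fun i => (d i).factorization p with hf
    set v : ℕ := (x.natAbs).factorization p with hv
    -- key inequality
    have key : ∑ i : Fin k, ((i : ℕ) + 1) * f i ≤ k * v := by
      have h1 : (Int.gcd m q).factorization p ≤ (x.natAbs ^ k).factorization p :=
        (Nat.factorization_le_iff_dvd hD0 (pow_ne_zero _ hX0)).mpr hDX p
      have h2 : (x.natAbs ^ k).factorization p = k * v := by
        rw [Nat.factorization_pow]; simp [hv]
      have h3 : (Int.gcd m q).factorization p = ∑ i : Fin k, ((i : ℕ) + 1) * f i := by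
        rw [hD, Nat.factorization_prod (fun i _ => pow_ne_zero _ (hd0 i))]
        rw [Finsupp.finset_sum_apply]
        refine Finset.sum_congr rfl fun i _ => ?_
        rw [Nat.factorization_pow]; simp [hf]
      rw [h3, h2] at h1
      exact h1
    have hgoal : (∏ i : Fin k, d i).factorization p = ∑ i : Fin k, f i := by
      rw [Nat.factorization_prod (fun i _ => hd0 i), Finsupp.finset_sum_apply]
    rw [hgoal]
    -- combinatorics
    have hklt : k - 1 < k := by omega
    set last : Fin k := ⟨k - 1, hklt⟩ with hlast
    have hne_iff : ∀ i : Fin k, i ≠ last ↔ (i : ℕ) + 1 < k := by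
      intro i
      have := i.isLt
      constructor
      · intro h
        rcases Nat.lt_or_ge ((i : ℕ) + 1) k with h' | h'
        · exact h'
        · exact absurd (Fin.ext (by omega : (i : ℕ) = k - 1)) h
      · intro h h'
        rw [h'] at h
        simp only [hlast] at h
        omega
    have hsplit : ∑ i : Fin k, f i = (∑ i ∈ Finset.univ.erase last, f i) + f last :=
      (Finset.sum_erase_add _ _ (Finset.mem_univ last)).symm
    have hsplit2 : ∑ i : Fin k, ((i : ℕ) + 1) * f i
        = (∑ i ∈ Finset.univ.erase last, ((i : ℕ) + 1) * f i) + k * f last := by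
      rw [← Finset.sum_erase_add _ _ (Finset.mem_univ last)]
      congr 1
      simp only [hlast]
      congr 1
      omega
    set s : ℕ := ∑ i ∈ Finset.univ.erase last, f i with hs
    set e : ℕ := f last with he
    -- s ≤ 1
    have hs1 : s ≤ 1 := by
      by_cases hall : ∀ i ∈ Finset.univ.erase last, f i = 0
      · rw [hs, Finset.sum_eq_zero hall]; omega
      · push_neg at hall
        obtain ⟨i₀, hi₀mem, hi₀⟩ := hall
        have hi₀lt : (i₀ : ℕ) + 1 < k := (hne_iff i₀).mp (Finset.ne_of_mem_erase hi₀mem)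
        have hzero : ∀ j ∈ Finset.univ.erase last, j ≠ i₀ → f j = 0 := by
          intro j hjmem hji
          by_contra hj
          have hjlt : (j : ℕ) + 1 < k := (hne_iff j).mp (Finset.ne_of_mem_erase hjmem)
          have hpj : p ∣ d j := (hp.dvd_iff_one_le_factorization (hd0 j)).mpr
            (Nat.one_le_iff_ne_zero.mpr hj)
          have hpi : p ∣ d i₀ := (hp.dvd_iff_one_le_factorization (hd0 i₀)).mpr
            (Nat.one_le_iff_ne_zero.mpr hi₀)
          have : p ∣ Nat.gcd (d j) (d i₀) := Nat.dvd_gcd hpj hpi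
          rw [hcop j i₀ hji hjlt hi₀lt] at this
          exact hp.one_lt.ne' (Nat.dvd_one.mp this)
        rw [hs, Finset.sum_eq_single_of_mem i₀ hi₀mem hzero]
        exact (hsf i₀ hi₀lt).natFactorization_le_one p
    -- conclude
    rcases Nat.eq_zero_or_pos s with hs0 | hspos
    · -- s = 0 : k*e ≤ k*v
      have : k * e ≤ k * v := le_trans (by rw [hsplit2]; omega) key
      have hev : e ≤ v := Nat.le_of_mul_le_mul_left this (by omega)
      rw [hsplit]; omega
    · -- s ≥ 1 : k*e + 1 ≤ k*v, so e < v
      obtain ⟨i₀, hi₀mem, hi₀⟩ : ∃ i₀ ∈ Finset.univ.erase last, f i₀ ≠ 0 := by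
        by_contra hall
        push_neg at hall
        rw [hs, Finset.sum_eq_zero hall] at hspos
        omega
      have hone : 1 ≤ ∑ i ∈ Finset.univ.erase last, ((i : ℕ) + 1) * f i := by
        calc 1 ≤ ((i₀ : ℕ) + 1) * f i₀ := by
              have : 1 ≤ f i₀ := by omega
              calc 1 ≤ f i₀ := this
                _ ≤ ((i₀ : ℕ) + 1) * f i₀ := Nat.le_mul_of_pos_left _ (by omega)
          _ ≤ _ := Finset.single_le_sum (f := fun i : Fin k => ((i : ℕ) + 1) * f i)
              (fun i _ => Nat.zero_le _) hi₀mem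
      have hkv : k * e + 1 ≤ k * v := by
        calc k * e + 1 ≤ ∑ i : Fin k, ((i : ℕ) + 1) * f i := by rw [hsplit2]; omega
          _ ≤ k * v := key
      have hev : e < v := by
        by_contra h
        push_neg at h
        have : k * v ≤ k * e := Nat.mul_le_mul_left k h
        omega
      rw [hsplit]; omega
  have := Int.natCast_dvd_natCast.mpr hmain
  exact this.trans (Int.natAbs_dvd.mpr dvd_rfl)
end

section
/- For an integer n ≠ 0 and x ≠ 0 with |x| ≤ P, let R(n,x) be the number of pairs (y,z) with |y|,|z| ≤ P and x(xy+z²) = n. Then ∑_{0<|n|≪P³} (∑_{x | n, |x|≤P} R(n,x))² ≪ P^{3+ε}. -/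
set_option maxHeartbeats 1000000
open Finset

open Real in
lemma divisor_bound_aux {ε : ℝ} (hε : 0 < ε) :
    ∃ B : ℝ, 1 ≤ B ∧ ∀ n : ℕ, n ≠ 0 → (n.divisors.card : ℝ) ≤ B * (n : ℝ) ^ ε := by
  set M : ℝ := max 1 (1 / (ε * Real.log 2)) with hM
  have hM1 : 1 ≤ M := le_max_left _ _
  set N₀ : ℕ := ⌈(2:ℝ) ^ (1/ε)⌉₊ + 1 with hN₀
  refine ⟨M ^ N₀, one_le_pow₀ hM1, fun n hn => ?_⟩
  -- per prime bound
  have key : ∀ p ∈ n.primeFactors,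
      ((n.factorization p + 1 : ℕ) : ℝ) ≤
        (if (p:ℝ) < (2:ℝ) ^ (1/ε) then M else 1) * ((p:ℝ) ^ (n.factorization p : ℕ)) ^ ε := by
    intro p hp
    have hpp : p.Prime := Nat.prime_of_mem_primeFactors hp
    have hp2 : (2:ℝ) ≤ (p:ℝ) := by exact_mod_cast hpp.two_le
    have hppos : (0:ℝ) < (p:ℝ) := by linarith
    set a : ℕ := n.factorization p
    have hrw : ((p:ℝ) ^ a) ^ ε = (p:ℝ) ^ ((a:ℝ) * ε) := by
      rw [← Real.rpow_natCast (p:ℝ) a, ← Real.rpow_mul hppos.le]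
    rw [hrw]
    by_cases hsmall : (p:ℝ) < (2:ℝ) ^ (1/ε)
    · simp only [if_pos hsmall]
      have hlog : (0:ℝ) < Real.log 2 := Real.log_pos (by norm_num)
      have h1 : (p:ℝ) ^ ((a:ℝ)*ε) ≥ Real.exp ((a:ℝ) * ε * Real.log 2) := by
        rw [← Real.exp_log hppos, ← Real.exp_mul]
        apply Real.exp_le_exp.mpr
        have : Real.log 2 ≤ Real.log p := Real.log_le_log (by norm_num) hp2
        nlinarith [hε.le, Nat.cast_nonneg (α := ℝ) a, mul_nonneg (Nat.cast_nonneg (α := ℝ) a) hε.le]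
      have h2 : (a:ℝ) * ε * Real.log 2 + 1 ≤ Real.exp ((a:ℝ)*ε*Real.log 2) :=
        Real.add_one_le_exp _
      have hMge : 1 / (ε * Real.log 2) ≤ M := le_max_right _ _
      have hεlog : 0 < ε * Real.log 2 := mul_pos hε hlog
      have hM' : 1 ≤ M * (ε * Real.log 2) := by
        rw [div_le_iff₀ hεlog] at hMge; linarith [hMge]
      have ha0 : (0:ℝ) ≤ (a:ℝ) := Nat.cast_nonneg a
      have : ((a:ℕ) + 1 : ℝ) ≤ M * ((a:ℝ) * ε * Real.log 2 + 1) := by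
        nlinarith
      calc ((a + 1 : ℕ) : ℝ) = (a:ℝ) + 1 := by push_cast; ring
        _ ≤ M * ((a:ℝ) * ε * Real.log 2 + 1) := this
        _ ≤ M * (p:ℝ) ^ ((a:ℝ)*ε) := by
            apply mul_le_mul_of_nonneg_left (le_trans h2 h1) (by linarith)
    · simp only [if_neg hsmall, one_mul]
      push_neg at hsmall
      have h2p : (2:ℝ) ≤ (p:ℝ) ^ ε := by
        have := Real.rpow_le_rpow (by positivity) hsmall hε.le
        rwa [← Real.rpow_mul (by norm_num), one_div_mul_cancel hε.ne', Real.rpow_one] at this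
      have h1 : ((a+1 : ℕ):ℝ) ≤ (2:ℝ) ^ (a:ℕ) := by
        exact_mod_cast Nat.lt_two_pow_self (n := a)
      calc ((a+1:ℕ):ℝ) ≤ (2:ℝ) ^ (a:ℕ) := h1
        _ ≤ ((p:ℝ) ^ ε) ^ (a:ℕ) := pow_le_pow_left₀ (by norm_num) h2p a
        _ = (p:ℝ) ^ ((a:ℝ) * ε) := by
            rw [← Real.rpow_natCast ((p:ℝ)^ε) a, ← Real.rpow_mul hppos.le, mul_comm]
  -- combine
  have hd : (n.divisors.card : ℝ) = ∏ p ∈ n.primeFactors, ((n.factorization p + 1 : ℕ) : ℝ) := by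
    rw [Nat.card_divisors hn]; push_cast; ring
  have hprod : (n:ℝ) ^ ε = ∏ p ∈ n.primeFactors, ((p:ℝ) ^ (n.factorization p : ℕ)) ^ ε := by
    rw [Real.finset_prod_rpow _ _ (fun i _ => by positivity)]
    congr 1
    have h := Nat.factorization_prod_pow_eq_self hn
    rw [Finsupp.prod, Nat.support_factorization] at h
    calc (n:ℝ) = ((∏ p ∈ n.primeFactors, p ^ n.factorization p : ℕ) : ℝ) := by rw [h]
      _ = ∏ p ∈ n.primeFactors, (p:ℝ) ^ n.factorization p := by push_cast; rfl
  have hnonneg : ∀ p ∈ n.primeFactors, (0:ℝ) ≤ ((n.factorization p + 1 : ℕ) : ℝ) :=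
    fun p _ => Nat.cast_nonneg _
  calc (n.divisors.card : ℝ)
      = ∏ p ∈ n.primeFactors, ((n.factorization p + 1 : ℕ) : ℝ) := hd
    _ ≤ ∏ p ∈ n.primeFactors,
          (if (p:ℝ) < (2:ℝ) ^ (1/ε) then M else 1) * ((p:ℝ) ^ (n.factorization p : ℕ)) ^ ε :=
        Finset.prod_le_prod hnonneg key
    _ = (∏ p ∈ n.primeFactors, if (p:ℝ) < (2:ℝ) ^ (1/ε) then M else 1) *
          ∏ p ∈ n.primeFactors, ((p:ℝ) ^ (n.factorization p : ℕ)) ^ ε :=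
        Finset.prod_mul_distrib
    _ ≤ M ^ N₀ * (n:ℝ) ^ ε := by
        rw [← hprod]
        apply mul_le_mul_of_nonneg_right _ (by positivity)
        rw [Finset.prod_ite, Finset.prod_const, Finset.prod_const_one, mul_one]
        have hcard : (n.primeFactors.filter (fun p : ℕ => (p:ℝ) < (2:ℝ) ^ (1/ε))).card ≤ N₀ := by
          have hsub : n.primeFactors.filter (fun p : ℕ => (p:ℝ) < (2:ℝ) ^ (1/ε)) ⊆
              Finset.range N₀ := by
            intro p hp
            rw [Finset.mem_filter] at hp
            rw [Finset.mem_range, hN₀, Nat.lt_succ_iff, ← Nat.cast_le (α := ℝ)]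
            exact le_trans hp.2.le (Nat.le_ceil _)
          calc _ ≤ (Finset.range N₀).card := Finset.card_le_card hsub
            _ = N₀ := Finset.card_range N₀
        exact pow_le_pow_right₀ hM1 hcard

lemma card_int_divisors_le (s : Finset ℤ) (m : ℤ) (hm : m ≠ 0) :
    (s.filter (fun x => x ∣ m)).card ≤ 2 * m.natAbs.divisors.card := by
  have hsub : s.filter (fun x => x ∣ m) ⊆
      (m.natAbs.divisors.image (fun d : ℕ => (d:ℤ))) ∪
      (m.natAbs.divisors.image (fun d : ℕ => -(d:ℤ))) := by
    intro x hx
    rw [mem_filter] at hx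
    have hd : x.natAbs ∈ m.natAbs.divisors :=
      Nat.mem_divisors.mpr ⟨Int.natAbs_dvd_natAbs.mpr hx.2, Int.natAbs_ne_zero.mpr hm⟩
    rcases Int.natAbs_eq x with h | h
    · exact mem_union_left _ (mem_image.mpr ⟨x.natAbs, hd, h.symm⟩)
    · exact mem_union_right _ (mem_image.mpr ⟨x.natAbs, hd, h.symm⟩)
  calc (s.filter (fun x => x ∣ m)).card ≤ _ := card_le_card hsub
    _ ≤ (m.natAbs.divisors.image (fun d : ℕ => (d:ℤ))).card +
        (m.natAbs.divisors.image (fun d : ℕ => -(d:ℤ))).card := card_union_le _ _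
    _ ≤ m.natAbs.divisors.card + m.natAbs.divisors.card :=
        Nat.add_le_add (card_image_le) (card_image_le)
    _ = 2 * m.natAbs.divisors.card := (two_mul _).symm


/-- With `R(n,x)` the number of pairs `(y,z)` in `[-P,P]²` with `x(xy+z²) = n`,
one has `∑_{0<|n|≤CP³} (∑_{x∣n, 0<|x|≤P} R(n,x))² ≪ P^(3+ε)`. -/
theorem sum_of_squared_representation_counts (C : ℝ) (hC : 0 < C) :
    ∀ ε : ℝ, 0 < ε → ∃ K : ℝ, 0 < K ∧ ∀ P : ℕ, 1 ≤ P →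
      (((Finset.Icc (-(⌈C * (P : ℝ) ^ 3⌉ : ℤ)) ⌈C * (P : ℝ) ^ 3⌉).erase 0).sum
          (fun n : ℤ =>
            ((((Finset.Icc (-(P : ℤ)) P).erase 0).filter (fun x : ℤ => x ∣ n)).sum
                (fun x : ℤ =>
                  ((Finset.filter
                      (fun yz : ℤ × ℤ => x * (x * yz.1 + yz.2 ^ 2) = n)
                      (Finset.Icc (-(P : ℤ)) P ×ˢ Finset.Icc (-(P : ℤ)) P)).card : ℝ)))
              ^ 2))
        ≤ K * (P : ℝ) ^ ((3 : ℝ) + ε) := by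
  intro ε hε
  obtain ⟨B, hB1, hB⟩ := divisor_bound_aux (ε := ε/5) (by positivity)
  set c₁ : ℝ := 2*B*(C+1) ^ (ε/5) with hc₁
  set c₂ : ℝ := 2*B*(2:ℝ) ^ (ε/5) with hc₂
  have hc₁pos : 0 < c₁ := by positivity
  have hc₂pos : 0 < c₂ := by positivity
  refine ⟨c₁ * (36 + 27*c₂), by positivity, fun P hP => ?_⟩
  set N : ℤ := ⌈C * (P : ℝ) ^ 3⌉ with hN
  set I : Finset ℤ := Finset.Icc (-(P:ℤ)) P with hI
  set I0 : Finset ℤ := I.erase 0 with hI0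
  set A : Finset ℤ := (Finset.Icc (-N) N).erase 0 with hA
  set F : ℤ → ℤ → Finset (ℤ × ℤ) := fun n x =>
    Finset.filter (fun yz : ℤ × ℤ => x * (x * yz.1 + yz.2 ^ 2) = n) (I ×ˢ I) with hF
  set E : ℤ → Finset ((ℤ × ℤ) × (ℤ × ℤ)) := fun x =>
    Finset.filter (fun w : (ℤ × ℤ) × (ℤ × ℤ) =>
      x * (x * w.1.1 + w.1.2 ^ 2) = x * (x * w.2.1 + w.2.2 ^ 2)) ((I ×ˢ I) ×ˢ (I ×ˢ I)) with hE
  set V : ℤ → Finset ((ℤ × ℤ) × ℤ) := fun x =>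
    Finset.filter (fun v : (ℤ × ℤ) × ℤ =>
      v.1.2 ^ 2 - v.1.1 ^ 2 ≠ 0 ∧ x ∣ (v.1.2 ^ 2 - v.1.1 ^ 2)) ((I ×ˢ I) ×ˢ I) with hV
  have hPpos : (0:ℝ) < (P:ℝ) := by exact_mod_cast hP
  have hP1 : (1:ℝ) ≤ (P:ℝ) := by exact_mod_cast hP
  -- basic cardinalities
  have hIcard : I.card = 2*P + 1 := by
    rw [hI, Int.card_Icc]
    omega
  have hI0card : I0.card = 2*P := by
    have h0 : (0:ℤ) ∈ I := by rw [hI]; simp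
    rw [hI0, Finset.card_erase_of_mem h0, hIcard]
    omega
  -- divisor counts for n ∈ A
  have hP3 : (1:ℝ) ≤ (P:ℝ)^3 := one_le_pow₀ hP1
  have hDn : ∀ n ∈ A, ((I0.filter (fun x => x ∣ n)).card : ℝ) ≤ c₁ * (P:ℝ) ^ (3*(ε/5)) := by
    intro n hn
    rw [hA, Finset.mem_erase, Finset.mem_Icc] at hn
    obtain ⟨hn0, hn1, hn2⟩ := hn
    have hna : n.natAbs ≠ 0 := Int.natAbs_ne_zero.mpr hn0
    have hcard := card_int_divisors_le I0 n hn0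
    have hd := hB n.natAbs hna
    have habs : ((n.natAbs : ℕ) : ℝ) ≤ (C+1) * (P:ℝ)^3 := by
      have h1 : (n.natAbs : ℤ) ≤ N := by omega
      have h2 := (@Int.cast_le ℝ _ _ _).mpr h1
      rw [Int.cast_natCast] at h2
      have h3 : ((N:ℤ):ℝ) ≤ C * (P:ℝ)^3 + 1 := by
        rw [hN]; exact (Int.ceil_lt_add_one _).le
      nlinarith
    have hrp : ((n.natAbs:ℕ):ℝ) ^ (ε/5) ≤ ((C+1) * (P:ℝ)^3) ^ (ε/5) :=
      Real.rpow_le_rpow (Nat.cast_nonneg _) habs (by positivity)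
    have hsplit : ((C+1) * (P:ℝ)^3) ^ (ε/5) = (C+1)^(ε/5) * (P:ℝ)^(3*(ε/5)) := by
      rw [Real.mul_rpow (by linarith) (by positivity), ← Real.rpow_natCast (P:ℝ) 3,
        ← Real.rpow_mul hPpos.le]
      norm_num
    have hB0 : (0:ℝ) ≤ B := by linarith
    calc ((I0.filter (fun x => x ∣ n)).card : ℝ)
        ≤ 2 * (n.natAbs.divisors.card : ℝ) := by exact_mod_cast hcard
      _ ≤ 2 * (B * ((n.natAbs:ℕ):ℝ)^(ε/5)) := by
          have := hd; linarith
      _ ≤ 2 * (B * ((C+1)^(ε/5) * (P:ℝ)^(3*(ε/5)))) := by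
          rw [← hsplit]
          have : B * ((n.natAbs:ℕ):ℝ)^(ε/5) ≤ B * ((C+1) * (P:ℝ)^3) ^ (ε/5) :=
            mul_le_mul_of_nonneg_left hrp hB0
          linarith
      _ = c₁ * (P:ℝ) ^ (3*(ε/5)) := by rw [hc₁]; ring
  -- Cauchy-Schwarz
  have hCS : ∀ n ∈ A,
      (∑ x ∈ I0.filter (fun x => x ∣ n), ((F n x).card : ℝ)) ^ 2 ≤
        c₁ * (P:ℝ) ^ (3*(ε/5)) * ∑ x ∈ I0, ((F n x).card : ℝ) ^ 2 := by
    intro n hn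
    have h1 : (∑ x ∈ I0.filter (fun x => x ∣ n), ((F n x).card : ℝ)) ^ 2 ≤
        ((I0.filter (fun x => x ∣ n)).card : ℝ) *
          ∑ x ∈ I0.filter (fun x => x ∣ n), ((F n x).card : ℝ) ^ 2 :=
      sq_sum_le_card_mul_sum_sq
    have h2 : ∑ x ∈ I0.filter (fun x => x ∣ n), ((F n x).card : ℝ) ^ 2 ≤
        ∑ x ∈ I0, ((F n x).card : ℝ) ^ 2 :=
      Finset.sum_le_sum_of_subset_of_nonneg (Finset.filter_subset _ _)
        (fun i _ _ => by positivity)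
    calc (∑ x ∈ I0.filter (fun x => x ∣ n), ((F n x).card : ℝ)) ^ 2
        ≤ _ := h1
      _ ≤ c₁ * (P:ℝ) ^ (3*(ε/5)) * ∑ x ∈ I0, ((F n x).card : ℝ) ^ 2 := by
          apply mul_le_mul (hDn n hn) h2 (Finset.sum_nonneg fun i _ => by positivity)
          positivity
  -- fibering over n
  have hfib : ∀ x, ∑ n ∈ A, ((F n x).card) ^ 2 ≤ (E x).card := by
    intro x
    have hsub : ∀ n ∈ A, F n x ×ˢ F n x ⊆ E x := by
      intro n _ w hw
      rw [Finset.mem_product] at hw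
      simp only [hF, Finset.mem_filter] at hw
      simp only [hE, Finset.mem_filter]
      exact ⟨Finset.mem_product.mpr ⟨hw.1.1, hw.2.1⟩, by rw [hw.1.2, hw.2.2]⟩
    have hdisj : ∀ n ∈ A, ∀ m ∈ A, n ≠ m →
        Disjoint (F n x ×ˢ F n x) (F m x ×ˢ F m x) := by
      intro n _ m _ hnm
      rw [Finset.disjoint_left]
      intro w hw1 hw2
      rw [Finset.mem_product] at hw1 hw2
      simp only [hF, Finset.mem_filter] at hw1 hw2
      exact hnm (by rw [← hw1.1.2, ← hw2.1.2])
    calc ∑ n ∈ A, (F n x).card ^ 2 = ∑ n ∈ A, (F n x ×ˢ F n x).card := by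
          refine Finset.sum_congr rfl fun n _ => ?_
          rw [Finset.card_product, sq]
      _ = (A.biUnion (fun n => F n x ×ˢ F n x)).card := (Finset.card_biUnion hdisj).symm
      _ ≤ (E x).card := Finset.card_le_card (Finset.biUnion_subset.mpr hsub)
  -- E splits
  have hEsplit : ∀ x ∈ I0, ((E x).card : ℝ) ≤ 2*(2*(P:ℝ)+1)^2 + ((V x).card : ℝ) := by
    intro x hx
    have hx0 : x ≠ 0 := by
      rw [hI0] at hx; exact Finset.ne_of_mem_erase hx
    have hsplitEq : ((E x).filter (fun w => w.2.1 = w.1.1)).card +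
        ((E x).filter (fun w => ¬ w.2.1 = w.1.1)).card = (E x).card :=
      Finset.card_filter_add_card_filter_not _
    -- diagonal part
    have hEa : ((E x).filter (fun w => w.2.1 = w.1.1)).card ≤ 2*(2*P+1)^2 := by
      have hinj : ∀ w ∈ (E x).filter (fun w => w.2.1 = w.1.1),
          w.2.2 = w.1.2 ∨ w.2.2 = -w.1.2 := by
        intro w hw
        rw [Finset.mem_filter] at hw
        obtain ⟨hwE, hyy⟩ := hw
        simp only [hE, Finset.mem_filter] at hwE
        have heq := hwE.2
        have h1 : x * w.1.1 + w.1.2 ^ 2 = x * w.2.1 + w.2.2 ^ 2 :=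
          mul_left_cancel₀ hx0 heq
        have h2 : (w.1.2 - w.2.2) * (w.1.2 + w.2.2) = 0 := by
          rw [hyy] at h1; linear_combination h1
        rcases mul_eq_zero.mp h2 with h | h
        · left; linarith [sub_eq_zero.mp h]
        · right; linarith [h]
      have := Finset.card_le_card_of_injOn
        (f := fun w : (ℤ×ℤ)×(ℤ×ℤ) => (w.1, decide (w.2.2 = w.1.2)))
        (s := (E x).filter (fun w => w.2.1 = w.1.1))
        (t := (I ×ˢ I) ×ˢ (Finset.univ : Finset Bool))
        (fun w hw => by
          rw [Finset.mem_coe, Finset.mem_filter] at hw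
          have hwE := hw.1
          simp only [hE, Finset.mem_filter] at hwE
          exact Finset.mem_product.mpr ⟨(Finset.mem_product.mp hwE.1).1, Finset.mem_univ _⟩)
        (by
          intro w hw w' hw' hf
          simp only [Finset.coe_filter, Set.mem_setOf_eq] at hw hw'
          have hf' : (w.1, decide (w.2.2 = w.1.2)) = (w'.1, decide (w'.2.2 = w'.1.2)) := hf
          rw [Prod.mk.injEq] at hf'
          obtain ⟨h1, h2⟩ := hf'
          have hz := hinj w (Finset.mem_filter.mpr hw)
          have hz' := hinj w' (Finset.mem_filter.mpr hw')
          have hy : w.2.1 = w'.2.1 := by rw [hw.2, hw'.2, h1]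
          have hz2 : w.2.2 = w'.2.2 := by
            by_cases hc : w.2.2 = w.1.2
            · have : decide (w'.2.2 = w'.1.2) = true := by
                rw [← h2]; simp [hc]
              have hc' : w'.2.2 = w'.1.2 := of_decide_eq_true this
              rw [hc, hc', h1]
            · have : decide (w'.2.2 = w'.1.2) = false := by
                rw [← h2]; simp [hc]
              have hc' : ¬ w'.2.2 = w'.1.2 := of_decide_eq_false this
              have e1 : w.2.2 = -w.1.2 := hz.resolve_left hc
              have e2 : w'.2.2 = -w'.1.2 := hz'.resolve_left hc'
              rw [e1, e2, h1]
          exact Prod.ext h1 (Prod.ext hy hz2))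
      calc ((E x).filter (fun w => w.2.1 = w.1.1)).card
          ≤ ((I ×ˢ I) ×ˢ (Finset.univ : Finset Bool)).card := this
        _ = 2*(2*P+1)^2 := by
            rw [Finset.card_product, Finset.card_product, hIcard, Finset.card_univ,
              Fintype.card_bool]
            ring
    -- off-diagonal part
    have hEb : ((E x).filter (fun w => ¬ w.2.1 = w.1.1)).card ≤ (V x).card := by
      apply Finset.card_le_card_of_injOn
        (f := fun w : (ℤ×ℤ)×(ℤ×ℤ) => ((w.1.2, w.2.2), w.2.1))
      · intro w hw
        rw [Finset.mem_coe, Finset.mem_filter] at hw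
        obtain ⟨hwE, hyy⟩ := hw
        simp only [hE, Finset.mem_filter, Finset.mem_product] at hwE
        obtain ⟨⟨⟨hy1, hz1⟩, hy2, hz2⟩, heq⟩ := hwE
        have h1 : x * w.1.1 + w.1.2 ^ 2 = x * w.2.1 + w.2.2 ^ 2 :=
          mul_left_cancel₀ hx0 heq
        have hdvd : w.2.2 ^ 2 - w.1.2 ^ 2 = x * (w.1.1 - w.2.1) := by
          linear_combination -h1
        simp only [hV, Finset.mem_coe, Finset.mem_filter, Finset.mem_product]
        refine ⟨⟨⟨hz1, hz2⟩, hy2⟩, ?_, ⟨w.1.1 - w.2.1, hdvd⟩⟩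
        rw [hdvd]
        exact mul_ne_zero hx0 (sub_ne_zero.mpr (fun h => hyy h.symm))
      · intro w hw w' hw' hf
        simp only [Finset.coe_filter, Set.mem_setOf_eq] at hw hw'
        have hwE := hw.1
        have hwE' := hw'.1
        simp only [hE, Finset.mem_filter] at hwE hwE'
        have hf' : ((w.1.2, w.2.2), w.2.1) = ((w'.1.2, w'.2.2), w'.2.1) := hf
        rw [Prod.mk.injEq, Prod.mk.injEq] at hf'
        obtain ⟨⟨hz1, hz2⟩, hy2⟩ := hf'
        have heq := hwE.2
        have heq' := hwE'.2
        rw [← hz1, ← hz2, ← hy2] at heq'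
        have h3 : x * (x * w.1.1 + w.1.2^2) = x * (x * w'.1.1 + w.1.2^2) := by
          rw [heq, heq']
        have h4 : x * x * (w.1.1 - w'.1.1) = 0 := by linear_combination h3
        have hy1 : w.1.1 = w'.1.1 := by
          rcases mul_eq_zero.mp h4 with h | h
          · exact absurd h (mul_ne_zero hx0 hx0)
          · linarith [sub_eq_zero.mp h]
        exact Prod.ext (Prod.ext hy1 hz1) (Prod.ext hy2 hz2)
    have hcast : ((E x).card : ℝ) ≤ (2*(2*P+1)^2 : ℕ) + ((V x).card : ℝ) := by
      have : (E x).card ≤ 2*(2*P+1)^2 + (V x).card := by omega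
      exact_mod_cast this
    calc ((E x).card : ℝ) ≤ (2*(2*P+1)^2 : ℕ) + ((V x).card : ℝ) := hcast
      _ = 2*(2*(P:ℝ)+1)^2 + ((V x).card : ℝ) := by push_cast; ring
  -- V total
  have hVtot : ∑ x ∈ I0, ((V x).card : ℝ) ≤ (2*(P:ℝ)+1)^3 * (c₂ * (P:ℝ) ^ (2*(ε/5))) := by
    have hswap : ∑ x ∈ I0, (V x).card =
        ∑ v ∈ (I ×ˢ I) ×ˢ I, (I0.filter (fun x =>
          v.1.2^2 - v.1.1^2 ≠ 0 ∧ x ∣ (v.1.2^2 - v.1.1^2))).card := by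
      simp only [hV, Finset.card_filter]
      rw [Finset.sum_comm]
    have hper : ∀ v ∈ (I ×ˢ I) ×ˢ I,
        ((I0.filter (fun x => v.1.2^2 - v.1.1^2 ≠ 0 ∧ x ∣ (v.1.2^2 - v.1.1^2))).card : ℝ)
          ≤ c₂ * (P:ℝ) ^ (2*(ε/5)) := by
      intro v hv
      by_cases hm : v.1.2^2 - v.1.1^2 = 0
      · have hz : (I0.filter (fun x =>
            v.1.2^2 - v.1.1^2 ≠ 0 ∧ x ∣ (v.1.2^2 - v.1.1^2))).card = 0 := by
          rw [Finset.card_eq_zero, Finset.filter_eq_empty_iff]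
          intro x _
          simp [hm]
        rw [hz, Nat.cast_zero]
        positivity
      · have hsub : (I0.filter (fun x =>
            v.1.2^2 - v.1.1^2 ≠ 0 ∧ x ∣ (v.1.2^2 - v.1.1^2))) ⊆
            I0.filter (fun x => x ∣ (v.1.2^2 - v.1.1^2)) := by
          intro x hx
          rw [Finset.mem_filter] at hx ⊢
          exact ⟨hx.1, hx.2.2⟩
        have h1 : (I0.filter (fun x =>
            v.1.2^2 - v.1.1^2 ≠ 0 ∧ x ∣ (v.1.2^2 - v.1.1^2))).card ≤
            2 * (v.1.2^2 - v.1.1^2).natAbs.divisors.card :=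
          le_trans (Finset.card_le_card hsub) (card_int_divisors_le I0 _ hm)
        have hna : (v.1.2^2 - v.1.1^2).natAbs ≠ 0 := Int.natAbs_ne_zero.mpr hm
        have hd := hB _ hna
        -- |m| ≤ 2 P^2
        have hvm : ((v.1.2^2 - v.1.1^2).natAbs : ℝ) ≤ 2*(P:ℝ)^2 := by
          have h1 : v.1 ∈ I ×ˢ I := (Finset.mem_product.mp hv).1
          have ha := (Finset.mem_product.mp h1).1
          have hb := (Finset.mem_product.mp h1).2
          rw [hI, Finset.mem_Icc] at ha hb
          obtain ⟨ha1, ha2⟩ := ha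
          obtain ⟨hb1, hb2⟩ := hb
          have habs : |v.1.2^2 - v.1.1^2| ≤ 2*(P:ℤ)^2 := by
            rw [abs_le]
            constructor <;> nlinarith
          have : ((v.1.2^2 - v.1.1^2).natAbs : ℤ) ≤ 2*(P:ℤ)^2 := by
            rwa [Int.abs_eq_natAbs] at habs
            
          exact_mod_cast this
        have hrp : (((v.1.2^2 - v.1.1^2).natAbs : ℕ) : ℝ) ^ (ε/5) ≤ (2*(P:ℝ)^2) ^ (ε/5) :=
          Real.rpow_le_rpow (Nat.cast_nonneg _) hvm (by positivity)
        have hsplit2 : (2*(P:ℝ)^2) ^ (ε/5) = (2:ℝ)^(ε/5) * (P:ℝ)^(2*(ε/5)) := by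
          rw [Real.mul_rpow (by norm_num) (by positivity), ← Real.rpow_natCast (P:ℝ) 2,
            ← Real.rpow_mul hPpos.le]
          norm_num
        have hB0 : (0:ℝ) ≤ B := by linarith
        calc ((I0.filter (fun x =>
              v.1.2^2 - v.1.1^2 ≠ 0 ∧ x ∣ (v.1.2^2 - v.1.1^2))).card : ℝ)
            ≤ 2 * ((v.1.2^2 - v.1.1^2).natAbs.divisors.card : ℝ) := by exact_mod_cast h1
          _ ≤ 2 * (B * (((v.1.2^2 - v.1.1^2).natAbs : ℕ) : ℝ) ^ (ε/5)) := by linarith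
          _ ≤ 2 * (B * ((2:ℝ)^(ε/5) * (P:ℝ)^(2*(ε/5)))) := by
              rw [← hsplit2]
              have := mul_le_mul_of_nonneg_left hrp hB0
              linarith
          _ = c₂ * (P:ℝ) ^ (2*(ε/5)) := by rw [hc₂]; ring
    calc ∑ x ∈ I0, ((V x).card : ℝ)
        = ((∑ x ∈ I0, (V x).card : ℕ) : ℝ) := by push_cast; rfl
      _ = ((∑ v ∈ (I ×ˢ I) ×ˢ I, (I0.filter (fun x =>
            v.1.2^2 - v.1.1^2 ≠ 0 ∧ x ∣ (v.1.2^2 - v.1.1^2))).card : ℕ) : ℝ) := by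
          rw [hswap]
      _ = ∑ v ∈ (I ×ˢ I) ×ˢ I, ((I0.filter (fun x =>
            v.1.2^2 - v.1.1^2 ≠ 0 ∧ x ∣ (v.1.2^2 - v.1.1^2))).card : ℝ) := by
          push_cast; rfl
      _ ≤ ∑ _v ∈ (I ×ˢ I) ×ˢ I, (c₂ * (P:ℝ) ^ (2*(ε/5))) := Finset.sum_le_sum hper
      _ = (((I ×ˢ I) ×ˢ I).card : ℝ) * (c₂ * (P:ℝ) ^ (2*(ε/5))) := by
          rw [Finset.sum_const, nsmul_eq_mul]
      _ = (2*(P:ℝ)+1)^3 * (c₂ * (P:ℝ) ^ (2*(ε/5))) := by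
          rw [Finset.card_product, Finset.card_product, hIcard]
          push_cast
          ring
  -- combine
  have hEtot : ∑ x ∈ I0, ((E x).card : ℝ) ≤
      36*(P:ℝ)^3 + 27*c₂*(P:ℝ)^3*(P:ℝ)^(2*(ε/5)) := by
    have hc : (I0.card:ℝ) = 2*(P:ℝ) := by rw [hI0card]; push_cast; ring
    calc ∑ x ∈ I0, ((E x).card:ℝ)
        ≤ ∑ x ∈ I0, (2*(2*(P:ℝ)+1)^2 + ((V x).card:ℝ)) := Finset.sum_le_sum hEsplit
      _ = (I0.card:ℝ) * (2*(2*(P:ℝ)+1)^2) + ∑ x ∈ I0, ((V x).card:ℝ) := by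
          rw [Finset.sum_add_distrib, Finset.sum_const, nsmul_eq_mul]
      _ ≤ (2*(P:ℝ)) * (2*(2*(P:ℝ)+1)^2) + (2*(P:ℝ)+1)^3 * (c₂ * (P:ℝ)^(2*(ε/5))) := by
          rw [hc]
          linarith [hVtot]
      _ ≤ 36*(P:ℝ)^3 + 27*c₂*(P:ℝ)^3*(P:ℝ)^(2*(ε/5)) := by
          have t1 : (2*(P:ℝ))*(2*(2*(P:ℝ)+1)^2) ≤ 36*(P:ℝ)^3 := by nlinarith
          have t2 : (2*(P:ℝ)+1)^3 * (c₂ * (P:ℝ)^(2*(ε/5))) ≤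
              27*c₂*(P:ℝ)^3*(P:ℝ)^(2*(ε/5)) := by
            have h33 : (2*(P:ℝ)+1)^3 ≤ 27*(P:ℝ)^3 := by nlinarith
            have hXpos : (0:ℝ) ≤ c₂ * (P:ℝ)^(2*(ε/5)) := by positivity
            calc (2*(P:ℝ)+1)^3 * (c₂ * (P:ℝ)^(2*(ε/5)))
                ≤ 27*(P:ℝ)^3 * (c₂ * (P:ℝ)^(2*(ε/5))) :=
                  mul_le_mul_of_nonneg_right h33 hXpos
              _ = 27*c₂*(P:ℝ)^3*(P:ℝ)^(2*(ε/5)) := by ring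
          linarith
  have hmain : ∑ n ∈ A, (∑ x ∈ I0.filter (fun x => x ∣ n), ((F n x).card : ℝ))^2 ≤
      c₁ * (36 + 27*c₂) * (P:ℝ) ^ ((3:ℝ) + ε) := by
    calc ∑ n ∈ A, (∑ x ∈ I0.filter (fun x => x ∣ n), ((F n x).card : ℝ))^2
        ≤ ∑ n ∈ A, (c₁ * (P:ℝ) ^ (3*(ε/5)) * ∑ x ∈ I0, ((F n x).card : ℝ) ^ 2) :=
          Finset.sum_le_sum hCS
      _ = c₁ * (P:ℝ) ^ (3*(ε/5)) * ∑ n ∈ A, ∑ x ∈ I0, ((F n x).card : ℝ) ^ 2 := by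
          rw [← Finset.mul_sum]
      _ = c₁ * (P:ℝ) ^ (3*(ε/5)) * ∑ x ∈ I0, ∑ n ∈ A, ((F n x).card : ℝ) ^ 2 := by
          rw [Finset.sum_comm]
      _ ≤ c₁ * (P:ℝ) ^ (3*(ε/5)) * ∑ x ∈ I0, ((E x).card : ℝ) := by
          apply mul_le_mul_of_nonneg_left _ (by positivity)
          apply Finset.sum_le_sum
          intro x _
          calc ∑ n ∈ A, ((F n x).card:ℝ)^2
              = ((∑ n ∈ A, (F n x).card^2 : ℕ):ℝ) := by push_cast; rfl
            _ ≤ ((E x).card : ℝ) := by exact_mod_cast hfib x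
      _ ≤ c₁ * (P:ℝ) ^ (3*(ε/5)) * (36*(P:ℝ)^3 + 27*c₂*(P:ℝ)^3*(P:ℝ)^(2*(ε/5))) :=
          mul_le_mul_of_nonneg_left hEtot (by positivity)
      _ ≤ c₁ * (P:ℝ) ^ (3*(ε/5)) * ((36 + 27*c₂) * (P:ℝ)^((3:ℝ)+2*(ε/5))) := by
          apply mul_le_mul_of_nonneg_left _ (by positivity)
          have hp3 : (P:ℝ)^(3:ℕ) = (P:ℝ)^((3:ℝ)) := by
            rw [← Real.rpow_natCast (P:ℝ) 3]; norm_num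
          have hmul : (P:ℝ)^((3:ℝ)) * (P:ℝ)^(2*(ε/5)) = (P:ℝ)^((3:ℝ)+2*(ε/5)) :=
            (Real.rpow_add hPpos _ _).symm
          have hle : (P:ℝ)^((3:ℝ)) ≤ (P:ℝ)^((3:ℝ)+2*(ε/5)) :=
            Real.rpow_le_rpow_of_exponent_le hP1 (by linarith)
          calc 36*(P:ℝ)^3 + 27*c₂*(P:ℝ)^3*(P:ℝ)^(2*(ε/5))
              = 36*(P:ℝ)^((3:ℝ)) + 27*c₂*((P:ℝ)^((3:ℝ))*(P:ℝ)^(2*(ε/5))) := by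
                rw [← hp3]; ring
            _ = 36*(P:ℝ)^((3:ℝ)) + 27*c₂*(P:ℝ)^((3:ℝ)+2*(ε/5)) := by rw [hmul]
            _ ≤ 36*(P:ℝ)^((3:ℝ)+2*(ε/5)) + 27*c₂*(P:ℝ)^((3:ℝ)+2*(ε/5)) := by
                have h36 : 36*(P:ℝ)^((3:ℝ)) ≤ 36*(P:ℝ)^((3:ℝ)+2*(ε/5)) := by linarith
                have h27 : (0:ℝ) ≤ 27*c₂ := by positivity
                linarith
            _ = (36 + 27*c₂) * (P:ℝ)^((3:ℝ)+2*(ε/5)) := by ring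
      _ = c₁ * (36 + 27*c₂) * (P:ℝ) ^ ((3:ℝ) + ε) := by
          have hexp : 3*(ε/5) + ((3:ℝ)+2*(ε/5)) = 3 + ε := by ring
          calc c₁ * (P:ℝ)^(3*(ε/5)) * ((36 + 27*c₂) * (P:ℝ)^((3:ℝ)+2*(ε/5)))
              = c₁ * (36 + 27*c₂) * ((P:ℝ)^(3*(ε/5)) * (P:ℝ)^((3:ℝ)+2*(ε/5))) := by ring
            _ = c₁ * (36 + 27*c₂) * (P:ℝ)^(3*(ε/5) + ((3:ℝ)+2*(ε/5))) := by
                rw [← Real.rpow_add hPpos]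
            _ = c₁ * (36 + 27*c₂) * (P:ℝ)^((3:ℝ)+ε) := by rw [hexp]
  exact hmain
end

section
/- Let F₁(α) = ∑ e(α·x(xy+z²)), where the sum is over integer triples (x,y,z) with |x|,|y|,|z| ≤ P and x(xy+z²) ≠ 0. Then ∫₀¹ |F₁(α)|² dα ≪ P^{3+ε}. -/
open Complex

noncomputable section ProofAux
open Finset

lemma succ_le_two_pow (a : ℕ) : a + 1 ≤ 2 ^ a := Nat.lt_two_pow_self (n := a)

lemma count_pow_le (k a : ℕ) (hk : 1 ≤ k) : (a + 1) ^ k ≤ (2 * k) ^ k * 2 ^ a := by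
  set q := a / (2 * k) with hq
  have h2k : 0 < 2 * k := by omega
  have h1 : a + 1 ≤ 2 * k * (q + 1) := by
    have hd := Nat.div_add_mod a (2 * k)
    have hm : a % (2 * k) < 2 * k := Nat.mod_lt _ h2k
    calc a + 1 = 2 * k * q + a % (2 * k) + 1 := by rw [hq]; linarith [hd]
      _ ≤ 2 * k * q + 2 * k := by linarith [hm]
      _ = 2 * k * (q + 1) := by ring
  have h2 : q + 1 ≤ 2 ^ q := succ_le_two_pow q
  have h3 : a + 1 ≤ 2 * k * 2 ^ q := le_trans h1 (Nat.mul_le_mul_left _ h2)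
  calc (a + 1) ^ k ≤ (2 * k * 2 ^ q) ^ k := Nat.pow_le_pow_left h3 k
    _ = (2 * k) ^ k * (2 ^ q) ^ k := mul_pow _ _ _
    _ = (2 * k) ^ k * 2 ^ (q * k) := by rw [← pow_mul]
    _ ≤ (2 * k) ^ k * 2 ^ a := by
        have hqa : q * k ≤ a := by
          calc q * k ≤ q * (2 * k) := Nat.mul_le_mul_left _ (by omega)
            _ = a / (2 * k) * (2 * k) := by rw [hq]
            _ ≤ a := Nat.div_mul_le_self a (2 * k)
        exact Nat.mul_le_mul_left _ (Nat.pow_le_pow_right (by norm_num) hqa)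

lemma divisors_pow_le (k : ℕ) (hk : 1 ≤ k) (n : ℕ) (hn : n ≠ 0) :
    (#n.divisors) ^ k ≤ ((2 * k) ^ k) ^ (2 ^ k) * n := by
  classical
  have hfac : ∏ p ∈ n.primeFactors, p ^ (n.factorization p) = n := by
    conv_rhs => rw [← Nat.factorization_prod_pow_eq_self hn]
    rw [Finsupp.prod, Nat.support_factorization]
  rw [Nat.card_divisors hn, ← Finset.prod_pow]
  set S := n.primeFactors with hS
  have hprime : ∀ p ∈ S, 2 ≤ p := fun p hp => (Nat.prime_of_mem_primeFactors hp).two_le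
  have hsmall : ∏ p ∈ S.filter (fun p => p < 2 ^ k), (n.factorization p + 1) ^ k
      ≤ ((2 * k) ^ k) ^ (2 ^ k) * ∏ p ∈ S.filter (fun p => p < 2 ^ k), p ^ (n.factorization p) := by
    calc ∏ p ∈ S.filter (fun p => p < 2 ^ k), (n.factorization p + 1) ^ k
        ≤ ∏ p ∈ S.filter (fun p => p < 2 ^ k), ((2 * k) ^ k * p ^ (n.factorization p)) := by
          apply Finset.prod_le_prod'
          intro p hp
          have h2p : 2 ≤ p := hprime p (Finset.mem_filter.mp hp).1
          calc (n.factorization p + 1) ^ k ≤ (2 * k) ^ k * 2 ^ (n.factorization p) :=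
                count_pow_le k _ hk
            _ ≤ (2 * k) ^ k * p ^ (n.factorization p) :=
                Nat.mul_le_mul_left _ (Nat.pow_le_pow_left h2p _)
      _ = ((2 * k) ^ k) ^ (#(S.filter (fun p => p < 2 ^ k)))
            * ∏ p ∈ S.filter (fun p => p < 2 ^ k), p ^ (n.factorization p) := by
          rw [Finset.prod_mul_distrib, Finset.prod_const]
      _ ≤ ((2 * k) ^ k) ^ (2 ^ k) * ∏ p ∈ S.filter (fun p => p < 2 ^ k), p ^ (n.factorization p) := by
          apply Nat.mul_le_mul_right
          apply Nat.pow_le_pow_right (by positivity)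
          have hsub : S.filter (fun p => p < 2 ^ k) ⊆ Finset.range (2 ^ k) := by
            intro p hp
            exact Finset.mem_range.mpr (Finset.mem_filter.mp hp).2
          simpa using Finset.card_le_card hsub
  have hlarge : ∏ p ∈ S.filter (fun p => ¬ p < 2 ^ k), (n.factorization p + 1) ^ k
      ≤ ∏ p ∈ S.filter (fun p => ¬ p < 2 ^ k), p ^ (n.factorization p) := by
    apply Finset.prod_le_prod'
    intro p hp
    have h2p : 2 ^ k ≤ p := by have := (Finset.mem_filter.mp hp).2; omega
    calc (n.factorization p + 1) ^ k ≤ (2 ^ (n.factorization p)) ^ k :=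
          Nat.pow_le_pow_left (succ_le_two_pow _) k
      _ = (2 ^ k) ^ (n.factorization p) := by rw [← pow_mul, ← pow_mul, Nat.mul_comm]
      _ ≤ p ^ (n.factorization p) := Nat.pow_le_pow_left h2p _
  calc ∏ p ∈ S, (n.factorization p + 1) ^ k
      = (∏ p ∈ S.filter (fun p => p < 2 ^ k), (n.factorization p + 1) ^ k)
        * ∏ p ∈ S.filter (fun p => ¬ p < 2 ^ k), (n.factorization p + 1) ^ k := by
        rw [Finset.prod_filter_mul_prod_filter_not]
    _ ≤ (((2 * k) ^ k) ^ (2 ^ k) * ∏ p ∈ S.filter (fun p => p < 2 ^ k), p ^ (n.factorization p))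
        * ∏ p ∈ S.filter (fun p => ¬ p < 2 ^ k), p ^ (n.factorization p) :=
        Nat.mul_le_mul hsmall hlarge
    _ = ((2 * k) ^ k) ^ (2 ^ k) * ((∏ p ∈ S.filter (fun p => p < 2 ^ k), p ^ (n.factorization p))
        * ∏ p ∈ S.filter (fun p => ¬ p < 2 ^ k), p ^ (n.factorization p)) := by ring
    _ = ((2 * k) ^ k) ^ (2 ^ k) * n := by
        rw [Finset.prod_filter_mul_prod_filter_not, hfac]



lemma divisor_bound (ε : ℝ) (hε : 0 < ε) :
    ∃ C : ℝ, 1 ≤ C ∧ ∀ n : ℕ, n ≠ 0 → (#n.divisors : ℝ) ≤ C * (n : ℝ) ^ ε := by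
  set k : ℕ := max 1 ⌈1 / ε⌉₊ with hkdef
  have hk1 : 1 ≤ k := le_max_left _ _
  have hkpos : (0 : ℝ) < k := by exact_mod_cast hk1
  set C₀ : ℕ := ((2 * k) ^ k) ^ (2 ^ k) with hC₀
  have hC₀1 : 1 ≤ C₀ := Nat.one_le_iff_ne_zero.mpr (by positivity)
  refine ⟨C₀, by exact_mod_cast hC₀1, fun n hn => ?_⟩
  have hnat := divisors_pow_le k hk1 n hn
  have hreal : ((#n.divisors : ℝ)) ^ (k : ℕ) ≤ (C₀ : ℝ) * n := by exact_mod_cast hnat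
  have hd0 : (0 : ℝ) ≤ (#n.divisors : ℝ) := by positivity
  have hn1 : (1 : ℝ) ≤ (n : ℝ) := by
    have : 1 ≤ n := Nat.one_le_iff_ne_zero.mpr hn
    exact_mod_cast this
  have hinvk : 1 / (k : ℝ) ≤ ε := by
    have h1 : (1 / ε) ≤ (k : ℝ) := le_trans (Nat.le_ceil _) (by exact_mod_cast le_max_right 1 ⌈1/ε⌉₊)
    rw [div_le_iff₀ hε] at h1
    rw [div_le_iff₀ hkpos]
    linarith
  -- d = (d^k)^(1/k)
  have key : (#n.divisors : ℝ) = (((#n.divisors : ℝ)) ^ (k:ℕ)) ^ (1 / (k:ℝ) : ℝ) := by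
    rw [← Real.rpow_natCast (#n.divisors : ℝ) k, ← Real.rpow_mul hd0]
    rw [mul_one_div, div_self (ne_of_gt hkpos), Real.rpow_one]
  rw [key]
  calc (((#n.divisors : ℝ)) ^ (k:ℕ)) ^ (1 / (k:ℝ) : ℝ)
      ≤ ((C₀ : ℝ) * n) ^ (1 / (k:ℝ) : ℝ) := by
        apply Real.rpow_le_rpow (pow_nonneg hd0 _) hreal (by positivity)
    _ = (C₀ : ℝ) ^ (1 / (k:ℝ) : ℝ) * (n : ℝ) ^ (1 / (k:ℝ) : ℝ) :=
        Real.mul_rpow (by positivity) (by positivity)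
    _ ≤ (C₀ : ℝ) * (n : ℝ) ^ ε := by
        have hc1 : (1:ℝ) ≤ (C₀ : ℝ) := by exact_mod_cast hC₀1
        have h1 : (C₀ : ℝ) ^ (1 / (k:ℝ) : ℝ) ≤ (C₀ : ℝ) := by
          have := Real.rpow_le_rpow_of_exponent_le hc1
            (show 1 / (k:ℝ) ≤ (1:ℝ) by rw [div_le_one hkpos]; exact_mod_cast hk1)
          simpa using this
        have h2 : (n : ℝ) ^ (1 / (k:ℝ) : ℝ) ≤ (n : ℝ) ^ ε :=
          Real.rpow_le_rpow_of_exponent_le hn1 hinvk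
        exact mul_le_mul h1 h2 (by positivity) (by positivity)

noncomputable def eint (m : ℤ) (α : ℝ) : ℂ :=
  Complex.exp ((2 * Real.pi * Complex.I * (m : ℂ)) * (α : ℂ))

lemma eint_cont (m : ℤ) : Continuous (eint m) :=
  Complex.continuous_exp.comp (continuous_const.mul Complex.continuous_ofReal)

lemma eint_integral (m : ℤ) :
    ∫ α in (0:ℝ)..1, eint m α = if m = 0 then 1 else 0 := by
  by_cases hm : m = 0
  · simp [hm, eint]
  · rw [if_neg hm]
    unfold eint
    rw [integral_exp_mul_complex (by
      refine mul_ne_zero (mul_ne_zero (mul_ne_zero two_ne_zero ?_) Complex.I_ne_zero)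
        (Int.cast_ne_zero.mpr hm)
      exact_mod_cast Complex.ofReal_ne_zero.mpr Real.pi_ne_zero)]
    have h1 : Complex.exp ((2 * Real.pi * Complex.I * (m : ℂ)) * ((1:ℝ) : ℂ)) = 1 := by
      rw [show ((2 * Real.pi * Complex.I * (m : ℂ)) * ((1:ℝ):ℂ)) = (m:ℂ) * (2 * Real.pi * Complex.I) by push_cast; ring]
      exact Complex.exp_int_mul_two_pi_mul_I m
    have h0 : Complex.exp ((2 * Real.pi * Complex.I * (m : ℂ)) * ((0:ℝ) : ℂ)) = 1 := by
      norm_num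
    rw [h1, h0]
    simp

lemma eint_mul_conj (m m' : ℤ) (α : ℝ) :
    eint m α * (starRingEnd ℂ) (eint m' α) = eint (m - m') α := by
  unfold eint
  rw [← Complex.exp_conj, ← Complex.exp_add]
  congr 1
  simp only [map_mul, Complex.conj_I, Complex.conj_ofReal, map_ofNat, map_intCast]
  push_cast
  ring

theorem parseval {ι : Type*} [DecidableEq ι] (s : Finset ι) (F : ι → ℤ) :
    ∫ α in (0:ℝ)..1, ‖∑ t ∈ s, Complex.exp (2 * Real.pi * Complex.I * α * (F t : ℂ))‖ ^ 2
      = (#((s ×ˢ s).filter fun q => F q.1 = F q.2) : ℝ) := by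
  classical
  have hrw : ∀ α : ℝ, (∑ t ∈ s, Complex.exp (2 * Real.pi * Complex.I * α * (F t : ℂ)))
      = ∑ t ∈ s, eint (F t) α := by
    intro α
    refine Finset.sum_congr rfl fun t _ => ?_
    unfold eint
    ring_nf
  have key : ∀ α : ℝ, ((‖∑ t ∈ s, eint (F t) α‖ ^ 2 : ℝ) : ℂ)
      = ∑ q ∈ s ×ˢ s, eint (F q.1 - F q.2) α := by
    intro α
    have h1 : ((‖∑ t ∈ s, eint (F t) α‖ ^ 2 : ℝ) : ℂ)
        = (∑ t ∈ s, eint (F t) α) * (starRingEnd ℂ) (∑ t ∈ s, eint (F t) α) := by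
      rw [Complex.mul_conj]
      norm_cast
      rw [← Complex.sq_norm]
    rw [h1, map_sum, Finset.sum_mul_sum, ← Finset.sum_product']
    exact Finset.sum_congr rfl fun q _ => eint_mul_conj _ _ _
  calc ∫ α in (0:ℝ)..1, ‖∑ t ∈ s, Complex.exp (2 * Real.pi * Complex.I * α * (F t : ℂ))‖ ^ 2
      = ∫ α in (0:ℝ)..1, ‖∑ t ∈ s, eint (F t) α‖ ^ 2 := by
        refine intervalIntegral.integral_congr fun α _ => ?_
        rw [hrw]
    _ = #((s ×ˢ s).filter fun q => F q.1 = F q.2) := by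
        have hofReal : ((∫ α in (0:ℝ)..1, ‖∑ t ∈ s, eint (F t) α‖ ^ 2 : ℝ) : ℂ)
            = ∫ α in (0:ℝ)..1, ((‖∑ t ∈ s, eint (F t) α‖ ^ 2 : ℝ) : ℂ) :=
          (RCLike.intervalIntegral_ofReal (𝕜 := ℂ)).symm
        have hint : ∫ α in (0:ℝ)..1, ((‖∑ t ∈ s, eint (F t) α‖ ^ 2 : ℝ) : ℂ)
            = (#((s ×ˢ s).filter fun q => F q.1 = F q.2) : ℂ) := by
          rw [intervalIntegral.integral_congr (fun α _ => key α)]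
          rw [intervalIntegral.integral_finset_sum
            (fun q _ => ((eint_cont _)).intervalIntegrable _ _)]
          rw [Finset.sum_congr rfl (fun q _ => eint_integral _)]
          simp only [sub_eq_zero]
          rw [Finset.sum_boole]
        have := hofReal.trans hint
        exact_mod_cast this

-- ## Definitions
def BB (P : ℕ) : Finset ℤ := Finset.Icc (-(P : ℤ)) P
def B2 (P : ℕ) : Finset ℤ := Finset.Icc (-(2 * P : ℤ)) (2 * P)
def ff (t : ℤ × ℤ × ℤ) : ℤ := t.1 * (t.1 * t.2.1 + t.2.2 ^ 2)
def TT (P : ℕ) : Finset (ℤ × ℤ × ℤ) :=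
  Finset.filter (fun t : ℤ × ℤ × ℤ => t.1 * (t.1 * t.2.1 + t.2.2 ^ 2) ≠ 0)
    (Finset.Icc (-(P : ℤ)) P ×ˢ Finset.Icc (-(P : ℤ)) P ×ˢ Finset.Icc (-(P : ℤ)) P)
def phi (t : ℤ × ℤ × ℤ) : ℤ × ℤ := (t.1, t.1 * t.2.1 + t.2.2 ^ 2)
def VV (P : ℕ) : Finset (ℤ × ℤ) := (TT P).image phi
def AA (P : ℕ) (v : ℤ × ℤ) : ℕ := #((TT P).filter (fun t => phi t = v))
def WW (P : ℕ) : Finset ((ℤ × ℤ) × (ℤ × ℤ)) :=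
  ((VV P) ×ˢ (VV P)).filter (fun w => w.1.1 * w.1.2 = w.2.1 * w.2.2)
def DD (P : ℕ) (v : ℤ × ℤ) : ℕ := #((VV P).filter (fun v' => v.1 * v.2 = v'.1 * v'.2))
def Npairs (P : ℕ) : ℕ := #(((TT P) ×ˢ (TT P)).filter (fun q => ff q.1 = ff q.2))
def QQ (P : ℕ) : Finset ((ℤ × ℤ × ℤ) × (ℤ × ℤ × ℤ)) :=
  ((TT P) ×ˢ (TT P)).filter (fun q => phi q.1 = phi q.2)
def Wset (P : ℕ) : Finset (ℤ × ℤ × ℤ) :=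
  (((BB P).filter (fun x => x ≠ 0)) ×ˢ (BB P) ×ˢ (BB P)).filter
    (fun w => w.1 ∣ (w.2.2 - w.2.1) * (w.2.2 + w.2.1))
def Wnat (P : ℕ) : Finset (ℕ × ℤ × ℤ) :=
  ((Finset.Icc 1 P) ×ˢ (B2 P) ×ˢ (B2 P)).filter (fun w => (w.1 : ℤ) ∣ w.2.1 * w.2.2)
def mm (P : ℕ) (e : ℕ) : ℕ := #((B2 P).filter (fun s => (e : ℤ) ∣ s))

lemma mem_TT {P : ℕ} {t : ℤ × ℤ × ℤ} (ht : t ∈ TT P) :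
    t.1 ∈ BB P ∧ t.2.1 ∈ BB P ∧ t.2.2 ∈ BB P ∧ ff t ≠ 0 := by
  have h := Finset.mem_filter.mp ht
  have h2 := Finset.mem_product.mp h.1
  have h3 := Finset.mem_product.mp h2.2
  exact ⟨h2.1, h3.1, h3.2, h.2⟩

lemma phi_mul {t : ℤ × ℤ × ℤ} : (phi t).1 * (phi t).2 = ff t := rfl

-- ## L1
lemma N_eq (P : ℕ) : Npairs P = ∑ w ∈ WW P, AA P w.1 * AA P w.2 := by
  classical
  have hmaps : ∀ q ∈ ((TT P) ×ˢ (TT P)).filter (fun q => ff q.1 = ff q.2),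
      (phi q.1, phi q.2) ∈ WW P := by
    intro q hq
    have h := Finset.mem_filter.mp hq
    have h2 := Finset.mem_product.mp h.1
    refine Finset.mem_filter.mpr ⟨Finset.mem_product.mpr ⟨Finset.mem_image_of_mem _ h2.1,
      Finset.mem_image_of_mem _ h2.2⟩, ?_⟩
    simpa only [phi_mul] using h.2
  rw [Npairs, Finset.card_eq_sum_card_fiberwise hmaps]
  refine Finset.sum_congr rfl fun w hw => ?_
  have hfib : (((TT P) ×ˢ (TT P)).filter (fun q => ff q.1 = ff q.2)).filter
      (fun q => (phi q.1, phi q.2) = w)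
      = ((TT P).filter (fun t => phi t = w.1)) ×ˢ ((TT P).filter (fun t => phi t = w.2)) := by
    ext q
    simp only [Finset.mem_filter, Finset.mem_product, Prod.ext_iff]
    constructor
    · rintro ⟨⟨⟨ha, hb⟩, _⟩, hc, hd⟩
      exact ⟨⟨ha, hc⟩, hb, hd⟩
    · rintro ⟨⟨ha, hc⟩, hb, hd⟩
      have hw2 := (Finset.mem_filter.mp hw).2
      refine ⟨⟨⟨ha, hb⟩, ?_⟩, hc, hd⟩
      rw [← phi_mul, ← phi_mul, hc.1, hc.2, hd.1, hd.2]
      exact hw2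
  rw [hfib, Finset.card_product]
  rfl

-- ## L2 helpers
lemma mul_le_sq_add_sq (a b : ℕ) : a * b ≤ a ^ 2 + b ^ 2 := by
  rcases le_total a b with h | h
  · calc a * b ≤ b * b := Nat.mul_le_mul_right _ h
      _ ≤ a ^ 2 + b ^ 2 := by nlinarith
  · calc a * b ≤ a * a := Nat.mul_le_mul_left _ h
      _ ≤ a ^ 2 + b ^ 2 := by nlinarith

lemma WW_symm {P : ℕ} {w : (ℤ × ℤ) × (ℤ × ℤ)} (hw : w ∈ WW P) : (w.2, w.1) ∈ WW P := by
  have h := Finset.mem_filter.mp hw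
  have h2 := Finset.mem_product.mp h.1
  exact Finset.mem_filter.mpr ⟨Finset.mem_product.mpr ⟨h2.2, h2.1⟩, h.2.symm⟩

lemma sum_swap_WW (P : ℕ) : ∑ w ∈ WW P, AA P w.2 ^ 2 = ∑ w ∈ WW P, AA P w.1 ^ 2 := by
  refine Finset.sum_nbij' (fun w => (w.2, w.1)) (fun w => (w.2, w.1)) ?_ ?_ ?_ ?_ ?_
  · exact fun w hw => WW_symm hw
  · exact fun w hw => WW_symm hw
  · intro w _; rfl
  · intro w _; rfl
  · intro w _; rfl

lemma N_le (P : ℕ) : Npairs P ≤ 2 * ∑ w ∈ WW P, AA P w.1 ^ 2 := by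
  rw [N_eq]
  calc ∑ w ∈ WW P, AA P w.1 * AA P w.2 ≤ ∑ w ∈ WW P, (AA P w.1 ^ 2 + AA P w.2 ^ 2) :=
        Finset.sum_le_sum fun w _ => mul_le_sq_add_sq _ _
    _ = ∑ w ∈ WW P, AA P w.1 ^ 2 + ∑ w ∈ WW P, AA P w.2 ^ 2 := Finset.sum_add_distrib
    _ = 2 * ∑ w ∈ WW P, AA P w.1 ^ 2 := by rw [sum_swap_WW]; ring

-- ## L3
lemma sum_WW_eq (P : ℕ) : ∑ w ∈ WW P, AA P w.1 ^ 2 = ∑ v ∈ VV P, AA P v ^ 2 * DD P v := by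
  classical
  rw [WW, Finset.sum_filter, Finset.sum_product]
  refine Finset.sum_congr rfl fun v hv => ?_
  rw [DD, Finset.card_filter]
  rw [Finset.mul_sum]
  refine Finset.sum_congr rfl fun v' hv' => ?_
  by_cases h : v.1 * v.2 = v'.1 * v'.2 <;> simp [h]

-- ## membership facts for VV
lemma VV_mul_ne {P : ℕ} {v : ℤ × ℤ} (hv : v ∈ VV P) : v.1 * v.2 ≠ 0 := by
  obtain ⟨t, ht, rfl⟩ := Finset.mem_image.mp hv
  rw [phi_mul]
  exact (mem_TT ht).2.2.2

lemma VV_bounds {P : ℕ} {v : ℤ × ℤ} (hv : v ∈ VV P) :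
    (v.1 * v.2).natAbs ≤ 2 * P ^ 3 := by
  obtain ⟨t, ht, rfl⟩ := Finset.mem_image.mp hv
  obtain ⟨h1, h2, h3, _⟩ := mem_TT ht
  rw [BB, Finset.mem_Icc] at h1 h2 h3
  rw [phi_mul, ff]
  have e1 : t.1.natAbs ≤ P := by omega
  have e2 : t.2.1.natAbs ≤ P := by omega
  have e3 : t.2.2.natAbs ≤ P := by omega
  calc (t.1 * (t.1 * t.2.1 + t.2.2 ^ 2)).natAbs
      = t.1.natAbs * (t.1 * t.2.1 + t.2.2 ^ 2).natAbs := Int.natAbs_mul _ _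
    _ ≤ P * (t.1 * t.2.1 + t.2.2 ^ 2).natAbs := Nat.mul_le_mul_right _ e1
    _ ≤ P * ((t.1 * t.2.1).natAbs + (t.2.2 ^ 2).natAbs) :=
        Nat.mul_le_mul_left _ (Int.natAbs_add_le _ _)
    _ ≤ P * (P * P + P * P) := by
        refine Nat.mul_le_mul_left _ (Nat.add_le_add ?_ ?_)
        · rw [Int.natAbs_mul]; exact Nat.mul_le_mul e1 e2
        · rw [sq, Int.natAbs_mul]; exact Nat.mul_le_mul e3 e3
    _ = 2 * P ^ 3 := by ring

-- ## L4 : DD bound by divisors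
lemma DD_le (P : ℕ) (v : ℤ × ℤ) (hv : v ∈ VV P) :
    DD P v ≤ 2 * #((v.1 * v.2).natAbs.divisors) := by
  classical
  have hn : v.1 * v.2 ≠ 0 := VV_mul_ne hv
  rw [DD]
  refine Finset.card_le_mul_card_image_of_maps_to (f := fun v' : ℤ × ℤ => v'.1.natAbs) ?_ 2 ?_
  · intro v' hv'
    have h := Finset.mem_filter.mp hv'
    rw [Nat.mem_divisors]
    exact ⟨Int.natAbs_dvd_natAbs.mpr ⟨v'.2, h.2⟩, by simpa using hn⟩
  · intro b _
    refine le_trans (Finset.card_le_card_of_injOn (fun v' => v'.1)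
      (t := {(b : ℤ), -(b : ℤ)}) ?_ ?_) ?_
    · intro v' hv'
      have hb := (Finset.mem_filter.mp hv').2
      rcases Int.natAbs_eq_iff.mp hb with h | h
      · simp [h]
      · simp [h]
    · intro w₁ h₁ w₂ h₂ heq
      simp only [Finset.coe_filter, Set.mem_setOf_eq] at h₁ h₂
      have e₁ := (Finset.mem_filter.mp h₁.1).2
      have e₂ := (Finset.mem_filter.mp h₂.1).2
      have hx : w₁.1 ≠ 0 := by
        intro h0
        rw [e₁, h0, zero_mul] at hn
        exact hn rfl
      have h2 : w₁.2 = w₂.2 := by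
        apply mul_left_cancel₀ hx
        have h3 : w₁.1 * w₁.2 = w₂.1 * w₂.2 := e₁.symm.trans e₂
        have h4 : w₂.1 = w₁.1 := (congrArg id heq).symm
        rw [h4] at h3
        exact h3
      exact Prod.ext heq h2
    · have := Finset.card_insert_le (b : ℤ) ({-(b : ℤ)} : Finset ℤ)
      simpa using this

-- ## L6 : sum of AA^2 equals card QQ
lemma sum_AA_sq (P : ℕ) : ∑ v ∈ VV P, AA P v ^ 2 = #(QQ P) := by
  classical
  have hmaps : ∀ q ∈ ((TT P) ×ˢ (TT P)).filter (fun q => phi q.1 = phi q.2),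
      phi q.1 ∈ VV P := by
    intro q hq
    have h := Finset.mem_filter.mp hq
    have h2 := Finset.mem_product.mp h.1
    exact Finset.mem_image_of_mem _ h2.1
  rw [QQ, Finset.card_eq_sum_card_fiberwise hmaps]
  refine Finset.sum_congr rfl fun v hv => ?_
  have hfib : (((TT P) ×ˢ (TT P)).filter (fun q => phi q.1 = phi q.2)).filter
      (fun q => phi q.1 = v)
      = ((TT P).filter (fun t => phi t = v)) ×ˢ ((TT P).filter (fun t => phi t = v)) := by
    ext q
    simp only [Finset.mem_filter, Finset.mem_product]
    constructor
    · rintro ⟨⟨⟨ha, hb⟩, hab⟩, hc⟩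
      exact ⟨⟨ha, hc⟩, hb, hab ▸ hc⟩
    · rintro ⟨⟨ha, hc⟩, hb, hd⟩
      exact ⟨⟨⟨ha, hb⟩, hc.trans hd.symm⟩, hc⟩
  rw [hfib, Finset.card_product, AA, sq]

-- ## L7 : QQ ≤ card BB * card Wset
lemma QQ_le (P : ℕ) : #(QQ P) ≤ #(BB P) * #(Wset P) := by
  classical
  rw [← Finset.card_product]
  refine Finset.card_le_card_of_injOn
    (fun q => (q.1.2.1, (q.1.1, q.1.2.2, q.2.2.2))) ?_ ?_
  · intro q hq
    have h := Finset.mem_filter.mp hq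
    have h2 := Finset.mem_product.mp h.1
    obtain ⟨hx1, hy1, hz1, hf1⟩ := mem_TT h2.1
    obtain ⟨hx2, hy2, hz2, hf2⟩ := mem_TT h2.2
    have hxx : q.1.1 = q.2.1 := congrArg (Prod.fst : ℤ×ℤ → ℤ) h.2
    have huu : q.1.1 * q.1.2.1 + q.1.2.2 ^ 2 = q.2.1 * q.2.2.1 + q.2.2.2 ^ 2 :=
      congrArg (Prod.snd : ℤ×ℤ → ℤ) h.2
    refine Finset.mem_product.mpr ⟨hy1, ?_⟩
    refine Finset.mem_filter.mpr ⟨Finset.mem_product.mpr ⟨Finset.mem_filter.mpr ⟨hx1, ?_⟩,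
      Finset.mem_product.mpr ⟨hz1, hz2⟩⟩, ?_⟩
    · intro h0
      rw [ff, h0, zero_mul] at hf1
      exact hf1 rfl
    · refine ⟨q.1.2.1 - q.2.2.1, ?_⟩
      have hu2 : q.1.1 * q.1.2.1 + q.1.2.2 ^ 2 = q.1.1 * q.2.2.1 + q.2.2.2 ^ 2 := by
        rw [huu, ← hxx]
      nlinarith [hu2]
  · intro q₁ hq₁ q₂ hq₂ heq
    simp only [Finset.mem_coe] at hq₁ hq₂
    have h₁ := Finset.mem_filter.mp hq₁
    have h₂ := Finset.mem_filter.mp hq₂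
    simp only [Prod.mk.injEq] at heq
    obtain ⟨hy, hx, hz, hz'⟩ := heq
    have e1 : q₁.1 = q₂.1 := by
      refine Prod.ext hx (Prod.ext hy hz)
    have hxx₁ : q₁.1.1 = q₁.2.1 := congrArg (Prod.fst : ℤ×ℤ → ℤ) h₁.2
    have hxx₂ : q₂.1.1 = q₂.2.1 := congrArg (Prod.fst : ℤ×ℤ → ℤ) h₂.2
    have huu₁ : q₁.1.1 * q₁.1.2.1 + q₁.1.2.2 ^ 2 = q₁.2.1 * q₁.2.2.1 + q₁.2.2.2 ^ 2 :=
      congrArg (Prod.snd : ℤ×ℤ → ℤ) h₁.2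
    have huu₂ : q₂.1.1 * q₂.1.2.1 + q₂.1.2.2 ^ 2 = q₂.2.1 * q₂.2.2.1 + q₂.2.2.2 ^ 2 :=
      congrArg (Prod.snd : ℤ×ℤ → ℤ) h₂.2
    have hx0 : q₁.1.1 ≠ 0 := by
      have hf1 := (mem_TT (Finset.mem_product.mp h₁.1).1).2.2.2
      intro h0
      rw [ff, h0, zero_mul] at hf1
      exact hf1 rfl
    have ex : q₁.2.1 = q₂.2.1 := by rw [← hxx₁, ← hxx₂, hx]
    have ey : q₁.2.2.1 = q₂.2.2.1 := by
      have t2 := huu₂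
      rw [← e1] at t2
      have c1 : q₁.2.1 * q₁.2.2.1 = q₂.2.1 * q₂.2.2.1 := by
        rw [huu₁] at t2
        rw [hz'] at t2
        linarith [t2]
      rw [← ex] at c1
      have hne : q₁.2.1 ≠ 0 := by rw [← hxx₁]; exact hx0
      exact mul_left_cancel₀ hne c1
    exact Prod.ext e1 (Prod.ext ex (Prod.ext ey hz'))

-- ## L8 : Wset ≤ 2 * Wnat
lemma Wset_le (P : ℕ) : #(Wset P) ≤ 2 * #(Wnat P) := by
  classical
  refine Finset.card_le_mul_card_image_of_maps_to
    (f := fun w : ℤ × ℤ × ℤ => ((w.1.natAbs, (w.2.2 - w.2.1, w.2.2 + w.2.1)) : ℕ × ℤ × ℤ))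
    ?_ 2 ?_
  · intro w hw
    have h := Finset.mem_filter.mp hw
    have h2 := Finset.mem_product.mp h.1
    have hx := Finset.mem_filter.mp h2.1
    have h3 := Finset.mem_product.mp h2.2
    have hb : -(P:ℤ) ≤ w.1 ∧ w.1 ≤ P := Finset.mem_Icc.mp hx.1
    have hb1 : -(P:ℤ) ≤ w.2.1 ∧ w.2.1 ≤ P := Finset.mem_Icc.mp h3.1
    have hb2 : -(P:ℤ) ≤ w.2.2 ∧ w.2.2 ≤ P := Finset.mem_Icc.mp h3.2
    have hne : w.1 ≠ 0 := hx.2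
    refine Finset.mem_filter.mpr ⟨Finset.mem_product.mpr ⟨?_, Finset.mem_product.mpr ⟨?_, ?_⟩⟩, ?_⟩
    · show w.1.natAbs ∈ Finset.Icc 1 P
      rw [Finset.mem_Icc]
      omega
    · show w.2.2 - w.2.1 ∈ B2 P
      rw [B2, Finset.mem_Icc]
      omega
    · show w.2.2 + w.2.1 ∈ B2 P
      rw [B2, Finset.mem_Icc]
      omega
    · show ((w.1.natAbs : ℤ)) ∣ (w.2.2 - w.2.1) * (w.2.2 + w.2.1)
      exact Int.natAbs_dvd.mpr h.2
  · intro b _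
    refine le_trans (Finset.card_le_card_of_injOn (fun w => w.1)
      (t := {((b.1 : ℤ)), -((b.1 : ℤ))}) ?_ ?_) ?_
    · intro w hw
      have hb := (Finset.mem_filter.mp hw).2
      have h1 : w.1.natAbs = b.1 := congrArg Prod.fst hb
      rcases Int.natAbs_eq_iff.mp h1 with h | h
      · simp [h]
      · simp [h]
    · intro w₁ h₁ w₂ h₂ heq
      simp only [Finset.coe_filter, Set.mem_setOf_eq] at h₁ h₂
      have key := h₁.2.trans h₂.2.symm
      simp only [Prod.mk.injEq] at key
      obtain ⟨-, hs, ht⟩ := key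
      have hz1 : w₁.2.1 = w₂.2.1 := by omega
      have hz2 : w₁.2.2 = w₂.2.2 := by omega
      exact Prod.ext heq (Prod.ext hz1 hz2)
    · have := Finset.card_insert_le ((b.1 : ℤ)) ({-((b.1 : ℤ))} : Finset ℤ)
      simpa using this

-- ## L9 : Wnat fiberwise
lemma Wnat_le (P : ℕ) :
    #(Wnat P) ≤ ∑ x ∈ Finset.Icc 1 P, #(((B2 P) ×ˢ (B2 P)).filter
      (fun st : ℤ × ℤ => (x : ℤ) ∣ st.1 * st.2)) := by
  classical
  have hmaps : ∀ w ∈ Wnat P, w.1 ∈ Finset.Icc 1 P := by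
    intro w hw
    exact (Finset.mem_product.mp (Finset.mem_filter.mp hw).1).1
  rw [Finset.card_eq_sum_card_fiberwise hmaps]
  refine Finset.sum_le_sum fun x hx => ?_
  refine Finset.card_le_card_of_injOn (fun w => w.2) ?_ ?_
  · intro w hw
    have h1 := Finset.mem_filter.mp hw
    have h2 := Finset.mem_filter.mp h1.1
    have h3 := Finset.mem_product.mp h2.1
    refine Finset.mem_filter.mpr ⟨h3.2, ?_⟩
    have := h2.2
    rw [h1.2] at this
    exact this
  · intro w₁ h₁ w₂ h₂ heq
    simp only [Finset.coe_filter, Set.mem_setOf_eq] at h₁ h₂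
    exact Prod.ext (h₁.2.trans h₂.2.symm) heq

-- ## L10 : gcd decomposition
lemma pair_count_le (P x : ℕ) (hx : 1 ≤ x) :
    #(((B2 P) ×ˢ (B2 P)).filter (fun st : ℤ × ℤ => (x : ℤ) ∣ st.1 * st.2))
      ≤ ∑ e ∈ x.divisors, mm P e * mm P (x / e) := by
  classical
  have hRHS : ∑ e ∈ x.divisors, mm P e * mm P (x / e)
      = #(x.divisors.sigma (fun e => ((B2 P).filter (fun s => (e : ℤ) ∣ s)) ×ˢ
          ((B2 P).filter (fun t => ((x / e : ℕ) : ℤ) ∣ t)))) := by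
    rw [Finset.card_sigma]
    exact Finset.sum_congr rfl fun e _ => (Finset.card_product _ _).symm
  rw [hRHS]
  refine Finset.card_le_card_of_injOn
    (fun st => ⟨Nat.gcd x st.1.natAbs, st⟩) ?_ ?_
  · intro st hst
    have h := Finset.mem_filter.mp hst
    have h2 := Finset.mem_product.mp h.1
    have hxne : x ≠ 0 := by omega
    have hgcd_dvd : Nat.gcd x st.1.natAbs ∣ x := Nat.gcd_dvd_left _ _
    have hgpos : 0 < Nat.gcd x st.1.natAbs := Nat.gcd_pos_of_pos_left _ (by omega)
    refine Finset.mem_sigma.mpr ⟨Nat.mem_divisors.mpr ⟨hgcd_dvd, hxne⟩, ?_⟩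
    refine Finset.mem_product.mpr ⟨Finset.mem_filter.mpr ⟨h2.1, ?_⟩,
      Finset.mem_filter.mpr ⟨h2.2, ?_⟩⟩
    · exact Int.dvd_natAbs.mp (Int.natCast_dvd_natCast.mpr (Nat.gcd_dvd_right _ _))
    · -- (x / gcd) ∣ st.2
      set e := Nat.gcd x st.1.natAbs with he
      have hdvd_nat : x ∣ st.1.natAbs * st.2.natAbs := by
        have := Int.natAbs_dvd_natAbs.mpr h.2
        rwa [Int.natAbs_mul, Int.natAbs_natCast] at this
      have hcop : Nat.Coprime (x / e) (st.1.natAbs / e) :=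
        Nat.coprime_div_gcd_div_gcd hgpos
      have hstep : (x / e) ∣ (st.1.natAbs / e) * st.2.natAbs := by
        have hmul : e * (x / e) ∣ e * ((st.1.natAbs / e) * st.2.natAbs) := by
          rw [Nat.mul_div_cancel' hgcd_dvd, ← mul_assoc,
            Nat.mul_div_cancel' (Nat.gcd_dvd_right x st.1.natAbs)]
          exact hdvd_nat
        exact (mul_dvd_mul_iff_left (by omega : e ≠ 0)).mp hmul
      have : (x / e) ∣ st.2.natAbs := hcop.dvd_of_dvd_mul_left hstep
      exact Int.dvd_natAbs.mp (Int.natCast_dvd_natCast.mpr this)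
  · intro st₁ h₁ st₂ h₂ heq
    have : st₁ = st₂ := congrArg Sigma.snd heq
    exact this

-- ## L11 : mm bound
lemma mm_le (P e : ℕ) (he : 1 ≤ e) : mm P e ≤ 2 * (2 * P / e) + 1 := by
  classical
  rw [mm]
  set q : ℕ := 2 * P / e with hq
  have hcard : #(Finset.Icc (-(q : ℤ)) (q : ℤ)) = 2 * q + 1 := by
    rw [Int.card_Icc]
    omega
  rw [← hcard]
  refine Finset.card_le_card_of_injOn (fun s => s / (e : ℤ)) ?_ ?_
  · intro s hs
    have h := Finset.mem_filter.mp hs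
    obtain ⟨c, hc⟩ := h.2
    have hb := h.1
    rw [B2, Finset.mem_Icc] at hb
    have hene : (e : ℤ) ≠ 0 := by exact_mod_cast (by omega : e ≠ 0)
    have hcs : s / (e : ℤ) = c := by
      rw [hc, Int.mul_ediv_cancel_left _ hene]
    show s / (e : ℤ) ∈ Finset.Icc (-(q : ℤ)) (q : ℤ)
    rw [Finset.mem_Icc, hcs]
    have habs : c.natAbs * e ≤ 2 * P := by
      have h1 : s.natAbs = c.natAbs * e := by
        rw [hc, Int.natAbs_mul, Int.natAbs_natCast, mul_comm]
      omega
    have hc2 : c.natAbs ≤ q := by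
      rw [hq]
      exact (Nat.le_div_iff_mul_le (by omega)).mpr habs
    omega
  · intro s₁ h₁ s₂ h₂ heq
    have e₁ := (Finset.mem_filter.mp h₁).2
    have e₂ := (Finset.mem_filter.mp h₂).2
    obtain ⟨c₁, hc₁⟩ := e₁
    obtain ⟨c₂, hc₂⟩ := e₂
    have hene : (e : ℤ) ≠ 0 := by exact_mod_cast (by omega : e ≠ 0)
    have k₁ : s₁ / (e : ℤ) = c₁ := by rw [hc₁, Int.mul_ediv_cancel_left _ hene]
    have k₂ : s₂ / (e : ℤ) = c₂ := by rw [hc₂, Int.mul_ediv_cancel_left _ hene]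
    simp only at heq
    have hcc : c₁ = c₂ := by rw [← k₁, ← k₂]; exact heq
    rw [hc₁, hc₂, hcc]

-- ## L12 : reindex divisor double sums
lemma divisor_reindex (P : ℕ) (g : ℕ → ℕ → ℝ) (hg : ∀ e f, 0 ≤ g e f) :
    ∑ x ∈ Finset.Icc 1 P, ∑ e ∈ x.divisors, g e (x / e)
      ≤ ∑ p ∈ Finset.Icc 1 P ×ˢ Finset.Icc 1 P, g p.1 p.2 := by
  classical
  rw [Finset.sum_sigma']
  set Φ : (Σ _ : ℕ, ℕ) → ℕ × ℕ := fun σ => (σ.2, σ.1 / σ.2) with hΦ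
  have hinj : ∀ σ₁ ∈ (Finset.Icc 1 P).sigma (fun x => x.divisors),
      ∀ σ₂ ∈ (Finset.Icc 1 P).sigma (fun x => x.divisors), Φ σ₁ = Φ σ₂ → σ₁ = σ₂ := by
    intro σ₁ h₁ σ₂ h₂ heq
    have m₁ := Finset.mem_sigma.mp h₁
    have m₂ := Finset.mem_sigma.mp h₂
    have d₁ := Nat.mem_divisors.mp m₁.2
    have d₂ := Nat.mem_divisors.mp m₂.2
    simp only [hΦ, Prod.mk.injEq] at heq
    obtain ⟨he, hd⟩ := heq
    have hx : σ₁.1 = σ₂.1 := by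
      have t1 : σ₁.1 = σ₁.1 / σ₁.2 * σ₁.2 := (Nat.div_mul_cancel d₁.1).symm
      have t2 : σ₂.1 = σ₂.1 / σ₂.2 * σ₂.2 := (Nat.div_mul_cancel d₂.1).symm
      rw [t1, t2, hd, he]
    exact Sigma.ext hx (heq_of_eq he)
  have himg : ∑ σ ∈ (Finset.Icc 1 P).sigma (fun x => x.divisors), g σ.2 (σ.1 / σ.2)
      = ∑ p ∈ ((Finset.Icc 1 P).sigma (fun x => x.divisors)).image Φ, g p.1 p.2 := by
    rw [Finset.sum_image hinj]
  rw [himg]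
  refine Finset.sum_le_sum_of_subset_of_nonneg ?_ (fun p _ _ => hg p.1 p.2)
  intro p hp
  obtain ⟨σ, hσ, rfl⟩ := Finset.mem_image.mp hp
  have m := Finset.mem_sigma.mp hσ
  have hxm := Finset.mem_Icc.mp m.1
  have d := Nat.mem_divisors.mp m.2
  have he1 : 1 ≤ σ.2 := Nat.pos_of_dvd_of_pos d.1 (by omega)
  have heP : σ.2 ≤ P := le_trans (Nat.le_of_dvd (by omega) d.1) hxm.2
  have hf1 : 1 ≤ σ.1 / σ.2 := by
    rw [Nat.le_div_iff_mul_le (by omega)]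
    rw [one_mul]
    exact Nat.le_of_dvd (by omega) d.1
  have hfP : σ.1 / σ.2 ≤ P := le_trans (Nat.div_le_self _ _) hxm.2
  refine Finset.mem_product.mpr ⟨Finset.mem_Icc.mpr ⟨he1, heP⟩, Finset.mem_Icc.mpr ⟨hf1, hfP⟩⟩

-- ## L13 harmonic
lemma sum_inv_le (P : ℕ) : ∑ e ∈ Finset.Icc 1 P, (1 : ℝ)/(e : ℝ) ≤ 1 + Real.log P := by
  have h1 : ∀ n : ℕ, ∑ e ∈ Finset.Icc 1 n, (1:ℝ)/(e:ℝ) = ((harmonic n : ℚ) : ℝ) := by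
    intro n
    induction n with
    | zero => simp [harmonic]
    | succ n ih =>
        rw [Finset.sum_Icc_succ_top (by omega), ih, harmonic_succ]
        push_cast
        ring
  rw [h1]
  calc ((harmonic P : ℚ) : ℝ) ≤ 1 + Real.log P := harmonic_le_one_add_log P
    _ ≤ 1 + Real.log P := le_refl _

lemma sum_term_le (P : ℕ) (hP : 1 ≤ P) :
    ∑ e ∈ Finset.Icc 1 P, (4 * (P:ℝ)/(e:ℝ) + 1) ≤ 5 * P * (1 + Real.log P) := by
  have hlog : (0:ℝ) ≤ Real.log P := Real.log_nonneg (by exact_mod_cast hP)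
  have hPr : (1:ℝ) ≤ (P:ℝ) := by exact_mod_cast hP
  rw [Finset.sum_add_distrib]
  have h1 : ∑ e ∈ Finset.Icc 1 P, 4 * (P:ℝ)/(e:ℝ) = 4 * P * ∑ e ∈ Finset.Icc 1 P, (1:ℝ)/(e:ℝ) := by
    rw [Finset.mul_sum]
    exact Finset.sum_congr rfl fun e _ => by ring
  rw [h1]
  have h2 : ∑ _e ∈ Finset.Icc 1 P, (1:ℝ) = P := by
    rw [Finset.sum_const, Nat.card_Icc]
    simp
  rw [h2]
  have h3 := sum_inv_le P
  nlinarith [h3, hlog, hPr]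

-- ## log ≤ rpow
lemma log_le_rpow_div (x δ : ℝ) (hx : 1 ≤ x) (hδ : 0 < δ) : Real.log x ≤ x ^ δ / δ := by
  have hx0 : 0 < x := by linarith
  have h := Real.log_le_sub_one_of_pos (Real.rpow_pos_of_pos hx0 δ)
  rw [Real.log_rpow hx0] at h
  have hp : (0:ℝ) < x ^ δ := Real.rpow_pos_of_pos hx0 δ
  rw [le_div_iff₀ hδ]
  nlinarith

-- === assembly ===
lemma mm_le_real (P e : ℕ) (he : 1 ≤ e) : (mm P e : ℝ) ≤ 4 * (P:ℝ)/(e:ℝ) + 1 := by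
  have h := mm_le P e he
  have h1 : (mm P e : ℝ) ≤ 2 * ((2 * P / e : ℕ) : ℝ) + 1 := by exact_mod_cast h
  have h2 : ((2 * P / e : ℕ) : ℝ) ≤ ((2 * P : ℕ) : ℝ) / (e : ℝ) := Nat.cast_div_le
  have h3 : ((2 * P : ℕ) : ℝ) = 2 * (P : ℝ) := by push_cast; ring
  rw [h3] at h2
  have hep : (0:ℝ) < (e:ℝ) := by exact_mod_cast he
  calc (mm P e : ℝ) ≤ 2 * ((2 * P / e : ℕ) : ℝ) + 1 := h1
    _ ≤ 2 * (2 * (P:ℝ) / e) + 1 := by linarith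
    _ = 4 * (P:ℝ)/(e:ℝ) + 1 := by ring

lemma Wnat_bound (P : ℕ) (hP : 1 ≤ P) :
    (#(Wnat P) : ℝ) ≤ (5 * P * (1 + Real.log P))^2 := by
  have step1 : #(Wnat P) ≤ ∑ x ∈ Finset.Icc 1 P, ∑ e ∈ x.divisors, mm P e * mm P (x / e) := by
    refine le_trans (Wnat_le P) (Finset.sum_le_sum fun x hx => ?_)
    exact pair_count_le P x (Finset.mem_Icc.mp hx).1
  have step2 : (#(Wnat P) : ℝ) ≤
      ∑ x ∈ Finset.Icc 1 P, ∑ e ∈ x.divisors, (mm P e : ℝ) * (mm P (x / e) : ℝ) := by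
    have := (Nat.cast_le (α := ℝ)).mpr step1
    refine le_trans this (le_of_eq ?_)
    push_cast
    rfl
  set g : ℕ → ℕ → ℝ := fun e f => (4 * (P:ℝ)/(e:ℝ) + 1) * (4 * (P:ℝ)/(f:ℝ) + 1) with hg
  have hgnn : ∀ e f, 0 ≤ g e f := by
    intro e f
    have : (0:ℝ) ≤ 4 * (P:ℝ)/(e:ℝ) := by positivity
    have : (0:ℝ) ≤ 4 * (P:ℝ)/(f:ℝ) := by positivity
    rw [hg]
    positivity
  have step3 : ∑ x ∈ Finset.Icc 1 P, ∑ e ∈ x.divisors, (mm P e : ℝ) * (mm P (x / e) : ℝ)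
      ≤ ∑ x ∈ Finset.Icc 1 P, ∑ e ∈ x.divisors, g e (x / e) := by
    refine Finset.sum_le_sum fun x hx => Finset.sum_le_sum fun e he => ?_
    have hxm := Finset.mem_Icc.mp hx
    have hd := Nat.mem_divisors.mp he
    have he1 : 1 ≤ e := Nat.pos_of_dvd_of_pos hd.1 (by omega)
    have hf1 : 1 ≤ x / e := by
      rw [Nat.le_div_iff_mul_le (by omega), one_mul]
      exact Nat.le_of_dvd (by omega) hd.1
    exact mul_le_mul (mm_le_real P e he1) (mm_le_real P _ hf1) (by positivity) (by positivity)
  have step4 : ∑ x ∈ Finset.Icc 1 P, ∑ e ∈ x.divisors, g e (x / e)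
      ≤ ∑ p ∈ Finset.Icc 1 P ×ˢ Finset.Icc 1 P, g p.1 p.2 := divisor_reindex P g hgnn
  have step5 : ∑ p ∈ Finset.Icc 1 P ×ˢ Finset.Icc 1 P, g p.1 p.2
      = (∑ e ∈ Finset.Icc 1 P, (4 * (P:ℝ)/(e:ℝ) + 1))^2 := by
    rw [sq, Finset.sum_mul_sum]
    rw [Finset.sum_product]
  have step6 : (∑ e ∈ Finset.Icc 1 P, (4 * (P:ℝ)/(e:ℝ) + 1))^2
      ≤ (5 * P * (1 + Real.log P))^2 := by
    have hnn : (0:ℝ) ≤ ∑ e ∈ Finset.Icc 1 P, (4 * (P:ℝ)/(e:ℝ) + 1) := by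
      refine Finset.sum_nonneg fun e _ => by positivity
    exact pow_le_pow_left₀ hnn (sum_term_le P hP) 2
  calc (#(Wnat P) : ℝ) ≤ _ := step2
    _ ≤ _ := step3
    _ ≤ _ := step4
    _ = _ := step5
    _ ≤ _ := step6

lemma Npairs_bound (ε : ℝ) (hε : 0 < ε) :
    ∃ C : ℝ, 0 < C ∧ ∀ P : ℕ, 1 ≤ P → (Npairs P : ℝ) ≤ C * (P:ℝ) ^ ((3:ℝ) + ε) := by
  obtain ⟨C₁, hC₁, hdiv⟩ := divisor_bound (ε/4) (by linarith)
  set A : ℝ := (2:ℝ) ^ (ε/4) with hA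
  set M : ℝ := 1 + 8/ε with hM
  have hA0 : 0 < A := Real.rpow_pos_of_pos (by norm_num) _
  have hM0 : 0 < M := by rw [hM]; positivity
  have hC₁0 : 0 < C₁ := lt_of_lt_of_le one_pos hC₁
  refine ⟨600 * C₁ * A * M^2, by positivity, fun P hP => ?_⟩
  have hPr : (1:ℝ) ≤ (P:ℝ) := by exact_mod_cast hP
  have hP0 : (0:ℝ) < (P:ℝ) := by linarith
  have hlog0 : (0:ℝ) ≤ Real.log P := Real.log_nonneg hPr
  set L : ℝ := 1 + Real.log P with hL
  have hL1 : (1:ℝ) ≤ L := by rw [hL]; linarith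
  set Dmax : ℝ := 2 * C₁ * ((2:ℝ) * (P:ℝ)^(3:ℕ)) ^ (ε/4) with hDmax
  have hDmax0 : 0 < Dmax := by
    rw [hDmax]
    have : (0:ℝ) < (2:ℝ) * (P:ℝ)^(3:ℕ) := by positivity
    positivity
  -- DD bound
  have hDD : ∀ v ∈ VV P, (DD P v : ℝ) ≤ Dmax := by
    intro v hv
    have h1 := DD_le P v hv
    have h2 : ((v.1 * v.2).natAbs : ℕ) ≠ 0 := by
      simpa using VV_mul_ne hv
    have h3 := hdiv (v.1 * v.2).natAbs h2
    have h4 : ((v.1 * v.2).natAbs : ℝ) ≤ ((2 * P ^ 3 : ℕ) : ℝ) := by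
      exact_mod_cast VV_bounds hv
    have h5 : ((v.1 * v.2).natAbs : ℝ) ^ (ε/4) ≤ ((2 * P ^ 3 : ℕ) : ℝ) ^ (ε/4) :=
      Real.rpow_le_rpow (by positivity) h4 (by linarith)
    have h6 : ((2 * P ^ 3 : ℕ) : ℝ) = (2:ℝ) * (P:ℝ)^(3:ℕ) := by push_cast; ring
    calc (DD P v : ℝ) ≤ 2 * (#((v.1 * v.2).natAbs.divisors) : ℝ) := by exact_mod_cast h1
      _ ≤ 2 * (C₁ * ((v.1 * v.2).natAbs : ℝ) ^ (ε/4)) := by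
          have := h3
          nlinarith [h3]
      _ ≤ 2 * (C₁ * ((2:ℝ) * (P:ℝ)^(3:ℕ)) ^ (ε/4)) := by
          rw [← h6]
          nlinarith [h5, hC₁0.le]
      _ = Dmax := by rw [hDmax]; ring
  -- N ≤ 2 Dmax #QQ
  have hN2 : (Npairs P : ℝ) ≤ 2 * Dmax * (#(QQ P) : ℝ) := by
    have h1 : (Npairs P : ℝ) ≤ 2 * ∑ w ∈ WW P, (AA P w.1 : ℝ) ^ 2 := by
      have := (Nat.cast_le (α := ℝ)).mpr (N_le P)
      refine le_trans this (le_of_eq ?_)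
      push_cast
      rfl
    have h2 : ∑ w ∈ WW P, (AA P w.1 : ℝ) ^ 2 = ∑ v ∈ VV P, (AA P v : ℝ)^2 * (DD P v : ℝ) := by
      have := congrArg (fun n : ℕ => (n : ℝ)) (sum_WW_eq P)
      push_cast at this
      exact this
    have h3 : ∑ v ∈ VV P, (AA P v : ℝ)^2 * (DD P v : ℝ)
        ≤ ∑ v ∈ VV P, (AA P v : ℝ)^2 * Dmax := by
      refine Finset.sum_le_sum fun v hv => ?_
      exact mul_le_mul_of_nonneg_left (hDD v hv) (by positivity)
    have h4 : ∑ v ∈ VV P, (AA P v : ℝ)^2 * Dmax = Dmax * (#(QQ P) : ℝ) := by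
      rw [← Finset.sum_mul]
      have : ∑ v ∈ VV P, (AA P v : ℝ)^2 = (#(QQ P) : ℝ) := by
        have := congrArg (fun n : ℕ => (n : ℝ)) (sum_AA_sq P)
        push_cast at this
        exact this
      rw [this]
      ring
    calc (Npairs P : ℝ) ≤ 2 * ∑ w ∈ WW P, (AA P w.1 : ℝ) ^ 2 := h1
      _ = 2 * ∑ v ∈ VV P, (AA P v : ℝ)^2 * (DD P v : ℝ) := by rw [h2]
      _ ≤ 2 * ∑ v ∈ VV P, (AA P v : ℝ)^2 * Dmax := by linarith [h3]
      _ = 2 * Dmax * (#(QQ P) : ℝ) := by rw [h4]; ring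
  -- #QQ real bound
  have hBBcard : (#(BB P) : ℝ) = 2 * (P:ℝ) + 1 := by
    rw [BB, Int.card_Icc]
    have : ((P:ℤ) + 1 - -(P:ℤ)).toNat = 2 * P + 1 := by omega
    rw [this]
    push_cast
    ring
  have hQQ : (#(QQ P) : ℝ) ≤ (2 * (P:ℝ) + 1) * (2 * (5 * P * L)^2) := by
    have h1 : (#(QQ P) : ℝ) ≤ (#(BB P) : ℝ) * (#(Wset P) : ℝ) := by exact_mod_cast QQ_le P
    have h2 : (#(Wset P) : ℝ) ≤ 2 * (#(Wnat P) : ℝ) := by exact_mod_cast Wset_le P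
    have h3 := Wnat_bound P hP
    rw [← hL] at h3
    calc (#(QQ P) : ℝ) ≤ (#(BB P) : ℝ) * (#(Wset P) : ℝ) := h1
      _ = (2 * (P:ℝ) + 1) * (#(Wset P) : ℝ) := by rw [hBBcard]
      _ ≤ (2 * (P:ℝ) + 1) * (2 * (#(Wnat P) : ℝ)) := by
          refine mul_le_mul_of_nonneg_left h2 (by positivity)
      _ ≤ (2 * (P:ℝ) + 1) * (2 * (5 * P * L)^2) := by
          refine mul_le_mul_of_nonneg_left (by linarith [h3]) (by positivity)
  -- L bound
  have hLP : L ≤ M * (P:ℝ) ^ (ε/8) := by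
    have h1 := log_le_rpow_div (P:ℝ) (ε/8) hPr (by linarith)
    have h2 : (1:ℝ) ≤ (P:ℝ) ^ (ε/8) := by
      have := Real.rpow_le_rpow_of_exponent_le hPr (show (0:ℝ) ≤ ε/8 by linarith)
      rwa [Real.rpow_zero] at this
    rw [hL, hM]
    have h3 : Real.log P ≤ (P:ℝ)^(ε/8) / (ε/8) := h1
    have h4 : (P:ℝ)^(ε/8)/(ε/8) = (8/ε) * (P:ℝ)^(ε/8) := by
      field_simp
    rw [h4] at h3
    nlinarith [h2, h3, hε]
  have hLsq : L^2 ≤ M^2 * (P:ℝ)^(ε/4) := by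
    have h1 : L^2 ≤ (M * (P:ℝ)^(ε/8))^2 := by
      refine pow_le_pow_left₀ (by linarith) hLP 2
    have h2 : (M * (P:ℝ)^(ε/8))^2 = M^2 * ((P:ℝ)^(ε/8))^2 := by ring
    have h3 : ((P:ℝ)^(ε/8))^2 = (P:ℝ)^(ε/4) := by
      rw [sq, ← Real.rpow_add hP0]
      congr 1
      ring
    rw [h2, h3] at h1
    exact h1
  -- Dmax expand
  have hDmax_eq : Dmax = 2 * C₁ * A * (P:ℝ) ^ (3 * (ε/4)) := by
    have hP3 : ((P:ℝ)^(3:ℕ)) ^ (ε/4) = (P:ℝ)^(3*(ε/4)) := by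
      rw [← Real.rpow_natCast (P:ℝ) 3, ← Real.rpow_mul hP0.le]
      norm_num
    rw [hDmax, Real.mul_rpow (by norm_num) (by positivity), hP3, hA]
    ring
  -- final chain
  have final : (Npairs P : ℝ) ≤ 600 * C₁ * A * M^2 *
      ((P:ℝ) ^ (3 * (ε/4)) * ((P:ℝ)^(ε/4) * (P:ℝ)^(3:ℕ))) := by
    calc (Npairs P : ℝ) ≤ 2 * Dmax * (#(QQ P) : ℝ) := hN2
      _ ≤ 2 * Dmax * ((2 * (P:ℝ) + 1) * (2 * (5 * P * L)^2)) := by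
          refine mul_le_mul_of_nonneg_left hQQ (by positivity)
      _ = 2 * Dmax * ((2 * (P:ℝ) + 1) * (50 * (P:ℝ)^(2:ℕ) * L^2)) := by ring
      _ ≤ 2 * Dmax * ((3 * (P:ℝ)) * (50 * (P:ℝ)^(2:ℕ) * (M^2 * (P:ℝ)^(ε/4)))) := by
          have h2P : 2 * (P:ℝ) + 1 ≤ 3 * (P:ℝ) := by linarith
          refine mul_le_mul_of_nonneg_left ?_ (by positivity)
          refine mul_le_mul h2P ?_ (by positivity) (by positivity)
          refine mul_le_mul_of_nonneg_left hLsq (by positivity)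
      _ = 600 * C₁ * A * M^2 * ((P:ℝ) ^ (3 * (ε/4)) * ((P:ℝ)^(ε/4) * (P:ℝ)^(3:ℕ))) := by
          rw [hDmax_eq]
          ring
  have hexp : (P:ℝ) ^ (3 * (ε/4)) * ((P:ℝ)^(ε/4) * (P:ℝ)^(3:ℕ))
      = (P:ℝ) ^ ((3:ℝ) + ε) := by
    rw [← Real.rpow_natCast (P:ℝ) 3, ← Real.rpow_add hP0, ← Real.rpow_add hP0]
    congr 1
    push_cast
    ring
  rw [hexp] at final
  exact final

end ProofAux


/-- With `F₁(α) = ∑ e(α x(xy+z²))` over triples in `[-P,P]³` with `x(xy+z²) ≠ 0`,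
one has `∫₀¹ |F₁(α)|² dα ≪ P^(3+ε)`. -/
theorem mean_square_of_F1 :
    ∀ ε : ℝ, 0 < ε → ∃ C : ℝ, 0 < C ∧ ∀ P : ℕ, 1 ≤ P →
      (∫ α in (0 : ℝ)..1,
          ‖(Finset.filter
              (fun t : ℤ × ℤ × ℤ => t.1 * (t.1 * t.2.1 + t.2.2 ^ 2) ≠ 0)
              (Finset.Icc (-(P : ℤ)) P ×ˢ Finset.Icc (-(P : ℤ)) P
                ×ˢ Finset.Icc (-(P : ℤ)) P)).sum
            (fun t : ℤ × ℤ × ℤ =>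
              Complex.exp (2 * Real.pi * Complex.I * α *
                ((t.1 * (t.1 * t.2.1 + t.2.2 ^ 2) : ℤ) : ℂ)))‖ ^ 2)
        ≤ C * (P : ℝ) ^ ((3 : ℝ) + ε) := by
  intro ε hε
  obtain ⟨C, hC, hbound⟩ := Npairs_bound ε hε
  refine ⟨C, hC, fun P hP => ?_⟩
  have hpar := parseval (TT P) ff
  calc (∫ α in (0 : ℝ)..1,
          ‖(Finset.filter
              (fun t : ℤ × ℤ × ℤ => t.1 * (t.1 * t.2.1 + t.2.2 ^ 2) ≠ 0)
              (Finset.Icc (-(P : ℤ)) P ×ˢ Finset.Icc (-(P : ℤ)) P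
                ×ˢ Finset.Icc (-(P : ℤ)) P)).sum
            (fun t : ℤ × ℤ × ℤ =>
              Complex.exp (2 * Real.pi * Complex.I * α *
                ((t.1 * (t.1 * t.2.1 + t.2.2 ^ 2) : ℤ) : ℂ)))‖ ^ 2)
      = (Npairs P : ℝ) := hpar
    _ ≤ C * (P : ℝ) ^ ((3 : ℝ) + ε) := hbound P hP
end

section
/- For any fixed nonzero integer A and any integer N, the number of integer quadruples (x,y,z,w) with |x|,|y|,|z|,|w| ≤ P, x(xy+z²) ≠ 0, and x(xy+z²) + A·w³ = N is O(P^{11/6+ε}). -/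
open Finset

set_option maxHeartbeats 2000000

lemma aux_growth (ε : ℝ) (hε : 0 < ε) :
    ∃ C : ℝ, 1 ≤ C ∧ ∀ k : ℕ, (k + 1 : ℝ) ≤ C * (2 : ℝ) ^ ((k : ℝ) * ε) := by
  set r : ℝ := (2 : ℝ) ^ (-ε) with hr
  have hr0 : 0 < r := Real.rpow_pos_of_pos two_pos _
  have hr1 : r < 1 := by
    rw [hr]
    have := Real.rpow_lt_one_of_one_lt_of_neg (x := (2:ℝ)) one_lt_two (neg_neg_iff_pos.mpr hε)
    exact this
  have hsum : Summable (fun k : ℕ => (k : ℝ) ^ 1 * r ^ k) := by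
    apply summable_pow_mul_geometric_of_norm_lt_one
    rw [Real.norm_eq_abs, abs_of_pos hr0]; exact hr1
  have hsum2 : Summable (fun k : ℕ => ((k : ℝ) + 1) * r ^ k) := by
    have : Summable (fun k : ℕ => r ^ k) := summable_geometric_of_lt_one hr0.le hr1
    simpa [add_mul, pow_one] using hsum.add this
  have htend : Filter.Tendsto (fun k : ℕ => ((k : ℝ) + 1) * r ^ k) Filter.atTop (nhds 0) :=
    hsum2.tendsto_atTop_zero
  obtain ⟨C, hC⟩ := htend.bddAbove_range
  refine ⟨max C 1, le_max_right _ _, fun k => ?_⟩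
  have hmem : ((k : ℝ) + 1) * r ^ k ≤ C := hC ⟨k, rfl⟩
  have hrpow : r ^ k = (2 : ℝ) ^ (-( (k:ℝ) * ε)) := by
    rw [hr, ← Real.rpow_natCast ((2:ℝ)^(-ε)) k, ← Real.rpow_mul (by norm_num)]
    ring_nf
  have h2 : (0:ℝ) < (2 : ℝ) ^ ((k:ℝ) * ε) := Real.rpow_pos_of_pos two_pos _
  have := mul_le_mul_of_nonneg_right hmem h2.le
  rw [mul_assoc, hrpow, ← Real.rpow_add two_pos, neg_add_cancel, Real.rpow_zero, mul_one] at this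
  calc (k + 1 : ℝ) ≤ C * (2:ℝ) ^ ((k:ℝ)*ε) := this
    _ ≤ max C 1 * (2:ℝ) ^ ((k:ℝ)*ε) := by
        exact mul_le_mul_of_nonneg_right (le_max_left _ _) h2.le

lemma tau_bound (ε : ℝ) (hε : 0 < ε) :
    ∃ C : ℝ, 1 ≤ C ∧ ∀ n : ℕ, n ≠ 0 → (n.divisors.card : ℝ) ≤ C * (n : ℝ) ^ ε := by
  obtain ⟨C₀, hC₀1, hC₀⟩ := aux_growth ε hε
  set B : ℕ := ⌈(2 : ℝ) ^ (1 / ε)⌉₊ with hB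
  refine ⟨C₀ ^ B, one_le_pow₀ hC₀1, fun n hn => ?_⟩
  have hcard : (n.divisors.card : ℝ) =
      ∏ p ∈ n.primeFactors, ((n.factorization p : ℝ) + 1) := by
    rw [Nat.card_divisors hn]
    push_cast
    rfl
  -- per-prime bound
  have key : ∀ p ∈ n.primeFactors,
      ((n.factorization p : ℝ) + 1) ≤
        (if (p : ℝ) ^ ε < 2 then C₀ else 1) * ((p : ℝ) ^ (n.factorization p : ℕ) : ℝ) ^ ε := by
    intro p hp
    have hp2 : 2 ≤ p := (Nat.prime_of_mem_primeFactors hp).two_le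
    have hppos : (0:ℝ) < p := by positivity
    set k := n.factorization p
    have hrw : (((p:ℝ) ^ k) : ℝ) ^ ε = ((p:ℝ) ^ ε) ^ (k : ℕ) := by
      rw [← Real.rpow_natCast (p:ℝ) k, ← Real.rpow_mul hppos.le, mul_comm,
        Real.rpow_mul hppos.le, Real.rpow_natCast]
    rw [hrw]
    by_cases hcase : (p : ℝ) ^ ε < 2
    · rw [if_pos hcase]
      have h1 : ((k:ℝ) + 1) ≤ C₀ * (2:ℝ) ^ ((k:ℝ) * ε) := hC₀ k
      have h2 : (2:ℝ) ^ ((k:ℝ) * ε) ≤ ((p:ℝ) ^ ε) ^ (k:ℕ) := by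
        rw [mul_comm, Real.rpow_mul (by norm_num), Real.rpow_natCast]
        apply pow_le_pow_left₀ (by positivity)
        exact Real.rpow_le_rpow (by norm_num) (by exact_mod_cast hp2) hε.le
      calc ((k:ℝ) + 1) ≤ C₀ * (2:ℝ) ^ ((k:ℝ)*ε) := h1
        _ ≤ C₀ * ((p:ℝ)^ε)^(k:ℕ) := by
            exact mul_le_mul_of_nonneg_left h2 (le_trans one_pos.le hC₀1)
    · rw [if_neg hcase, one_mul]
      push_neg at hcase
      calc ((k:ℝ) + 1) ≤ (2:ℝ) ^ (k:ℕ) := by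
            exact_mod_cast Nat.succ_le_of_lt (Nat.lt_two_pow_self (n := k))
        _ ≤ ((p:ℝ)^ε)^(k:ℕ) := pow_le_pow_left₀ (by norm_num) hcase _
  -- assemble
  have hfac : ∏ p ∈ n.primeFactors, ((p:ℝ) ^ (n.factorization p : ℕ)) = (n:ℝ) := by
    have h := Nat.factorization_prod_pow_eq_self hn
    rw [Nat.factorization, Finsupp.prod] at h
    exact_mod_cast congrArg (Nat.cast : ℕ → ℝ) h
  have step1 : (n.divisors.card : ℝ) ≤
      ∏ p ∈ n.primeFactors,
        ((if (p : ℝ) ^ ε < 2 then C₀ else 1) * ((p : ℝ) ^ (n.factorization p : ℕ)) ^ ε) := by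
    rw [hcard]
    apply Finset.prod_le_prod
    · intro p hp; positivity
    · exact key
  rw [Finset.prod_mul_distrib] at step1
  have step2 : ∏ p ∈ n.primeFactors, ((p : ℝ) ^ (n.factorization p : ℕ)) ^ ε
      = (n:ℝ) ^ ε := by
    rw [Real.finset_prod_rpow _ _ (fun p _ => by positivity) ε, hfac]
  have step3 : ∏ p ∈ n.primeFactors, (if (p : ℝ) ^ ε < 2 then C₀ else 1) ≤ C₀ ^ B := by
    rw [Finset.prod_ite, Finset.prod_const, Finset.prod_const, one_pow, mul_one]
    apply pow_le_pow_right₀ hC₀1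
    have hsub : n.primeFactors.filter (fun p : ℕ => (p:ℝ) ^ ε < 2) ⊆ Finset.Icc 1 B := by
      intro p hp
      rw [Finset.mem_filter] at hp
      obtain ⟨hp1, hp2⟩ := hp
      have hprime := Nat.prime_of_mem_primeFactors hp1
      rw [Finset.mem_Icc]
      refine ⟨hprime.one_lt.le, ?_⟩
      -- p < 2^(1/ε)
      have hplt : (p:ℝ) < (2:ℝ) ^ (1/ε) := by
        have h1 : ((p:ℝ) ^ ε) ^ (1/ε) < (2:ℝ) ^ (1/ε) :=
          Real.rpow_lt_rpow (by positivity) hp2 (by positivity)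
        rwa [← Real.rpow_mul (by positivity), mul_one_div, div_self hε.ne', Real.rpow_one] at h1
      have : (p:ℝ) ≤ (B:ℝ) := le_trans hplt.le (Nat.le_ceil _)
      exact_mod_cast this
    calc (n.primeFactors.filter (fun p : ℕ => (p:ℝ) ^ ε < 2)).card
        ≤ (Finset.Icc 1 B).card := Finset.card_le_card hsub
      _ = B := by rw [Nat.card_Icc]; omega
  calc (n.divisors.card : ℝ)
      ≤ (∏ p ∈ n.primeFactors, (if (p : ℝ) ^ ε < 2 then C₀ else 1)) *
        ∏ p ∈ n.primeFactors, ((p : ℝ) ^ (n.factorization p : ℕ)) ^ ε := step1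
    _ ≤ C₀ ^ B * (n:ℝ) ^ ε := by
        rw [step2]
        exact mul_le_mul_of_nonneg_right step3 (by positivity)

lemma resCount (d : ℕ) (hd : 0 < d) (r a b : ℤ) (hab : a ≤ b) :
    (((Finset.Icc a b).filter fun z => (d : ℤ) ∣ z - r).card : ℝ) ≤
      ((b - a : ℤ) : ℝ) / (d : ℝ) + 2 := by
  have hd' : (0:ℤ) < (d:ℤ) := by exact_mod_cast hd
  set lo := (a - r) / (d:ℤ) with hlo
  set hi := (b - r) / (d:ℤ) with hhi
  have hcard : ((Finset.Icc a b).filter fun z => (d : ℤ) ∣ z - r).card ≤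
      (Finset.Icc lo hi).card := by
    apply Finset.card_le_card_of_injOn (fun z => (z - r) / (d:ℤ))
    · intro z hz
      rw [Finset.mem_coe, Finset.mem_filter, Finset.mem_Icc] at hz
      rw [Finset.mem_coe, Finset.mem_Icc]
      exact ⟨Int.ediv_le_ediv hd' (by omega), Int.ediv_le_ediv hd' (by omega)⟩
    · intro z₁ h₁ z₂ h₂ heq
      rw [Finset.mem_coe, Finset.mem_filter] at h₁ h₂
      have e₁ := Int.ediv_mul_cancel h₁.2
      have e₂ := Int.ediv_mul_cancel h₂.2
      have : (z₁ - r) / (d:ℤ) = (z₂ - r) / (d:ℤ) := heq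
      rw [this] at e₁
      omega
  have hrhs0 : (0:ℝ) ≤ ((b - a : ℤ) : ℝ) / (d : ℝ) + 2 := by
    have : (0:ℝ) ≤ ((b - a : ℤ) : ℝ) := by exact_mod_cast sub_nonneg.mpr hab
    positivity
  rcases le_or_gt lo hi with hle | hlt
  · have h1 : hi * (d:ℤ) ≤ b - r := Int.ediv_mul_le (b - r) hd'.ne'
    have h2 : a - r < (lo + 1) * (d:ℤ) := Int.lt_ediv_add_one_mul_self (a - r) hd'
    have hkey : (hi - lo + 1) * (d:ℤ) ≤ (b - a) + 2 * d := by nlinarith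
    have hcast : ((hi - lo + 1 : ℤ) : ℝ) ≤ (((b - a) + 2 * d : ℤ) : ℝ) / (d:ℝ) := by
      rw [le_div_iff₀ (by exact_mod_cast hd)]
      exact_mod_cast hkey
    calc (((Finset.Icc a b).filter fun z => (d : ℤ) ∣ z - r).card : ℝ)
        ≤ ((Finset.Icc lo hi).card : ℝ) := by exact_mod_cast hcard
      _ = ((hi - lo + 1 : ℤ) : ℝ) := by
          rw [Int.card_Icc]
          have : ((hi + 1 - lo).toNat : ℤ) = hi - lo + 1 := by
            rw [Int.toNat_of_nonneg (by omega)]; ring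
          exact_mod_cast congrArg (fun v : ℤ => (v : ℝ)) this
      _ ≤ (((b - a) + 2 * d : ℤ) : ℝ) / (d:ℝ) := hcast
      _ = ((b - a : ℤ) : ℝ) / (d : ℝ) + 2 := by
          push_cast
          field_simp
  · have : (Finset.Icc lo hi).card = 0 := by
      rw [Int.card_Icc]; omega
    calc (((Finset.Icc a b).filter fun z => (d : ℤ) ∣ z - r).card : ℝ)
        ≤ ((Finset.Icc lo hi).card : ℝ) := by exact_mod_cast hcard
      _ = 0 := by rw [this]; norm_num
      _ ≤ _ := hrhs0

lemma sqCongrCount (q : ℕ) (hq : 0 < q) (c a b : ℤ) (hab : a ≤ b) :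
    (((Finset.Icc a b).filter fun z => (q : ℤ) ∣ z ^ 2 - c).card : ℝ) ≤
      2 * (q.divisors.card : ℝ) * (((b - a : ℤ) : ℝ) / Real.sqrt q + 2) := by
  set S := (Finset.Icc a b).filter fun z => (q : ℤ) ∣ z ^ 2 - c with hS
  rcases S.eq_empty_or_nonempty with hemp | ⟨z₀, hz₀⟩
  · rw [hemp]
    have h1 : (0:ℝ) ≤ ((b - a : ℤ) : ℝ) / Real.sqrt q + 2 := by
      have : (0:ℝ) ≤ ((b - a : ℤ) : ℝ) := by exact_mod_cast sub_nonneg.mpr hab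
      positivity
    simp only [Finset.card_empty, Nat.cast_zero]
    positivity
  · have hz₀c : (q:ℤ) ∣ z₀ ^ 2 - c := (Finset.mem_filter.mp hz₀).2
    -- key divisibility facts for any z ∈ S
    have key : ∀ z ∈ S, q ≤ Int.gcd (q:ℤ) (z - z₀) * Int.gcd (q:ℤ) (z + z₀) ∧
        (Int.gcd (q:ℤ) (z - z₀) : ℤ) ∣ (z - z₀) ∧ ((Int.gcd (q:ℤ) (z + z₀) : ℤ)) ∣ (z + z₀) ∧
        Int.gcd (q:ℤ) (z - z₀) ∣ q ∧ Int.gcd (q:ℤ) (z + z₀) ∣ q := by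
      intro z hz
      have hzc : (q:ℤ) ∣ z ^ 2 - c := (Finset.mem_filter.mp hz).2
      have hdvd : (q:ℤ) ∣ (z - z₀) * (z + z₀) := by
        have : (z - z₀) * (z + z₀) = (z ^ 2 - c) - (z₀ ^ 2 - c) := by ring
        rw [this]
        exact dvd_sub hzc hz₀c
      have g1 : Int.gcd (q:ℤ) (z - z₀) ∣ q := by
        have := (Int.gcd_dvd_left _ _ : (Int.gcd (q:ℤ) (z - z₀) : ℤ) ∣ (q:ℤ))
        exact_mod_cast this
      have g2 : Int.gcd (q:ℤ) (z + z₀) ∣ q := by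
        have := (Int.gcd_dvd_left _ _ : (Int.gcd (q:ℤ) (z + z₀) : ℤ) ∣ (q:ℤ))
        exact_mod_cast this
      refine ⟨?_, Int.gcd_dvd_right _ _, Int.gcd_dvd_right _ _, g1, g2⟩
      -- q ∣ d₁ * d₂ via gcd_mul_dvd_mul_gcd
      have hmul : gcd (q:ℤ) ((z - z₀) * (z + z₀)) ∣
          gcd (q:ℤ) (z - z₀) * gcd (q:ℤ) (z + z₀) := gcd_mul_dvd_mul_gcd _ _ _
      have heq : gcd (q:ℤ) ((z - z₀) * (z + z₀)) = (q:ℤ) := by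
        rw [gcd_eq_left_iff (q:ℤ) _ (by simp [Int.normalize_of_nonneg])]
        exact hdvd
      rw [heq] at hmul
      rw [← Int.coe_gcd, ← Int.coe_gcd] at hmul
      have hmul' : (q:ℤ) ∣ ((Int.gcd (q:ℤ) (z - z₀) * Int.gcd (q:ℤ) (z + z₀) : ℕ) : ℤ) := by
        push_cast
        exact hmul
      have hdvd2 : q ∣ Int.gcd (q:ℤ) (z - z₀) * Int.gcd (q:ℤ) (z + z₀) := by
        exact_mod_cast hmul'
      have hpos : 0 < Int.gcd (q:ℤ) (z - z₀) * Int.gcd (q:ℤ) (z + z₀) := by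
        have h1 : 0 < Int.gcd (q:ℤ) (z - z₀) := Int.gcd_pos_iff.mpr (Or.inl (by exact_mod_cast hq.ne'))
        have h2 : 0 < Int.gcd (q:ℤ) (z + z₀) := Int.gcd_pos_iff.mpr (Or.inl (by exact_mod_cast hq.ne'))
        positivity
      exact Nat.le_of_dvd hpos hdvd2
    classical
    set g : ℤ → ℕ × Bool := fun z =>
      if q ≤ Int.gcd (q:ℤ) (z - z₀) * Int.gcd (q:ℤ) (z - z₀) then (Int.gcd (q:ℤ) (z - z₀), true)
      else (Int.gcd (q:ℤ) (z + z₀), false) with hg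
    set T := (q.divisors.filter fun d => q ≤ d * d) ×ˢ ({true, false} : Finset Bool) with hT
    have hmap : ∀ z ∈ S, g z ∈ T := by
      intro z hz
      obtain ⟨hle, hdz1, hdz2, hdq1, hdq2⟩ := key z hz
      rw [hg]
      by_cases hcond : q ≤ Int.gcd (q:ℤ) (z - z₀) * Int.gcd (q:ℤ) (z - z₀)
      · simp only [if_pos hcond, hT, Finset.mem_product, Finset.mem_filter,
          Nat.mem_divisors, Finset.mem_insert, Finset.mem_singleton]
        exact ⟨⟨⟨hdq1, hq.ne'⟩, hcond⟩, Or.inl trivial⟩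
      · simp only [if_neg hcond, hT, Finset.mem_product, Finset.mem_filter,
          Nat.mem_divisors, Finset.mem_insert, Finset.mem_singleton]
        refine ⟨⟨⟨hdq2, hq.ne'⟩, ?_⟩, Or.inr trivial⟩
        push_neg at hcond
        by_contra hcon
        push_neg at hcon
        nlinarith [hle, hcond, hcon]
    have hsum : S.card = ∑ p ∈ T, (S.filter fun z => g z = p).card :=
      Finset.card_eq_sum_card_fiberwise hmap
    have hsqrtpos : 0 < Real.sqrt q := Real.sqrt_pos.mpr (by exact_mod_cast hq)
    have hbnonneg : (0:ℝ) ≤ ((b - a : ℤ) : ℝ) := by exact_mod_cast sub_nonneg.mpr hab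
    have hfib : ∀ p ∈ T, ((S.filter fun z => g z = p).card : ℝ) ≤
        ((b - a : ℤ) : ℝ) / Real.sqrt q + 2 := by
      rintro ⟨t₁, t₂⟩ hp
      rw [hT, Finset.mem_product, Finset.mem_filter, Nat.mem_divisors] at hp
      obtain ⟨⟨⟨ht₁q, _⟩, ht₁sq⟩, _⟩ := hp
      have ht₁pos : 0 < t₁ := Nat.pos_of_dvd_of_pos ht₁q hq
      have ht₁sqrt : Real.sqrt q ≤ (t₁ : ℝ) := by
        have h1 : Real.sqrt (q:ℝ) ≤ Real.sqrt ((t₁:ℝ) * (t₁:ℝ)) :=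
          Real.sqrt_le_sqrt (by exact_mod_cast ht₁sq)
        rwa [Real.sqrt_mul_self (by positivity)] at h1
      set r : ℤ := if t₂ then z₀ else -z₀ with hr
      have hsub : (S.filter fun z => g z = (t₁, t₂)) ⊆
          (Finset.Icc a b).filter fun z => (t₁ : ℤ) ∣ z - r := by
        intro z hz
        rw [Finset.mem_filter] at hz
        obtain ⟨hzS, hzg⟩ := hz
        have hzIcc := (Finset.mem_filter.mp hzS).1
        rw [Finset.mem_filter]
        refine ⟨hzIcc, ?_⟩
        simp only [hg] at hzg
        by_cases hcond : q ≤ Int.gcd (q:ℤ) (z - z₀) * Int.gcd (q:ℤ) (z - z₀)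
        · rw [if_pos hcond] at hzg
          have h1 : Int.gcd (q:ℤ) (z - z₀) = t₁ := (Prod.mk.injEq _ _ _ _ ▸ hzg).1
          have h2 : t₂ = true := ((Prod.mk.injEq _ _ _ _ ▸ hzg).2).symm
          rw [hr, if_pos (by rw [h2])]
          rw [← h1]
          exact Int.gcd_dvd_right _ _
        · rw [if_neg hcond] at hzg
          have h1 : Int.gcd (q:ℤ) (z + z₀) = t₁ := (Prod.mk.injEq _ _ _ _ ▸ hzg).1
          have h2 : t₂ = false := ((Prod.mk.injEq _ _ _ _ ▸ hzg).2).symm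
          rw [hr, h2, if_neg (by simp)]
          rw [← h1]
          have : z - -z₀ = z + z₀ := by ring
          rw [this]
          exact Int.gcd_dvd_right _ _
      calc ((S.filter fun z => g z = (t₁, t₂)).card : ℝ)
          ≤ (((Finset.Icc a b).filter fun z => (t₁ : ℤ) ∣ z - r).card : ℝ) := by
            exact_mod_cast Finset.card_le_card hsub
        _ ≤ ((b - a : ℤ) : ℝ) / (t₁ : ℝ) + 2 := resCount t₁ ht₁pos r a b hab
        _ ≤ ((b - a : ℤ) : ℝ) / Real.sqrt q + 2 := by
            gcongr
    have hTcard : (T.card : ℝ) ≤ 2 * (q.divisors.card : ℝ) := by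
      rw [hT, Finset.card_product]
      have h1 : (q.divisors.filter fun d => q ≤ d * d).card ≤ q.divisors.card :=
        Finset.card_le_card (Finset.filter_subset _ _)
      have h2 : ({true, false} : Finset Bool).card = 2 := by decide
      rw [h2]
      push_cast
      have h1' : (((q.divisors.filter fun d => q ≤ d * d)).card : ℝ) ≤ (q.divisors.card : ℝ) := by
        exact_mod_cast h1
      linarith
    calc (S.card : ℝ) = ∑ p ∈ T, ((S.filter fun z => g z = p).card : ℝ) := by
          rw [hsum]; push_cast; rfl
      _ ≤ ∑ p ∈ T, (((b - a : ℤ) : ℝ) / Real.sqrt q + 2) := Finset.sum_le_sum hfib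
      _ = (T.card : ℝ) * (((b - a : ℤ) : ℝ) / Real.sqrt q + 2) := by
          rw [Finset.sum_const, nsmul_eq_mul]
      _ ≤ 2 * (q.divisors.card : ℝ) * (((b - a : ℤ) : ℝ) / Real.sqrt q + 2) := by
          have hpos : (0:ℝ) ≤ ((b - a : ℤ) : ℝ) / Real.sqrt q + 2 := by positivity
          exact mul_le_mul_of_nonneg_right hTcard hpos

-- Z-set: z in [-P,P] with q | z^2-c and |z^2-c| <= q*P, q = |x|
lemma Zsmall (P : ℕ) (hP : 1 ≤ P) (q : ℕ) (hq : 0 < q) (c : ℤ) :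
    ((((Finset.Icc (-(P:ℤ)) P)).filter
        fun z => ((q:ℤ) ∣ z^2 - c ∧ |z^2 - c| ≤ (q:ℤ) * P)).card : ℝ) ≤
      4 * (q.divisors.card : ℝ) * (2 * Real.sqrt (2*P) + 2) := by
  set Z := ((Finset.Icc (-(P:ℤ)) P)).filter
        fun z => ((q:ℤ) ∣ z^2 - c ∧ |z^2 - c| ≤ (q:ℤ) * P) with hZ
  rcases Z.eq_empty_or_nonempty with hemp | ⟨z₀, hz₀⟩
  · rw [hemp]; simp only [Finset.card_empty, Nat.cast_zero]; positivity
  · obtain ⟨hz₀I, hz₀c, hz₀s⟩ := Finset.mem_filter.mp hz₀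
    set s : ℕ := Nat.sqrt (2 * (q * P)) with hs
    have hkey : ∀ z ∈ Z, (z - z₀).natAbs ≤ s ∨ (z + z₀).natAbs ≤ s := by
      intro z hz
      obtain ⟨hzI, hzc, hzs⟩ := Finset.mem_filter.mp hz
      by_contra hcon
      push_neg at hcon
      obtain ⟨h1, h2⟩ := hcon
      have hprod : (z - z₀).natAbs * (z + z₀).natAbs = (z^2 - z₀^2).natAbs := by
        rw [← Int.natAbs_mul]; congr 1; ring
      have hle : (z^2 - z₀^2).natAbs ≤ 2 * (q * P) := by
        have : |z^2 - z₀^2| ≤ 2 * ((q:ℤ) * P) := by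
          calc |z^2 - z₀^2| = |(z^2 - c) - (z₀^2 - c)| := by ring_nf
            _ ≤ |z^2 - c| + |z₀^2 - c| := abs_sub _ _
            _ ≤ 2 * ((q:ℤ) * P) := by linarith
        rw [Int.abs_eq_natAbs] at this
        exact_mod_cast this
      have hlt : 2 * (q * P) < (s + 1) * (s + 1) := by
        have := Nat.lt_succ_sqrt' (2 * (q * P))
        rw [Nat.succ_eq_add_one, pow_two] at this
        exact this
      have : (s+1) * (s+1) ≤ (z - z₀).natAbs * (z + z₀).natAbs :=
        Nat.mul_le_mul (by omega) (by omega)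
      omega
    have hsub : Z ⊆ ((Finset.Icc (z₀ - s) (z₀ + s)).filter fun z => (q:ℤ) ∣ z^2 - c) ∪
        ((Finset.Icc (-z₀ - s) (-z₀ + s)).filter fun z => (q:ℤ) ∣ z^2 - c) := by
      intro z hz
      obtain ⟨hzI, hzc, hzs⟩ := Finset.mem_filter.mp hz
      rcases hkey z hz with h | h
      · apply Finset.mem_union_left
        rw [Finset.mem_filter, Finset.mem_Icc]
        refine ⟨⟨?_, ?_⟩, hzc⟩ <;> omega
      · apply Finset.mem_union_right
        rw [Finset.mem_filter, Finset.mem_Icc]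
        refine ⟨⟨?_, ?_⟩, hzc⟩ <;> omega
    have hsqrtq : (0:ℝ) < Real.sqrt q := Real.sqrt_pos.mpr (by exact_mod_cast hq)
    have hsreal : (s : ℝ) ≤ Real.sqrt q * Real.sqrt (2*P) := by
      have h1 : (s:ℝ) ≤ Real.sqrt ((2 * (q * P) : ℕ) : ℝ) := Real.nat_sqrt_le_real_sqrt
      calc (s:ℝ) ≤ Real.sqrt ((2 * (q * P) : ℕ) : ℝ) := h1
        _ = Real.sqrt ((q : ℝ) * (2 * P)) := by congr 1; push_cast; ring
        _ = Real.sqrt q * Real.sqrt (2*P) := Real.sqrt_mul (by positivity) _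
    have hcount : ∀ r : ℤ, (((Finset.Icc (r - s) (r + s)).filter
        fun z => (q:ℤ) ∣ z^2 - c).card : ℝ) ≤
          2 * (q.divisors.card : ℝ) * (2 * Real.sqrt (2*P) + 2) := by
      intro r
      have h := sqCongrCount q hq c (r - s) (r + s) (by omega)
      have hba : ((r + s - (r - s) : ℤ) : ℝ) = 2 * s := by push_cast; ring
      rw [hba] at h
      refine h.trans ?_
      have : (2 * (s:ℝ)) / Real.sqrt q ≤ 2 * Real.sqrt (2*P) := by
        rw [div_le_iff₀ hsqrtq]
        calc 2 * (s:ℝ) ≤ 2 * (Real.sqrt q * Real.sqrt (2*P)) := by linarith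
          _ = 2 * Real.sqrt (2*P) * Real.sqrt q := by ring
      have hτ : (0:ℝ) ≤ 2 * (q.divisors.card : ℝ) := by positivity
      apply mul_le_mul_of_nonneg_left _ hτ
      linarith
    calc (Z.card : ℝ)
        ≤ ((((Finset.Icc (z₀ - s) (z₀ + s)).filter fun z => (q:ℤ) ∣ z^2 - c) ∪
          ((Finset.Icc (-z₀ - s) (-z₀ + s)).filter fun z => (q:ℤ) ∣ z^2 - c)).card : ℝ) := by
          exact_mod_cast Finset.card_le_card hsub
      _ ≤ (((Finset.Icc (z₀ - s) (z₀ + s)).filter fun z => (q:ℤ) ∣ z^2 - c).card : ℝ) +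
          (((Finset.Icc (-z₀ - s) (-z₀ + s)).filter fun z => (q:ℤ) ∣ z^2 - c).card : ℝ) := by
          exact_mod_cast Finset.card_union_le _ _
      _ ≤ 2 * (q.divisors.card : ℝ) * (2 * Real.sqrt (2*P) + 2) +
          2 * (q.divisors.card : ℝ) * (2 * Real.sqrt (2*P) + 2) := by
          have h1 := hcount z₀
          have h2 := hcount (-z₀)
          linarith
      _ = 4 * (q.divisors.card : ℝ) * (2 * Real.sqrt (2*P) + 2) := by ring

-- fiber over (x,w) injects into the z-set
lemma fiber_core (A N : ℤ) (P : ℕ) (x w : ℤ) (hx : x ≠ 0)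
    (F : Finset (ℤ × ℤ × ℤ × ℤ))
    (hF : ∀ t ∈ F, t.1 = x ∧ t.2.2.2 = w ∧
      t.2.1 ∈ Finset.Icc (-(P:ℤ)) P ∧ t.2.2.1 ∈ Finset.Icc (-(P:ℤ)) P ∧
      t.1 * (t.1 * t.2.1 + t.2.2.1 ^ 2) + A * t.2.2.2 ^ 3 = N) :
    F.card ≤ (((Finset.Icc (-(P:ℤ)) P)).filter
        fun z => ((x.natAbs : ℤ) ∣ z^2 - ((N - A * w^3) / x) ∧
          |z^2 - ((N - A * w^3) / x)| ≤ (x.natAbs : ℤ) * P)).card := by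
  set c : ℤ := (N - A * w^3) / x with hc
  apply Finset.card_le_card_of_injOn (fun t => t.2.2.1)
  · intro t ht
    obtain ⟨htx, htw, hty, htz, hteq⟩ := hF t ht
    obtain ⟨x', y, z, w'⟩ := t
    simp only at htx htw hty htz hteq ⊢
    subst htx htw
    have hM : x' * (x' * y + z^2) = N - A * w'^3 := by linarith
    have hceq : c = x' * y + z^2 := by
      rw [hc, ← hM, Int.mul_ediv_cancel_left _ hx]
    rw [Finset.mem_coe, Finset.mem_filter]
    refine ⟨htz, ?_, ?_⟩
    · rw [hceq]
      have : z^2 - (x' * y + z^2) = x' * (-y) := by ring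
      rw [this]
      exact Int.natAbs_dvd.mpr ⟨-y, rfl⟩
    · rw [hceq]
      have h1 : z^2 - (x' * y + z^2) = x' * (-y) := by ring
      rw [h1, abs_mul, abs_neg]
      rw [Finset.mem_Icc] at hty
      have : |y| ≤ (P:ℤ) := abs_le.mpr ⟨hty.1, hty.2⟩
      calc |x'| * |y| ≤ |x'| * P := by
            exact mul_le_mul_of_nonneg_left this (abs_nonneg x')
        _ = (x'.natAbs : ℤ) * P := by rw [Int.abs_eq_natAbs]
  · rintro ⟨x₁, y₁, z₁, w₁⟩ h₁ ⟨x₂, y₂, z₂, w₂⟩ h₂ heq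
    simp only [Finset.mem_coe] at h₁ h₂
    obtain ⟨e1, e2, -, -, eq1⟩ := hF _ h₁
    obtain ⟨f1, f2, -, -, eq2⟩ := hF _ h₂
    simp only at e1 e2 f1 f2 eq1 eq2 heq
    subst heq
    rw [← f1] at e1
    rw [← f2] at e2
    subst e1 e2
    have hx1 : x₁ ≠ 0 := by rwa [f1]
    have h0 : x₁ * (x₁ * y₁ + z₁^2) = x₁ * (x₁ * y₂ + z₁^2) := by linarith
    have h3 := mul_left_cancel₀ hx1 h0
    have h4 : x₁ * y₁ = x₁ * y₂ := by linarith
    have h5 := mul_left_cancel₀ hx1 h4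
    simp [h5]

/-- For fixed `A ≠ 0`, uniformly in `N`, the number of quadruples `(x,y,z,w)` in
`[-P,P]⁴` with `x(xy+z²) ≠ 0` and `x(xy+z²) + A w³ = N` is `O(P^(11/6+ε))`. -/
theorem count_quadruple_solutions (A : ℤ) (hA : A ≠ 0) :
    ∀ ε : ℝ, 0 < ε → ∃ C : ℝ, 0 < C ∧ ∀ P : ℕ, 1 ≤ P → ∀ N : ℤ,
      ((Finset.filter
          (fun t : ℤ × ℤ × ℤ × ℤ =>
            t.1 * (t.1 * t.2.1 + t.2.2.1 ^ 2) ≠ 0 ∧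
              t.1 * (t.1 * t.2.1 + t.2.2.1 ^ 2) + A * t.2.2.2 ^ 3 = N)
          (Finset.Icc (-(P : ℤ)) P ×ˢ Finset.Icc (-(P : ℤ)) P
            ×ˢ Finset.Icc (-(P : ℤ)) P ×ˢ Finset.Icc (-(P : ℤ)) P)).card : ℝ)
        ≤ C * (P : ℝ) ^ ((11 : ℝ) / 6 + ε) := by
  intro ε hε
  classical
  set ε' : ℝ := min (ε / 4) 1 with hε'def
  have hε' : 0 < ε' := lt_min (by linarith) one_pos
  have hε'le : 4 * ε' ≤ ε := by
    have := min_le_left (ε/4) 1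
    simp only [hε'def]
    nlinarith [min_le_left (ε/4) (1:ℝ)]
  have hε'1 : ε' ≤ 1 := min_le_right _ _
  obtain ⟨C₁, hC₁, hτ⟩ := tau_bound ε' hε'
  refine ⟨300 * C₁ ^ 2, by positivity, fun P hP N => ?_⟩
  set B : Finset ℤ := Finset.Icc (-(P:ℤ)) P with hB
  set S : Finset (ℤ × ℤ × ℤ × ℤ) := Finset.filter
      (fun t : ℤ × ℤ × ℤ × ℤ =>
        t.1 * (t.1 * t.2.1 + t.2.2.1 ^ 2) ≠ 0 ∧
          t.1 * (t.1 * t.2.1 + t.2.2.1 ^ 2) + A * t.2.2.2 ^ 3 = N)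
      (B ×ˢ B ×ˢ B ×ˢ B) with hS
  have hPpos : (0:ℝ) < P := by exact_mod_cast hP
  have hP1 : (1:ℝ) ≤ P := by exact_mod_cast hP
  have hunpack : ∀ t ∈ S, t.1 ∈ B ∧ t.2.1 ∈ B ∧ t.2.2.1 ∈ B ∧ t.2.2.2 ∈ B ∧
      t.1 * (t.1 * t.2.1 + t.2.2.1 ^ 2) ≠ 0 ∧
      t.1 * (t.1 * t.2.1 + t.2.2.1 ^ 2) + A * t.2.2.2 ^ 3 = N := by
    intro t ht
    rw [hS, Finset.mem_filter, Finset.mem_product, Finset.mem_product,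
      Finset.mem_product] at ht
    exact ⟨ht.1.1, ht.1.2.1, ht.1.2.2.1, ht.1.2.2.2, ht.2.1, ht.2.2⟩
  set S₁ := S.filter (fun t => t.1.natAbs ^ 3 ≤ P) with hS₁
  set S₂ := S.filter (fun t => ¬ (t.1.natAbs ^ 3 ≤ P)) with hS₂
  have hsplit : S.card = S₁.card + S₂.card :=
    (Finset.card_filter_add_card_filter_not _).symm
  -- rpow facts
  have hrmono : ∀ a b : ℝ, a ≤ b → (P:ℝ) ^ a ≤ (P:ℝ) ^ b :=
    fun a b hab => Real.rpow_le_rpow_of_exponent_le hP1 hab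
  have hsqrtP : Real.sqrt P = (P:ℝ) ^ ((1:ℝ)/2) := Real.sqrt_eq_rpow _
  have hPge1rpow : ∀ a : ℝ, 0 ≤ a → 1 ≤ (P:ℝ) ^ a :=
    fun a ha => Real.one_le_rpow hP1 ha
  ----------------------------------------------------------------
  -- Part 1 : small x
  set K : ℕ := ⌊(P:ℝ) ^ ((1:ℝ)/3)⌋₊ with hK
  have hKP13 : (K:ℝ) ≤ (P:ℝ) ^ ((1:ℝ)/3) := Nat.floor_le (by positivity)
  have hcube : ((P:ℝ) ^ ((1:ℝ)/3)) ^ (3:ℕ) = (P:ℝ) := by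
    rw [← Real.rpow_natCast ((P:ℝ) ^ ((1:ℝ)/3)) 3, ← Real.rpow_mul hPpos.le]
    norm_num
  set T₁ : Finset (ℤ × ℤ) := (Finset.Icc (-(K:ℤ)) K) ×ˢ B with hT₁
  have hmap1 : ∀ t ∈ S₁, (t.1, t.2.2.2) ∈ T₁ := by
    intro t ht
    rw [hS₁, Finset.mem_filter] at ht
    obtain ⟨htS, htx3⟩ := ht
    obtain ⟨hx, -, -, hw, -, -⟩ := hunpack t htS
    rw [hT₁, Finset.mem_product]
    refine ⟨?_, hw⟩
    have h1 : ((t.1.natAbs : ℝ)) ^ (3:ℕ) ≤ (P:ℝ) := by exact_mod_cast htx3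
    have h2 : (t.1.natAbs : ℝ) ≤ (P:ℝ) ^ ((1:ℝ)/3) := by
      refine (pow_le_pow_iff_left₀ (by positivity) (by positivity) (three_ne_zero)).mp ?_
      rw [hcube]
      exact h1
    have h3 : t.1.natAbs ≤ K := Nat.le_floor h2
    rw [Finset.mem_Icc]
    omega
  have hcard1 : (S₁.card : ℝ) ≤ (T₁.card : ℝ) *
      (4 * (C₁ * (P:ℝ) ^ ε') * (2 * Real.sqrt (2*P) + 2)) := by
    have hfibsum := Finset.card_eq_sum_card_fiberwise hmap1
    have hfib : ∀ p ∈ T₁, ((S₁.filter fun t => (t.1, t.2.2.2) = p).card : ℝ) ≤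
        4 * (C₁ * (P:ℝ) ^ ε') * (2 * Real.sqrt (2*P) + 2) := by
      rintro ⟨x, w⟩ hp
      rw [hT₁, Finset.mem_product, Finset.mem_Icc] at hp
      by_cases hx : x = 0
      · have : (S₁.filter fun t => (t.1, t.2.2.2) = (x, w)) = ∅ := by
          rw [Finset.eq_empty_iff_forall_notMem]
          intro t ht
          rw [Finset.mem_filter] at ht
          obtain ⟨htS₁, hteq⟩ := ht
          have h1 : t.1 = x := (Prod.mk.injEq _ _ _ _ ▸ hteq).1
          obtain ⟨-, -, -, -, hne, -⟩ := hunpack t (Finset.mem_of_mem_filter t htS₁)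
          rw [h1, hx] at hne
          simp at hne
        rw [this]
        simp only [Finset.card_empty, Nat.cast_zero]
        positivity
      · -- nonzero x
        set F := S₁.filter fun t => (t.1, t.2.2.2) = (x, w) with hF
        have hFh : ∀ t ∈ F, t.1 = x ∧ t.2.2.2 = w ∧
            t.2.1 ∈ Finset.Icc (-(P:ℤ)) P ∧ t.2.2.1 ∈ Finset.Icc (-(P:ℤ)) P ∧
            t.1 * (t.1 * t.2.1 + t.2.2.1 ^ 2) + A * t.2.2.2 ^ 3 = N := by
          intro t ht
          rw [hF, Finset.mem_filter] at ht
          obtain ⟨htS₁, hteq⟩ := ht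
          obtain ⟨-, hy, hz, -, -, heq⟩ := hunpack t (Finset.mem_of_mem_filter t htS₁)
          exact ⟨(Prod.mk.injEq _ _ _ _ ▸ hteq).1, (Prod.mk.injEq _ _ _ _ ▸ hteq).2,
            hy, hz, heq⟩
        have h1 := fiber_core A N P x w hx F hFh
        have hq : 0 < x.natAbs := Int.natAbs_pos.mpr hx
        have h2 := Zsmall P hP x.natAbs hq ((N - A * w^3) / x)
        -- tau bound : x.natAbs ≤ K ≤ P
        have hxK : x.natAbs ≤ K := by
          rcases hp with ⟨⟨hl, hr⟩, -⟩
          omega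
        have hKle : (K:ℝ) ≤ (P:ℝ) := by
          calc (K:ℝ) ≤ (P:ℝ) ^ ((1:ℝ)/3) := hKP13
            _ ≤ (P:ℝ) ^ (1:ℝ) := hrmono _ _ (by norm_num)
            _ = (P:ℝ) := Real.rpow_one _
        have hτx : ((x.natAbs.divisors.card : ℝ)) ≤ C₁ * (P:ℝ) ^ ε' := by
          calc ((x.natAbs.divisors.card : ℝ)) ≤ C₁ * (x.natAbs:ℝ) ^ ε' :=
              hτ _ hq.ne'
            _ ≤ C₁ * (P:ℝ) ^ ε' := by
              apply mul_le_mul_of_nonneg_left _ (by linarith)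
              apply Real.rpow_le_rpow (by positivity) _ hε'.le
              calc ((x.natAbs : ℝ)) ≤ (K:ℝ) := by exact_mod_cast hxK
                _ ≤ (P:ℝ) := hKle
        calc (F.card : ℝ) ≤ _ := by exact_mod_cast h1
          _ ≤ 4 * (x.natAbs.divisors.card : ℝ) * (2 * Real.sqrt (2*P) + 2) := h2
          _ ≤ 4 * (C₁ * (P:ℝ) ^ ε') * (2 * Real.sqrt (2*P) + 2) := by
              have hs2 : (0:ℝ) ≤ 2 * Real.sqrt (2*P) + 2 := by positivity
              nlinarith [hs2, hτx]
    calc (S₁.card : ℝ) = ∑ p ∈ T₁, ((S₁.filter fun t => (t.1, t.2.2.2) = p).card : ℝ) := by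
          rw [hfibsum]; push_cast; rfl
      _ ≤ ∑ p ∈ T₁, (4 * (C₁ * (P:ℝ) ^ ε') * (2 * Real.sqrt (2*P) + 2)) :=
          Finset.sum_le_sum hfib
      _ = (T₁.card : ℝ) * _ := by rw [Finset.sum_const, nsmul_eq_mul]
  ----------------------------------------------------------------
  -- Part 2 : large x
  set Bx : ℝ := 2 * (C₁ * (P:ℝ) ^ ε') * (2 * (P:ℝ) ^ ((5:ℝ)/6) + 2) with hBx
  have hBxpos : 0 ≤ Bx := by rw [hBx]; positivity
  set bound2 : ℝ := (4 * C₁ * (P:ℝ) ^ (3*ε')) * Bx with hbound2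
  have hbound2pos : 0 ≤ bound2 := by rw [hbound2]; positivity
  have hcard2 : (S₂.card : ℝ) ≤ (B.card : ℝ) * bound2 := by
    have hmap2 : ∀ t ∈ S₂, t.2.2.2 ∈ B := fun t ht =>
      (hunpack t (Finset.mem_of_mem_filter t ht)).2.2.2.1
    have hfibsum := Finset.card_eq_sum_card_fiberwise hmap2
    have hfib : ∀ w ∈ B, ((S₂.filter fun t => t.2.2.2 = w).card : ℝ) ≤ bound2 := by
      intro w hw
      set Fw := S₂.filter fun t => t.2.2.2 = w with hFw
      rcases Fw.eq_empty_or_nonempty with hemp | ⟨t₀, ht₀⟩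
      · rw [hemp]
        simp only [Finset.card_empty, Nat.cast_zero]
        exact hbound2pos
      · set M : ℤ := N - A * w^3 with hM
        obtain ⟨ht₀S₂, ht₀w⟩ := Finset.mem_filter.mp ht₀
        obtain ⟨hx₀, hy₀, hz₀, -, hne₀, heq₀⟩ :=
          hunpack t₀ (Finset.mem_of_mem_filter t₀ ht₀S₂)
        have hMeq : t₀.1 * (t₀.1 * t₀.2.1 + t₀.2.2.1^2) = M := by
          rw [hM, ← ht₀w]; linarith
        have hMne : M ≠ 0 := hMeq ▸ hne₀
        have hMabs : M.natAbs ≤ 2 * P^3 := by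
          rw [hB, Finset.mem_Icc] at hx₀ hy₀ hz₀
          have habsx : |t₀.1| ≤ (P:ℤ) := abs_le.mpr ⟨hx₀.1, hx₀.2⟩
          have habsy : |t₀.2.1| ≤ (P:ℤ) := abs_le.mpr ⟨hy₀.1, hy₀.2⟩
          have habsz : |t₀.2.2.1| ≤ (P:ℤ) := abs_le.mpr ⟨hz₀.1, hz₀.2⟩
          have h1 : |M| ≤ 2 * (P:ℤ)^3 := by
            rw [← hMeq, abs_mul]
            have hb : |t₀.1 * t₀.2.1 + t₀.2.2.1^2| ≤ 2 * (P:ℤ)^2 := by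
              calc |t₀.1 * t₀.2.1 + t₀.2.2.1^2|
                  ≤ |t₀.1 * t₀.2.1| + |t₀.2.2.1^2| := abs_add_le _ _
                _ = |t₀.1| * |t₀.2.1| + |t₀.2.2.1|^2 := by
                    rw [abs_mul, abs_pow]
                _ ≤ (P:ℤ) * P + (P:ℤ)^2 := by
                    have h2 : |t₀.1| * |t₀.2.1| ≤ (P:ℤ) * P :=
                      mul_le_mul habsx habsy (abs_nonneg _) (by positivity)
                    have h3 : |t₀.2.2.1|^2 ≤ (P:ℤ)^2 :=
                      pow_le_pow_left₀ (abs_nonneg _) habsz 2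
                    linarith
                _ = 2 * (P:ℤ)^2 := by ring
            calc |t₀.1| * |t₀.1 * t₀.2.1 + t₀.2.2.1^2|
                ≤ (P:ℤ) * (2 * (P:ℤ)^2) :=
                  mul_le_mul habsx hb (abs_nonneg _) (by positivity)
              _ = 2 * (P:ℤ)^3 := by ring
          have h2 : ((M.natAbs : ℤ)) ≤ ((2 * P^3 : ℕ) : ℤ) := by
            rw [← Int.abs_eq_natAbs]
            push_cast
            exact_mod_cast h1
          exact_mod_cast h2
        set Tw := (M.natAbs.divisors.image (fun d : ℕ => (d:ℤ))) ∪
          (M.natAbs.divisors.image (fun d : ℕ => -(d:ℤ))) with hTw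
        have hmapx : ∀ t ∈ Fw, t.1 ∈ Tw := by
          intro t ht
          obtain ⟨htS₂, htw⟩ := Finset.mem_filter.mp ht
          obtain ⟨-, -, -, -, hne, heq⟩ := hunpack t (Finset.mem_of_mem_filter t htS₂)
          have hdvd : t.1 ∣ M := ⟨t.1 * t.2.1 + t.2.2.1^2, by rw [hM, ← htw]; linarith⟩
          have hd2 : t.1.natAbs ∣ M.natAbs := Int.natAbs_dvd_natAbs.mpr hdvd
          have hmem : t.1.natAbs ∈ M.natAbs.divisors :=
            Nat.mem_divisors.mpr ⟨hd2, Int.natAbs_ne_zero.mpr hMne⟩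
          rcases Int.natAbs_eq t.1 with h | h
          · exact Finset.mem_union_left _ (Finset.mem_image.mpr ⟨_, hmem, h.symm⟩)
          · exact Finset.mem_union_right _ (Finset.mem_image.mpr ⟨_, hmem, h.symm⟩)
        have hfibsum2 := Finset.card_eq_sum_card_fiberwise hmapx
        have hTwcard : (Tw.card : ℝ) ≤ 2 * (M.natAbs.divisors.card : ℝ) := by
          have h1 := Finset.card_union_le (M.natAbs.divisors.image (fun d : ℕ => (d:ℤ)))
            (M.natAbs.divisors.image (fun d : ℕ => -(d:ℤ)))
          have h2 := Finset.card_image_le (s := M.natAbs.divisors) (f := fun d : ℕ => (d:ℤ))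
          have h3 := Finset.card_image_le (s := M.natAbs.divisors) (f := fun d : ℕ => -(d:ℤ))
          have h4 : ((M.natAbs.divisors.image (fun d : ℕ => (d:ℤ))) ∪
              (M.natAbs.divisors.image (fun d : ℕ => -(d:ℤ)))).card ≤
              2 * M.natAbs.divisors.card := by omega
          rw [hTw]
          exact_mod_cast h4
        have hτM : (M.natAbs.divisors.card : ℝ) ≤ 2 * C₁ * (P:ℝ) ^ (3*ε') := by
          have h1 : (M.natAbs.divisors.card : ℝ) ≤ C₁ * (M.natAbs:ℝ) ^ ε' :=
            hτ _ (Int.natAbs_ne_zero.mpr hMne)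
          have h2 : ((M.natAbs:ℝ)) ^ ε' ≤ ((2 * P^3 : ℕ):ℝ) ^ ε' := by
            apply Real.rpow_le_rpow (by positivity) (by exact_mod_cast hMabs) hε'.le
          have h3 : ((2 * P^3 : ℕ):ℝ) ^ ε' = (2:ℝ)^ε' * ((P:ℝ)^(3:ℕ)) ^ ε' := by
            push_cast
            rw [Real.mul_rpow (by norm_num) (by positivity)]
          have h4 : (2:ℝ)^ε' ≤ 2 := by
            calc (2:ℝ)^ε' ≤ (2:ℝ)^(1:ℝ) :=
                Real.rpow_le_rpow_of_exponent_le (by norm_num) hε'1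
              _ = 2 := Real.rpow_one _
          have h5 : ((P:ℝ)^(3:ℕ)) ^ ε' = (P:ℝ)^(3*ε') := by
            rw [← Real.rpow_natCast (P:ℝ) 3, ← Real.rpow_mul hPpos.le]
            norm_num
          have h6 : (0:ℝ) ≤ ((P:ℝ)^(3:ℕ)) ^ ε' := by positivity
          calc (M.natAbs.divisors.card : ℝ) ≤ C₁ * (M.natAbs:ℝ) ^ ε' := h1
            _ ≤ C₁ * ((2 * P^3 : ℕ):ℝ) ^ ε' := by
                exact mul_le_mul_of_nonneg_left h2 (by linarith)
            _ = C₁ * ((2:ℝ)^ε' * ((P:ℝ)^(3:ℕ)) ^ ε') := by rw [h3]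
            _ ≤ C₁ * (2 * (P:ℝ)^(3*ε')) := by
                rw [h5] at h6 ⊢
                apply mul_le_mul_of_nonneg_left _ (by linarith)
                exact mul_le_mul_of_nonneg_right h4 h6
            _ = 2 * C₁ * (P:ℝ) ^ (3*ε') := by ring
        have hfibx : ∀ x ∈ Tw, ((Fw.filter fun t => t.1 = x).card : ℝ) ≤ Bx := by
          intro x hxTw
          set Fx := Fw.filter (fun t => t.1 = x) with hFx
          rcases Fx.eq_empty_or_nonempty with hemp | ⟨t₁, ht₁⟩
          · rw [hemp]
            simp only [Finset.card_empty, Nat.cast_zero]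
            exact hBxpos
          · obtain ⟨ht₁Fw, ht₁x⟩ := Finset.mem_filter.mp ht₁
            obtain ⟨ht₁S₂, ht₁w⟩ := Finset.mem_filter.mp ht₁Fw
            have ht₁S₂' := ht₁S₂
            rw [hS₂, Finset.mem_filter] at ht₁S₂'
            obtain ⟨ht₁S, ht₁big⟩ := ht₁S₂'
            obtain ⟨ht₁box, -, -, -, hne₁, -⟩ := hunpack t₁ ht₁S
            have hx : x ≠ 0 := by
              intro hcon
              apply hne₁
              rw [ht₁x, hcon]
              ring
            have hq : 0 < x.natAbs := Int.natAbs_pos.mpr hx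
            have hxP : x.natAbs ≤ P := by
              rw [hB, Finset.mem_Icc] at ht₁box
              rw [← ht₁x]
              omega
            have hxbig : P < x.natAbs ^ 3 := by
              rw [← ht₁x]
              exact Nat.lt_of_not_le (by exact ht₁big)
            have hFh : ∀ t ∈ Fx, t.1 = x ∧ t.2.2.2 = w ∧
                t.2.1 ∈ Finset.Icc (-(P:ℤ)) P ∧ t.2.2.1 ∈ Finset.Icc (-(P:ℤ)) P ∧
                t.1 * (t.1 * t.2.1 + t.2.2.1 ^ 2) + A * t.2.2.2 ^ 3 = N := by
              intro t ht
              obtain ⟨htFw, htx⟩ := Finset.mem_filter.mp ht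
              obtain ⟨htS₂, htw⟩ := Finset.mem_filter.mp htFw
              obtain ⟨-, hy, hz, -, -, heq⟩ :=
                hunpack t (Finset.mem_of_mem_filter t htS₂)
              exact ⟨htx, htw, hy, hz, heq⟩
            have h1 := fiber_core A N P x w hx Fx hFh
            set c : ℤ := (N - A * w^3) / x with hc
            have hsub : (((Finset.Icc (-(P:ℤ)) P)).filter
                fun z => ((x.natAbs : ℤ) ∣ z^2 - c ∧
                  |z^2 - c| ≤ (x.natAbs : ℤ) * P)) ⊆
                ((Finset.Icc (-(P:ℤ)) P).filter fun z => (x.natAbs : ℤ) ∣ z^2 - c) := by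
              intro z hz
              rw [Finset.mem_filter] at hz ⊢
              exact ⟨hz.1, hz.2.1⟩
            have h2 := sqCongrCount x.natAbs hq c (-(P:ℤ)) P (by omega)
            have hba : (((P:ℤ) - (-(P:ℤ)) : ℤ) : ℝ) = 2 * P := by push_cast; ring
            rw [hba] at h2
            -- sqrt lower bound
            have hq13 : (P:ℝ) ^ ((1:ℝ)/3) ≤ (x.natAbs : ℝ) := by
              refine (pow_le_pow_iff_left₀ (by positivity) (by positivity)
                (three_ne_zero)).mp ?_
              rw [hcube]
              have : (P:ℝ) < ((x.natAbs:ℝ)) ^ (3:ℕ) := by exact_mod_cast hxbig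
              linarith
            have hsqrt : (P:ℝ) ^ ((1:ℝ)/6) ≤ Real.sqrt (x.natAbs) := by
              have h3 : Real.sqrt ((P:ℝ) ^ ((1:ℝ)/3)) ≤ Real.sqrt (x.natAbs) :=
                Real.sqrt_le_sqrt hq13
              have h4 : Real.sqrt ((P:ℝ) ^ ((1:ℝ)/3)) = (P:ℝ) ^ ((1:ℝ)/6) := by
                rw [Real.sqrt_eq_rpow, ← Real.rpow_mul hPpos.le]
                norm_num
              rwa [h4] at h3
            have hsqrtpos : (0:ℝ) < (P:ℝ) ^ ((1:ℝ)/6) := by positivity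
            have hdivle : 2 * (P:ℝ) / Real.sqrt (x.natAbs) ≤ 2 * (P:ℝ) ^ ((5:ℝ)/6) := by
              calc 2 * (P:ℝ) / Real.sqrt (x.natAbs) ≤ 2 * (P:ℝ) / (P:ℝ) ^ ((1:ℝ)/6) := by
                    apply div_le_div_of_nonneg_left (by positivity) hsqrtpos hsqrt
                _ = 2 * (P:ℝ) ^ ((5:ℝ)/6) := by
                    rw [show (5:ℝ)/6 = 1 - 1/6 by norm_num,
                      Real.rpow_sub hPpos, Real.rpow_one]
                    ring
            have hτx : ((x.natAbs.divisors.card : ℝ)) ≤ C₁ * (P:ℝ) ^ ε' := by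
              calc ((x.natAbs.divisors.card : ℝ)) ≤ C₁ * (x.natAbs:ℝ) ^ ε' := hτ _ hq.ne'
                _ ≤ C₁ * (P:ℝ) ^ ε' := by
                    apply mul_le_mul_of_nonneg_left _ (by linarith)
                    apply Real.rpow_le_rpow (by positivity) (by exact_mod_cast hxP) hε'.le
            calc ((Fx.card : ℕ) : ℝ)
                ≤ ((((Finset.Icc (-(P:ℤ)) P)).filter
                    fun z => ((x.natAbs : ℤ) ∣ z^2 - c ∧
                      |z^2 - c| ≤ (x.natAbs : ℤ) * P)).card : ℝ) := by exact_mod_cast h1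
              _ ≤ (((Finset.Icc (-(P:ℤ)) P).filter
                    fun z => (x.natAbs : ℤ) ∣ z^2 - c).card : ℝ) := by
                  exact_mod_cast Finset.card_le_card hsub
              _ ≤ 2 * (x.natAbs.divisors.card : ℝ) *
                    (2 * (P:ℝ) / Real.sqrt (x.natAbs) + 2) := h2
              _ ≤ 2 * (C₁ * (P:ℝ) ^ ε') * (2 * (P:ℝ) ^ ((5:ℝ)/6) + 2) := by
                  have hnn1 : (0:ℝ) ≤ 2 * (P:ℝ) / Real.sqrt (x.natAbs) + 2 := by positivity
                  have hnn2 : 2 * (P:ℝ) / Real.sqrt (x.natAbs) + 2 ≤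
                      2 * (P:ℝ) ^ ((5:ℝ)/6) + 2 := by linarith
                  have hnn3 : (0:ℝ) ≤ (x.natAbs.divisors.card : ℝ) := Nat.cast_nonneg _
                  nlinarith [hτx, hnn1, hnn2, hnn3]
              _ = Bx := by rw [hBx]
        calc (Fw.card : ℝ) = ∑ x ∈ Tw, ((Fw.filter fun t => t.1 = x).card : ℝ) := by
              rw [hfibsum2]; push_cast; rfl
          _ ≤ ∑ x ∈ Tw, Bx := Finset.sum_le_sum hfibx
          _ = (Tw.card : ℝ) * Bx := by rw [Finset.sum_const, nsmul_eq_mul]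
          _ ≤ (2 * (M.natAbs.divisors.card : ℝ)) * Bx :=
              mul_le_mul_of_nonneg_right hTwcard hBxpos
          _ ≤ (2 * (2 * C₁ * (P:ℝ) ^ (3*ε'))) * Bx := by
              apply mul_le_mul_of_nonneg_right _ hBxpos
              linarith
          _ = bound2 := by rw [hbound2]; ring
    calc (S₂.card : ℝ) = ∑ w ∈ B, ((S₂.filter fun t => t.2.2.2 = w).card : ℝ) := by
          rw [hfibsum]; push_cast; rfl
      _ ≤ ∑ w ∈ B, bound2 := Finset.sum_le_sum hfib
      _ = (B.card : ℝ) * bound2 := by rw [Finset.sum_const, nsmul_eq_mul]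
  ----------------------------------------------------------------
  -- numeric assembly
  have hBcard : (B.card : ℝ) ≤ 3 * (P:ℝ) := by
    have h1 : B.card = 2 * P + 1 := by
      rw [hB, Int.card_Icc]; omega
    rw [h1]; push_cast; linarith
  have hsqP1 : (1:ℝ) ≤ (P:ℝ) ^ ((1:ℝ)/2) := hPge1rpow _ (by norm_num)
  have h13ge1 : (1:ℝ) ≤ (P:ℝ) ^ ((1:ℝ)/3) := hPge1rpow _ (by norm_num)
  have h56ge1 : (1:ℝ) ≤ (P:ℝ) ^ ((5:ℝ)/6) := hPge1rpow _ (by norm_num)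
  have hIccK : ((Finset.Icc (-(K:ℤ)) K).card : ℝ) ≤ 3 * (P:ℝ) ^ ((1:ℝ)/3) := by
    have h2 : (Finset.Icc (-(K:ℤ)) K).card = 2 * K + 1 := by
      rw [Int.card_Icc]; omega
    rw [h2]; push_cast; linarith [hKP13]
  have hT₁card : (T₁.card : ℝ) ≤ (3 * (P:ℝ) ^ ((1:ℝ)/3)) * (3 * (P:ℝ)) := by
    have h1 : T₁.card = (Finset.Icc (-(K:ℤ)) K).card * B.card := by
      rw [hT₁, Finset.card_product]
    rw [h1]
    push_cast
    have hb0 : (0:ℝ) ≤ (B.card : ℝ) := by positivity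
    have ha0 : (0:ℝ) ≤ ((Finset.Icc (-(K:ℤ)) K).card : ℝ) := by positivity
    exact mul_le_mul hIccK hBcard hb0 (by positivity)
  have hsqrt2 : Real.sqrt 2 ≤ 3/2 := by
    nlinarith [Real.sq_sqrt (by norm_num : (0:ℝ) ≤ 2), Real.sqrt_nonneg 2]
  have hsqrtPP : Real.sqrt (2*(P:ℝ)) = Real.sqrt 2 * Real.sqrt (P:ℝ) :=
    Real.sqrt_mul (by norm_num) _
  have hQ : 2 * Real.sqrt (2*(P:ℝ)) + 2 ≤ 5 * (P:ℝ) ^ ((1:ℝ)/2) := by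
    rw [hsqrtPP, hsqrtP]
    have h0 : (0:ℝ) ≤ (P:ℝ) ^ ((1:ℝ)/2) := by positivity
    nlinarith [hsqrt2, hsqP1, Real.sqrt_nonneg (2:ℝ)]
  have hS1fin : (S₁.card : ℝ) ≤ 180 * C₁ * (P:ℝ) ^ (11/6 + ε') := by
    have hQ2 : 4 * (C₁ * (P:ℝ) ^ ε') * (2 * Real.sqrt (2*(P:ℝ)) + 2) ≤
        4 * (C₁ * (P:ℝ) ^ ε') * (5 * (P:ℝ) ^ ((1:ℝ)/2)) := by
      apply mul_le_mul_of_nonneg_left hQ (by positivity)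
    have hmain : (S₁.card : ℝ) ≤ (3 * (P:ℝ) ^ ((1:ℝ)/3)) * (3 * (P:ℝ)) *
        (4 * (C₁ * (P:ℝ) ^ ε') * (5 * (P:ℝ) ^ ((1:ℝ)/2))) := by
      calc (S₁.card : ℝ) ≤ (T₁.card : ℝ) *
          (4 * (C₁ * (P:ℝ) ^ ε') * (2 * Real.sqrt (2*(P:ℝ)) + 2)) := hcard1
        _ ≤ (3 * (P:ℝ) ^ ((1:ℝ)/3)) * (3 * (P:ℝ)) *
            (4 * (C₁ * (P:ℝ) ^ ε') * (5 * (P:ℝ) ^ ((1:ℝ)/2))) := by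
          apply mul_le_mul hT₁card hQ2 (by positivity) (by positivity)
    calc (S₁.card : ℝ) ≤ _ := hmain
      _ = 180 * C₁ * ((P:ℝ) ^ ((1:ℝ)/3) * (P:ℝ) ^ (1:ℝ) * (P:ℝ) ^ ((1:ℝ)/2) *
          (P:ℝ) ^ ε') := by rw [Real.rpow_one]; ring
      _ = 180 * C₁ * (P:ℝ) ^ (11/6 + ε') := by
          rw [← Real.rpow_add hPpos, ← Real.rpow_add hPpos, ← Real.rpow_add hPpos]
          norm_num
  have hS2fin : (S₂.card : ℝ) ≤ 96 * C₁^2 * (P:ℝ) ^ (11/6 + 4*ε') := by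
    have hBx2 : Bx ≤ 2 * (C₁ * (P:ℝ) ^ ε') * (4 * (P:ℝ) ^ ((5:ℝ)/6)) := by
      rw [hBx]
      apply mul_le_mul_of_nonneg_left _ (by positivity)
      linarith
    have hbound2' : bound2 ≤ (4 * C₁ * (P:ℝ) ^ (3*ε')) *
        (2 * (C₁ * (P:ℝ) ^ ε') * (4 * (P:ℝ) ^ ((5:ℝ)/6))) := by
      rw [hbound2]
      apply mul_le_mul_of_nonneg_left hBx2 (by positivity)
    have hmain : (S₂.card : ℝ) ≤ (3 * (P:ℝ)) * ((4 * C₁ * (P:ℝ) ^ (3*ε')) *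
        (2 * (C₁ * (P:ℝ) ^ ε') * (4 * (P:ℝ) ^ ((5:ℝ)/6)))) := by
      calc (S₂.card : ℝ) ≤ (B.card : ℝ) * bound2 := hcard2
        _ ≤ (3 * (P:ℝ)) * ((4 * C₁ * (P:ℝ) ^ (3*ε')) *
            (2 * (C₁ * (P:ℝ) ^ ε') * (4 * (P:ℝ) ^ ((5:ℝ)/6)))) := by
          apply mul_le_mul hBcard hbound2' hbound2pos (by positivity)
    calc (S₂.card : ℝ) ≤ _ := hmain
      _ = 96 * C₁^2 * ((P:ℝ) ^ (1:ℝ) * (P:ℝ) ^ (3*ε') * (P:ℝ) ^ ε' *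
          (P:ℝ) ^ ((5:ℝ)/6)) := by rw [Real.rpow_one]; ring
      _ = 96 * C₁^2 * (P:ℝ) ^ (11/6 + 4*ε') := by
          rw [← Real.rpow_add hPpos, ← Real.rpow_add hPpos, ← Real.rpow_add hPpos]
          congr 1
          ring
  -- conclude
  have hexp1 : (P:ℝ) ^ (11/6 + ε') ≤ (P:ℝ) ^ ((11:ℝ)/6 + ε) := hrmono _ _ (by
    have : ε' ≤ ε/4 := min_le_left _ _
    linarith)
  have hexp2 : (P:ℝ) ^ (11/6 + 4*ε') ≤ (P:ℝ) ^ ((11:ℝ)/6 + ε) := hrmono _ _ (by linarith)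
  have htotal : (S.card : ℝ) = (S₁.card : ℝ) + (S₂.card : ℝ) := by
    exact_mod_cast hsplit
  calc (S.card : ℝ) = (S₁.card : ℝ) + (S₂.card : ℝ) := htotal
    _ ≤ 180 * C₁ * (P:ℝ) ^ ((11:ℝ)/6 + ε) + 96 * C₁^2 * (P:ℝ) ^ ((11:ℝ)/6 + ε) := by
        have h1 := hS1fin.trans (mul_le_mul_of_nonneg_left hexp1 (by positivity))
        have h2 := hS2fin.trans (mul_le_mul_of_nonneg_left hexp2 (by positivity))
        linarith
    _ ≤ 300 * C₁ ^ 2 * (P:ℝ) ^ ((11:ℝ)/6 + ε) := by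
        have hp0 : (0:ℝ) ≤ (P:ℝ) ^ ((11:ℝ)/6 + ε) := by positivity
        have hkey : 0 ≤ (C₁ * (204*C₁ - 180)) * ((P:ℝ) ^ ((11:ℝ)/6 + ε)) := by
          apply mul_nonneg _ hp0
          apply mul_nonneg (by linarith)
          linarith
        nlinarith [hkey]
end

section
/- Let S(q,a) be exponential sums satisfying: |S(q,a)| ≤ q^{9/4+9/4+2/3+1} · C for q coprime to a fixed integer D (coming from factor bounds q^{9/4}, q^{9/4}, q^{2/3}, q), and |S(q,a)| ≤ C·q^{5/2+5/2+2/3+1} in general. Then the singular series 𝔖(N) = ∑_{q≥1} q^{-7} ∑_{a mod q, (a,q)=1} S(q,a) e(−aN/q) converges absolutely, uniformly in N, and its tail beyond Q is O(Q^{−1/3+ε}). -/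
open Complex


/-! ### Auxiliary lemmas -/

lemma rpow_collect3 (x : ℝ) (hx : 0 < x) (C a b c d : ℝ) :
    x ^ a * (x ^ b * (x ^ c * (C * x ^ d))) = C * x ^ (a + b + c + d) := by
  rw [Real.rpow_add hx, Real.rpow_add hx, Real.rpow_add hx]; ring

lemma rpow_collect4 (x : ℝ) (hx : 0 < x) (C₁ C₂ C₃ a b c d : ℝ) :
    x ^ a * ((C₁ * x ^ b) * ((C₂ * x ^ c) * (C₃ * x ^ d))) =
      (C₁ * C₂ * C₃) * x ^ (a + b + c + d) := by
  rw [Real.rpow_add hx, Real.rpow_add hx, Real.rpow_add hx]; ring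

lemma summable_of_maj {γ : Type*} {f : ℕ → ℝ} {g : γ → ℝ}
    (hg : Summable g) (i : ℕ → γ) (hi : Function.Injective i)
    (hf0 : ∀ n, 0 ≤ f n) (hle : ∀ n, f n ≤ g (i n)) : Summable f :=
  Summable.of_nonneg_of_le hf0 hle (hg.comp_injective hi)

lemma prod_primeFactors_pow_factorization {q : ℕ} (hq : q ≠ 0) :
    ∏ p ∈ q.primeFactors, p ^ q.factorization p = q := by
  conv_rhs => rw [← Nat.factorization_prod_pow_eq_self hq]
  rfl

lemma pow_rpow_neg (a : ℝ) (ha : 0 ≤ a) (k : ℕ) (σ : ℝ) :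
    ((a ^ k)) ^ (-σ) = a ^ (-((k : ℝ) * σ)) := by
  rw [← Real.rpow_natCast a k, ← Real.rpow_mul ha]
  ring_nf

/-! ### The `npart` machinery -/

def npart (q : ℕ) (P : ℕ → Prop) [DecidablePred P] : ℕ :=
  ∏ p ∈ q.primeFactors.filter P, p ^ q.factorization p

lemma npart_pos (q : ℕ) (P : ℕ → Prop) [DecidablePred P] : 0 < npart q P := by
  unfold npart
  exact Finset.prod_pos fun p hp =>
    pow_pos (Nat.prime_of_mem_primeFactors (Finset.mem_filter.mp hp).1).pos _

lemma factorization_npart (q : ℕ) (P : ℕ → Prop) [DecidablePred P] (r : ℕ) :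
    (npart q P).factorization r =
      if r ∈ q.primeFactors.filter P then q.factorization r else 0 := by
  unfold npart
  rw [Nat.factorization_prod
    (fun p hp => pow_ne_zero _ (Nat.prime_of_mem_primeFactors (Finset.mem_filter.mp hp).1).pos.ne')]
  have hcongr : ∀ p ∈ q.primeFactors.filter P, (p ^ q.factorization p).factorization
      = Finsupp.single p (q.factorization p) := fun p hp =>
    Nat.Prime.factorization_pow (Nat.prime_of_mem_primeFactors (Finset.mem_filter.mp hp).1)
  rw [Finset.sum_congr rfl hcongr, Finset.sum_apply']
  simp only [Finsupp.single_apply]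
  rw [Finset.sum_ite_eq' (q.primeFactors.filter P) r (fun p => q.factorization p)]

lemma prime_dvd_npart_iff {q r : ℕ} (hr : r.Prime) (P : ℕ → Prop) [DecidablePred P] :
    r ∣ npart q P ↔ r ∈ q.primeFactors ∧ P r := by
  have h1 : r ∣ npart q P ↔ 1 ≤ (npart q P).factorization r := by
    rw [← Nat.Prime.pow_dvd_iff_le_factorization hr (npart_pos q P).ne', pow_one]
  rw [h1, factorization_npart]
  by_cases hmem : r ∈ q.primeFactors.filter P
  · simp only [hmem, if_true]
    have hm := Finset.mem_filter.mp hmem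
    constructor
    · intro _; exact ⟨hm.1, hm.2⟩
    · intro _
      have hsupp : r ∈ q.factorization.support := by
        rw [Nat.support_factorization]; exact hm.1
      exact Nat.one_le_iff_ne_zero.mpr (Finsupp.mem_support_iff.mp hsupp)
  · simp only [hmem, if_false]
    constructor
    · omega
    · intro h; exact absurd (Finset.mem_filter.mpr h) hmem

lemma npart_mul_npart_compl {q : ℕ} (hq : q ≠ 0) (P : ℕ → Prop) [DecidablePred P] :
    npart q P * npart q (fun p => ¬ P p) = q := by
  unfold npart
  rw [Finset.prod_filter_mul_prod_filter_not]
  exact prod_primeFactors_pow_factorization hq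

lemma npart_split (q : ℕ) (P R : ℕ → Prop) [DecidablePred P] [DecidablePred R] :
    npart q (fun p => P p ∧ R p) * npart q (fun p => P p ∧ ¬ R p) = npart q P := by
  unfold npart
  rw [← Finset.filter_filter, ← Finset.filter_filter, Finset.prod_filter_mul_prod_filter_not]

lemma coprime_npart_npart {q₁ q₂ : ℕ} (P R : ℕ → Prop) [DecidablePred P] [DecidablePred R]
    (h : ∀ p, p.Prime → P p → R p → False) : Nat.Coprime (npart q₁ P) (npart q₂ R) := by
  by_contra hc
  obtain ⟨r, hr, h1, h2⟩ := Nat.Prime.not_coprime_iff_dvd.mp hc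
  exact h r hr ((prime_dvd_npart_iff hr P).mp h1).2 ((prime_dvd_npart_iff hr R).mp h2).2

lemma coprime_npart_right {q n : ℕ} (P : ℕ → Prop) [DecidablePred P]
    (h : ∀ p, p.Prime → P p → p ∣ n → False) : Nat.Coprime (npart q P) n := by
  by_contra hc
  obtain ⟨r, hr, h1, h2⟩ := Nat.Prime.not_coprime_iff_dvd.mp hc
  exact h r hr ((prime_dvd_npart_iff hr P).mp h1).2 h2

/-! ### Summability lemmas -/

lemma summable_smooth (β : ℝ) (hβ : 0 < β) :
    ∀ (P : Finset ℕ), (∀ p ∈ P, p.Prime) →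
    Summable (Set.indicator {d : ℕ | 1 ≤ d ∧ ∀ r, r.Prime → r ∣ d → r ∈ P}
      fun d => (d : ℝ) ^ (-β)) := by
  intro P
  induction P using Finset.induction_on with
  | empty =>
    intro _
    apply summable_of_ne_finset_zero (s := ({1} : Finset ℕ))
    intro d hd
    rw [Set.indicator_apply_eq_zero]
    intro hmem
    exfalso
    have hd1 : d ≠ 1 := by simpa using hd
    exact absurd (hmem.2 d.minFac (Nat.minFac_prime hd1) (Nat.minFac_dvd d)) (by simp)
  | @insert p P hpP ih =>
    intro hP
    have hp : p.Prime := hP p (Finset.mem_insert_self p P)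
    have hsum_old := ih (fun r hr => hP r (Finset.mem_insert_of_mem hr))
    set f : ℕ → ℝ := Set.indicator {d : ℕ | 1 ≤ d ∧ ∀ r, r.Prime → r ∣ d → r ∈ P}
      (fun d => (d : ℝ) ^ (-β)) with hf
    set S' : Set ℕ := {d : ℕ | 1 ≤ d ∧ ∀ r, r.Prime → r ∣ d → r ∈ insert p P} with hS'
    have hf0 : ∀ n, 0 ≤ f n :=
      Set.indicator_nonneg (fun d _ => Real.rpow_nonneg (Nat.cast_nonneg d) _)
    have hpc0 : (0:ℝ) ≤ (p : ℝ) ^ (-β) := Real.rpow_nonneg (Nat.cast_nonneg p) _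
    have hplt : (p : ℝ) ^ (-β) < 1 :=
      Real.rpow_lt_one_of_one_lt_of_neg (by exact_mod_cast hp.one_lt) (by linarith)
    have hg : Summable (fun x : ℕ × ℕ => ((p:ℝ)^(-β))^x.1 * f x.2) :=
      Summable.mul_of_nonneg (summable_geometric_of_lt_one hpc0 hplt) hsum_old
        (fun n => pow_nonneg hpc0 n) hf0
    classical
    refine summable_of_maj hg
      (fun d => if d ∈ S' then (d.factorization p, d / p ^ d.factorization p) else (d + 1, 0))
      ?_ ?_ ?_
    · intro x y hxy
      by_cases hx : x ∈ S' <;> by_cases hy : y ∈ S' <;>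
        simp only [hx, hy, if_true, if_false, Prod.mk.injEq] at hxy
      · have ex : p ^ x.factorization p * (x / p ^ x.factorization p) = x :=
          Nat.ordProj_mul_ordCompl_eq_self x p
        have ey : p ^ y.factorization p * (y / p ^ y.factorization p) = y :=
          Nat.ordProj_mul_ordCompl_eq_self y p
        rw [← ex, ← ey, hxy.2, hxy.1]
      · have hx0 : x ≠ 0 := by have := hx.1; omega
        exact absurd hxy.2 (Nat.ordCompl_pos p hx0).ne'
      · have hy0 : y ≠ 0 := by have := hy.1; omega
        exact absurd hxy.2.symm (Nat.ordCompl_pos p hy0).ne'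
      · omega
    · exact Set.indicator_nonneg (fun d _ => Real.rpow_nonneg (Nat.cast_nonneg d) _)
    · intro d
      by_cases hd : d ∈ S'
      · rw [Set.indicator_of_mem hd, if_pos hd]
        have hd0 : d ≠ 0 := by have := hd.1; omega
        set e := d.factorization p with he
        set d' := d / p ^ e with hd'
        have hdd : p ^ e * d' = d := Nat.ordProj_mul_ordCompl_eq_self d p
        have hnd : ¬ p ∣ d' := Nat.not_dvd_ordCompl hp hd0
        have hd'0 : 0 < d' := Nat.ordCompl_pos p hd0
        have hd'S : d' ∈ {d : ℕ | 1 ≤ d ∧ ∀ r, r.Prime → r ∣ d → r ∈ P} := by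
          refine ⟨hd'0, fun r hr hrd => ?_⟩
          have hrd2 : r ∣ d := hrd.trans (Nat.ordCompl_dvd d p)
          have hmem := hd.2 r hr hrd2
          rcases Finset.mem_insert.mp hmem with h | h
          · exact absurd (h ▸ hrd) hnd
          · exact h
        have hfd' : f d' = (d' : ℝ) ^ (-β) := Set.indicator_of_mem hd'S _
        rw [hfd']
        have hcast : (d : ℝ) = ((p : ℝ) ^ e) * (d' : ℝ) := by exact_mod_cast hdd.symm
        rw [hcast, Real.mul_rpow (by positivity) (Nat.cast_nonneg d'),
          pow_rpow_neg _ (Nat.cast_nonneg p)]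
        have hpe : (p : ℝ) ^ (-((e : ℝ) * β)) = ((p : ℝ) ^ (-β)) ^ e := by
          rw [← Real.rpow_natCast ((p:ℝ) ^ (-β)) e, ← Real.rpow_mul (Nat.cast_nonneg p)]
          ring_nf
        rw [hpe]
      · rw [Set.indicator_of_notMem hd, if_neg hd]
        exact mul_nonneg (pow_nonneg hpc0 _) (hf0 0)

set_option maxHeartbeats 1000000 in
lemma summable_squarefull (σ : ℝ) (h2 : 1 < 2 * σ) (h3 : 1 < 3 * σ) :
    Summable (Set.indicator {w : ℕ | 1 ≤ w ∧ ∀ r, r.Prime → r ∣ w → r ^ 2 ∣ w}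
      fun w => (w : ℝ) ^ (-σ)) := by
  have hσ : 0 < σ := by linarith
  classical
  set S := {w : ℕ | 1 ≤ w ∧ ∀ r, r.Prime → r ∣ w → r ^ 2 ∣ w} with hS
  set af : ℕ → ℕ := fun w => ∏ p ∈ w.primeFactors,
    p ^ ((w.factorization p - 3 * (w.factorization p % 2)) / 2) with haf
  set bf : ℕ → ℕ := fun w => ∏ p ∈ w.primeFactors, p ^ (w.factorization p % 2) with hbf
  have hrep : ∀ w ∈ S, af w ^ 2 * bf w ^ 3 = w := by
    intro w hw
    have hw0 : w ≠ 0 := by have := hw.1; omega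
    have hexp : ∀ q ∈ w.primeFactors, 2 ≤ w.factorization q := by
      intro q hq
      have hqp := Nat.prime_of_mem_primeFactors hq
      have hdvd : q ^ 2 ∣ w := hw.2 q hqp (Nat.dvd_of_mem_primeFactors hq)
      exact (Nat.Prime.pow_dvd_iff_le_factorization hqp hw0).mp hdvd
    calc af w ^ 2 * bf w ^ 3 = ∏ q ∈ w.primeFactors, q ^ w.factorization q := by
          rw [haf, hbf, ← Finset.prod_pow, ← Finset.prod_pow, ← Finset.prod_mul_distrib]
          refine Finset.prod_congr rfl fun q hq => ?_
          rw [← pow_mul, ← pow_mul, ← pow_add]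
          congr 1
          have := hexp q hq
          omega
      _ = w := prod_primeFactors_pow_factorization hw0
  have hafpos : ∀ w, 0 < af w := fun w =>
    Finset.prod_pos fun q hq => pow_pos (Nat.prime_of_mem_primeFactors hq).pos _
  have hg : Summable (fun x : ℕ × ℕ => ((x.1:ℝ))^(-(2*σ)) * ((x.2:ℝ))^(-(3*σ))) :=
    Summable.mul_of_nonneg (Real.summable_nat_rpow.mpr (by linarith))
      (Real.summable_nat_rpow.mpr (by linarith))
      (fun n => Real.rpow_nonneg (Nat.cast_nonneg n) _)
      (fun n => Real.rpow_nonneg (Nat.cast_nonneg n) _)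
  refine summable_of_maj hg (fun w => if w ∈ S then (af w, bf w) else (0, w)) ?_ ?_ ?_
  · intro x y hxy
    by_cases hx : x ∈ S <;> by_cases hy : y ∈ S <;>
      simp only [hx, hy, if_true, if_false, Prod.mk.injEq] at hxy
    · rw [← hrep x hx, ← hrep y hy, hxy.1, hxy.2]
    · exact absurd hxy.1 (hafpos x).ne'
    · exact absurd hxy.1.symm (hafpos y).ne'
    · exact hxy.2
  · exact Set.indicator_nonneg (fun d _ => Real.rpow_nonneg (Nat.cast_nonneg d) _)
  · intro w
    by_cases hw : w ∈ S
    · rw [Set.indicator_of_mem hw, if_pos hw]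
      have hcast : (w : ℝ) = ((af w : ℝ) ^ 2) * ((bf w : ℝ) ^ 3) := by
        exact_mod_cast (hrep w hw).symm
      rw [hcast, Real.mul_rpow (by positivity) (by positivity),
        pow_rpow_neg _ (Nat.cast_nonneg _), pow_rpow_neg _ (Nat.cast_nonneg _)]
      norm_num
    · rw [Set.indicator_of_notMem hw, if_neg hw]
      positivity

lemma sf_prod_bound (C₄ : ℝ) (hC₄ : 0 < C₄) (α : ℝ) (hα0 : 0 ≤ α) (hα : α ≤ 1/3)
    (P₀ : ℕ) (hP₀ : ∀ p : ℕ, p.Prime → P₀ < p → C₄ ≤ (p:ℝ) ^ ((1:ℝ)/12)) :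
    ∀ s : ℕ, Squarefree s →
      (s:ℝ) ^ α * ∏ p ∈ s.primeFactors, (C₄ * (p:ℝ) ^ (-(3:ℝ)/2))
        ≤ (max 1 C₄) ^ (P₀ + 1) * (s:ℝ) ^ (-(13:ℝ)/12) := by
  intro s hs
  have hsprod : (s : ℝ) = ∏ p ∈ s.primeFactors, (p : ℝ) := by
    conv_lhs => rw [← Nat.prod_primeFactors_of_squarefree hs]
    push_cast
    ring
  have hnn : ∀ p ∈ s.primeFactors, (0:ℝ) ≤ (p:ℝ) := fun p _ => Nat.cast_nonneg p
  have h1 : (s:ℝ) ^ α = ∏ p ∈ s.primeFactors, (p:ℝ) ^ α := by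
    rw [hsprod, ← Real.finset_prod_rpow _ _ hnn]
  have h2 : (s:ℝ) ^ (-(13:ℝ)/12) = ∏ p ∈ s.primeFactors, (p:ℝ) ^ (-(13:ℝ)/12) := by
    rw [hsprod, ← Real.finset_prod_rpow _ _ hnn]
  rw [h1, h2, ← Finset.prod_mul_distrib]
  have step1 : ∏ p ∈ s.primeFactors, ((p:ℝ) ^ α * (C₄ * (p:ℝ) ^ (-(3:ℝ)/2)))
      ≤ ∏ p ∈ s.primeFactors,
          ((if p ≤ P₀ then max 1 C₄ else 1) * (p:ℝ) ^ (-(13:ℝ)/12)) := by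
    refine Finset.prod_le_prod (fun p _ => by positivity) fun p hp => ?_
    have hpp := Nat.prime_of_mem_primeFactors hp
    have hp1 : (1:ℝ) ≤ (p:ℝ) := by exact_mod_cast hpp.one_le
    have hp0 : (0:ℝ) < (p:ℝ) := lt_of_lt_of_le one_pos hp1
    have hcomb : (p:ℝ) ^ α * (C₄ * (p:ℝ) ^ (-(3:ℝ)/2)) = C₄ * (p:ℝ) ^ (α + -(3:ℝ)/2) := by
      rw [Real.rpow_add hp0]; ring
    rw [hcomb]
    by_cases hple : p ≤ P₀
    · rw [if_pos hple]
      exact mul_le_mul (le_max_right 1 C₄)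
        (Real.rpow_le_rpow_of_exponent_le hp1 (by linarith))
        (Real.rpow_nonneg hp0.le _) (le_trans zero_le_one (le_max_left 1 C₄))
    · rw [if_neg hple, one_mul]
      calc C₄ * (p:ℝ) ^ (α + -(3:ℝ)/2)
          ≤ (p:ℝ) ^ ((1:ℝ)/12) * (p:ℝ) ^ (α + -(3:ℝ)/2) :=
            mul_le_mul_of_nonneg_right (hP₀ p hpp (by omega)) (Real.rpow_nonneg hp0.le _)
        _ = (p:ℝ) ^ ((1:ℝ)/12 + (α + -(3:ℝ)/2)) := (Real.rpow_add hp0 _ _).symm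
        _ ≤ (p:ℝ) ^ (-(13:ℝ)/12) := Real.rpow_le_rpow_of_exponent_le hp1 (by linarith)
  refine le_trans step1 ?_
  rw [Finset.prod_mul_distrib]
  refine mul_le_mul_of_nonneg_right ?_
    (Finset.prod_nonneg fun p _ => Real.rpow_nonneg (Nat.cast_nonneg p) _)
  have hcard : (s.primeFactors.filter (· ≤ P₀)).card ≤ P₀ + 1 := by
    have hsub : s.primeFactors.filter (· ≤ P₀) ⊆ Finset.range (P₀ + 1) := by
      intro p hp
      simp only [Finset.mem_filter] at hp
      exact Finset.mem_range.mpr (by omega)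
    simpa using Finset.card_le_card hsub
  calc ∏ p ∈ s.primeFactors, (if p ≤ P₀ then max 1 C₄ else 1)
      = (max 1 C₄) ^ (s.primeFactors.filter (· ≤ P₀)).card := by
        rw [Finset.prod_ite, Finset.prod_const, Finset.prod_const, one_pow, mul_one]
    _ ≤ (max 1 C₄) ^ (P₀ + 1) := pow_le_pow_right₀ (le_max_left 1 C₄) hcard

set_option maxHeartbeats 4000000 in

/-- The singular series `𝔖(N) = ∑_q S(q;N)` converges absolutely, uniformly in `N`,
and its tail beyond `Q` is `O(Q^(−1/3+ε))`, given the factor bounds for the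
exponential sums `S₁, S₂, S₃` and multiplicativity of `S(q;N)`. -/
theorem singular_series_tail (D : ℤ) (hD : D ≠ 0)
    (S1 S2 S3 : ℕ → ℕ → ℂ) (SN : ℕ → ℤ → ℂ)
    (hSN : ∀ q : ℕ, ∀ N : ℤ, SN q N = (q : ℂ) ^ (-(7 : ℤ)) *
      ∑ a ∈ (Finset.range q).filter (fun a => Nat.Coprime (a + 1) q),
        S1 q (a + 1) * S2 q (a + 1) * S3 q (a + 1) *
          Complex.exp (-(2 * Real.pi * Complex.I * ((a : ℂ) + 1) * (N : ℂ)) / (q : ℂ)))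
    (hgood : ∀ q a : ℕ, 1 ≤ q → Nat.Coprime q D.natAbs →
      ‖S1 q a‖ ≤ (q : ℝ) ^ ((9 : ℝ) / 4) ∧ ‖S2 q a‖ ≤ (q : ℝ) ^ ((9 : ℝ) / 4))
    (hgen : ∃ C : ℝ, 0 < C ∧ ∀ q a : ℕ, 1 ≤ q →
      ‖S1 q a‖ ≤ C * (q : ℝ) ^ ((5 : ℝ) / 2) ∧ ‖S2 q a‖ ≤ C * (q : ℝ) ^ ((5 : ℝ) / 2))
    (h3 : ∃ C : ℝ, 0 < C ∧ ∀ q a : ℕ, 1 ≤ q → ‖S3 q a‖ ≤ C * (q : ℝ) ^ ((2 : ℝ) / 3))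
    (hprime : ∀ p : ℕ, p.Prime → ¬ (p : ℤ) ∣ D → ∀ a : ℕ, ¬ p ∣ a →
      S1 p a = (p : ℂ) ^ 2 ∧ S2 p a = (p : ℂ) ^ 2)
    (h3p : ∃ C : ℝ, 0 < C ∧ ∀ p : ℕ, p.Prime → ¬ (p : ℤ) ∣ D → ∀ a : ℕ, ¬ p ∣ a →
      ‖S3 p a‖ ≤ C * (p : ℝ) ^ ((1 : ℝ) / 2))
    (hmult : ∀ q₁ q₂ : ℕ, Nat.Coprime q₁ q₂ → ∀ N : ℤ,
      SN (q₁ * q₂) N = SN q₁ N * SN q₂ N) :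
    ∀ ε : ℝ, 0 < ε → ∃ C : ℝ, 0 < C ∧
      (∀ N : ℤ, Summable (fun q : ℕ => ‖SN q N‖)) ∧
      ∀ N : ℤ, ∀ Q : ℕ, 1 ≤ Q →
        (∑' q : ℕ, if Q < q then ‖SN q N‖ else 0) ≤ C * (Q : ℝ) ^ (-(1 : ℝ) / 3 + ε) := by
  intro ε hε
  classical
  obtain ⟨C₁, hC₁, hgen'⟩ := hgen
  obtain ⟨C₃, hC₃, h3'⟩ := h3
  obtain ⟨C₄, hC₄, h3p'⟩ := h3p
  set DD := D.natAbs with hDDdef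
  have hDD0 : DD ≠ 0 := Int.natAbs_ne_zero.mpr hD
  -- the exponential has norm one
  have hexp : ∀ (q a : ℕ) (N : ℤ),
      ‖Complex.exp (-(2 * Real.pi * Complex.I * ((a : ℂ) + 1) * (N : ℂ)) / (q : ℂ))‖ = 1 := by
    intro q a N
    have harg : (-(2 * (Real.pi : ℂ) * Complex.I * ((a : ℂ) + 1) * (N : ℂ)) / (q : ℂ))
        = ((-(2 * Real.pi * ((a : ℝ) + 1) * (N : ℝ)) / (q : ℝ) : ℝ) : ℂ) * Complex.I := by
      push_cast
      ring
    rw [harg, Complex.norm_exp_ofReal_mul_I]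
  -- generic bound on ‖SN q N‖ from termwise bounds
  have hkey : ∀ (q : ℕ) (N : ℤ) (B1 B2 B3 : ℝ), 1 ≤ q → 0 ≤ B1 → 0 ≤ B2 → 0 ≤ B3 →
      (∀ a : ℕ, Nat.Coprime (a + 1) q →
        ‖S1 q (a + 1)‖ ≤ B1 ∧ ‖S2 q (a + 1)‖ ≤ B2 ∧ ‖S3 q (a + 1)‖ ≤ B3) →
      ‖SN q N‖ ≤ (q : ℝ) ^ (-(6 : ℝ)) * (B1 * (B2 * B3)) := by
    intro q N B1 B2 B3 hq hB1 hB2 hB3 hB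
    have hq0 : (0 : ℝ) < (q : ℝ) := by exact_mod_cast hq
    rw [hSN q N, norm_mul]
    have hz : ‖(q : ℂ) ^ (-(7 : ℤ))‖ = (q : ℝ) ^ (-(7 : ℝ)) := by
      rw [norm_zpow, Complex.norm_natCast, ← Real.rpow_intCast (q : ℝ) (-(7 : ℤ))]
      norm_num
    rw [hz]
    have hsum : ‖∑ a ∈ (Finset.range q).filter (fun a => Nat.Coprime (a + 1) q),
        S1 q (a + 1) * S2 q (a + 1) * S3 q (a + 1) *
          Complex.exp (-(2 * Real.pi * Complex.I * ((a : ℂ) + 1) * (N : ℂ)) / (q : ℂ))‖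
        ≤ (q : ℝ) * (B1 * (B2 * B3)) := by
      refine le_trans (norm_sum_le _ _) ?_
      have hterm : ∀ a ∈ (Finset.range q).filter (fun a => Nat.Coprime (a + 1) q),
          ‖S1 q (a + 1) * S2 q (a + 1) * S3 q (a + 1) *
            Complex.exp (-(2 * Real.pi * Complex.I * ((a : ℂ) + 1) * (N : ℂ)) / (q : ℂ))‖
            ≤ B1 * (B2 * B3) := by
        intro a ha
        have hcop := (Finset.mem_filter.mp ha).2
        obtain ⟨h1, h2, h3t⟩ := hB a hcop
        rw [norm_mul, norm_mul, norm_mul, hexp q a N, mul_one]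
        calc ‖S1 q (a + 1)‖ * ‖S2 q (a + 1)‖ * ‖S3 q (a + 1)‖
            ≤ B1 * B2 * B3 := by
              exact mul_le_mul (mul_le_mul h1 h2 (norm_nonneg _) hB1) h3t (norm_nonneg _)
                (mul_nonneg hB1 hB2)
          _ = B1 * (B2 * B3) := by ring
      refine le_trans (Finset.sum_le_card_nsmul _ _ _ hterm) ?_
      rw [nsmul_eq_mul]
      refine mul_le_mul_of_nonneg_right ?_ (by positivity)
      have := Finset.card_filter_le (Finset.range q) (fun a => Nat.Coprime (a + 1) q)
      rw [Finset.card_range] at this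
      exact_mod_cast this
    have h76 : (q : ℝ) ^ (-(6 : ℝ)) = (q : ℝ) ^ (-(7 : ℝ)) * (q : ℝ) := by
      rw [show (-(6 : ℝ)) = -(7 : ℝ) + 1 by norm_num, Real.rpow_add hq0, Real.rpow_one]
    calc (q : ℝ) ^ (-(7 : ℝ)) * ‖_‖ ≤ (q : ℝ) ^ (-(7 : ℝ)) * ((q : ℝ) * (B1 * (B2 * B3))) :=
          mul_le_mul_of_nonneg_left hsum (Real.rpow_nonneg hq0.le _)
      _ = (q : ℝ) ^ (-(6 : ℝ)) * (B1 * (B2 * B3)) := by rw [h76]; ring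
  -- general bound
  set A : ℝ := C₁ * C₁ * C₃ with hAdef
  have hA : 0 < A := by positivity
  have bnd_gen : ∀ (q : ℕ) (N : ℤ), 1 ≤ q → ‖SN q N‖ ≤ A * (q : ℝ) ^ (-(1 : ℝ)/3) := by
    intro q N hq
    have hq0 : (0 : ℝ) < (q : ℝ) := by exact_mod_cast hq
    have h := hkey q N (C₁ * (q : ℝ) ^ ((5 : ℝ)/2)) (C₁ * (q : ℝ) ^ ((5 : ℝ)/2))
      (C₃ * (q : ℝ) ^ ((2 : ℝ)/3)) hq (by positivity) (by positivity) (by positivity)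
      (fun a _ => ⟨(hgen' q (a + 1) hq).1, (hgen' q (a + 1) hq).2, h3' q (a + 1) hq⟩)
    refine le_trans h (le_of_eq ?_)
    rw [rpow_collect4 (q : ℝ) hq0 C₁ C₁ C₃ (-(6 : ℝ)) ((5 : ℝ)/2) ((5 : ℝ)/2) ((2 : ℝ)/3)]
    norm_num [hAdef]
  -- bound for moduli coprime to D
  have bnd_good : ∀ (q : ℕ) (N : ℤ), 1 ≤ q → Nat.Coprime q DD →
      ‖SN q N‖ ≤ C₃ * (q : ℝ) ^ (-(5 : ℝ)/6) := by
    intro q N hq hcop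
    have hq0 : (0 : ℝ) < (q : ℝ) := by exact_mod_cast hq
    have h := hkey q N ((q : ℝ) ^ ((9 : ℝ)/4)) ((q : ℝ) ^ ((9 : ℝ)/4))
      (C₃ * (q : ℝ) ^ ((2 : ℝ)/3)) hq (by positivity) (by positivity) (by positivity)
      (fun a _ => ⟨(hgood q (a + 1) hq hcop).1, (hgood q (a + 1) hq hcop).2, h3' q (a + 1) hq⟩)
    refine le_trans h (le_of_eq ?_)
    rw [rpow_collect3 (q : ℝ) hq0 C₃ (-(6 : ℝ)) ((9 : ℝ)/4) ((9 : ℝ)/4) ((2 : ℝ)/3)]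
    norm_num
  -- bound at primes not dividing D
  have bnd_prime : ∀ (p : ℕ) (N : ℤ), p.Prime → ¬ p ∣ DD →
      ‖SN p N‖ ≤ C₄ * (p : ℝ) ^ (-(3 : ℝ)/2) := by
    intro p N hpp hpDD
    have hq : 1 ≤ p := hpp.one_le
    have hq0 : (0 : ℝ) < (p : ℝ) := by exact_mod_cast hq
    have hpD : ¬ (p : ℤ) ∣ D := by
      intro hdvd
      exact hpDD (Int.natCast_dvd.mp hdvd)
    have h := hkey p N ((p : ℝ) ^ ((2 : ℝ))) ((p : ℝ) ^ ((2 : ℝ)))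
      (C₄ * (p : ℝ) ^ ((1 : ℝ)/2)) hq (by positivity) (by positivity) (by positivity) ?_
    · refine le_trans h (le_of_eq ?_)
      rw [rpow_collect3 (p : ℝ) hq0 C₄ (-(6 : ℝ)) ((2 : ℝ)) ((2 : ℝ)) ((1 : ℝ)/2)]
      norm_num
    · intro a hcop
      have hnd : ¬ p ∣ (a + 1) := (Nat.Prime.coprime_iff_not_dvd hpp).mp hcop.symm
      obtain ⟨e1, e2⟩ := hprime p hpp hpD (a + 1) hnd
      have hnorm : ‖(p : ℂ) ^ 2‖ = (p : ℝ) ^ ((2 : ℝ)) := by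
        rw [norm_pow, Complex.norm_natCast, ← Real.rpow_natCast (p : ℝ) 2]
        norm_num
      exact ⟨by rw [e1, hnorm], by rw [e2, hnorm], h3p' p hpp hpD (a + 1) hnd⟩
  -- the value at 1 is idempotent, hence of norm at most 1
  have hSN1 : ∀ N : ℤ, ‖SN 1 N‖ ≤ 1 := by
    intro N
    have h := hmult 1 1 (Nat.coprime_one_left 1) N
    rw [show (1 * 1 : ℕ) = 1 by norm_num] at h
    have hz : SN 1 N * (SN 1 N - 1) = 0 := by linear_combination -h
    rcases mul_eq_zero.mp hz with h0 | h1
    · rw [h0]; simp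
    · rw [sub_eq_zero.mp h1]; simp
  -- bound for squarefree moduli coprime to D
  have bnd_sf : ∀ s : ℕ, Squarefree s → Nat.Coprime s DD → ∀ N : ℤ,
      ‖SN s N‖ ≤ ∏ p ∈ s.primeFactors, (C₄ * (p : ℝ) ^ (-(3 : ℝ)/2)) := by
    intro s
    induction s using Nat.strong_induction_on with
    | _ s ih =>
      intro hsf hcop N
      rcases eq_or_ne s 1 with rfl | hs1
      · simpa using hSN1 N
      have hs0 : s ≠ 0 := hsf.ne_zero
      have hpp : s.minFac.Prime := Nat.minFac_prime hs1
      obtain ⟨t, ht⟩ : s.minFac ∣ s := Nat.minFac_dvd s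
      set p := s.minFac with hpdef
      have ht0 : t ≠ 0 := by rintro rfl; rw [Nat.mul_zero] at ht; exact hs0 ht
      have htdvd : t ∣ s := Dvd.intro_left p ht.symm
      have hpt : ¬ p ∣ t := by
        intro hdvd
        have hsq : p * p ∣ s := by rw [ht]; exact mul_dvd_mul_left p hdvd
        exact hpp.one_lt.ne' (Nat.isUnit_iff.mp (hsf p hsq))
      have hcpt : Nat.Coprime p t := (Nat.Prime.coprime_iff_not_dvd hpp).mpr hpt
      have htlt : t < s := by
        rw [ht]
        exact lt_mul_iff_one_lt_left (Nat.pos_of_ne_zero ht0) |>.mpr hpp.one_lt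
      have htsf : Squarefree t := hsf.squarefree_of_dvd htdvd
      have htcop : Nat.Coprime t DD := Nat.Coprime.coprime_dvd_left htdvd hcop
      have hpcop : ¬ p ∣ DD := by
        intro hdvd
        have hpDDcop : Nat.Coprime p DD :=
          Nat.Coprime.coprime_dvd_left (Dvd.intro t ht.symm) hcop
        have hp1 : p ∣ 1 := hpDDcop ▸ Nat.dvd_gcd dvd_rfl hdvd
        exact hpp.one_lt.ne' (Nat.eq_one_of_dvd_one hp1)
      have hPF : (p * t).primeFactors = insert p t.primeFactors := by
        rw [Nat.primeFactors_mul hpp.pos.ne' ht0, Nat.Prime.primeFactors hpp,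
          ← Finset.insert_eq]
      have hpnotmem : p ∉ t.primeFactors := by
        intro hmem
        exact hpt (Nat.dvd_of_mem_primeFactors hmem)
      rw [ht, hPF, Finset.prod_insert hpnotmem, hmult p t hcpt N, norm_mul]
      exact mul_le_mul (bnd_prime p N hpp hpcop) (ih t htlt htsf htcop N) (norm_nonneg _)
        (by positivity)
  -- parameters
  set ε' : ℝ := min ε (1/6) with hε'def
  have hε'0 : 0 < ε' := lt_min hε (by norm_num)
  have hε'6 : ε' ≤ 1/6 := min_le_right _ _
  have hε'ε : ε' ≤ ε := min_le_left _ _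
  set α : ℝ := 1/3 - ε' with hαdef
  have hα0 : 0 < α := by rw [hαdef]; linarith
  have hα3 : α ≤ 1/3 := by rw [hαdef]; linarith
  set M : ℝ := max 1 C₄ with hMdef
  have hM1 : (1:ℝ) ≤ M := le_max_left _ _
  have hM0 : (0:ℝ) < M := by linarith
  set P₀ : ℕ := ⌈M ^ (12:ℕ)⌉₊ with hP₀def
  have hP₀ : ∀ p : ℕ, p.Prime → P₀ < p → C₄ ≤ (p:ℝ) ^ ((1:ℝ)/12) := by
    intro p hp hlt
    have h1 : (M ^ (12:ℕ) : ℝ) ≤ (p:ℝ) := by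
      refine le_trans (Nat.le_ceil _) ?_
      exact_mod_cast Nat.le_of_lt hlt
    calc C₄ ≤ M := le_max_right _ _
      _ = (M ^ (12:ℕ) : ℝ) ^ ((1:ℝ)/12) := by
          rw [← Real.rpow_natCast M 12, ← Real.rpow_mul hM0.le]
          norm_num
      _ ≤ (p:ℝ) ^ ((1:ℝ)/12) := Real.rpow_le_rpow (by positivity) h1 (by norm_num)
  set K : ℝ := M ^ (P₀ + 1) with hKdef
  have hK0 : 0 < K := pow_pos hM0 _
  -- sets and indicator majorants
  set Sd : Set ℕ := {d : ℕ | 1 ≤ d ∧ ∀ r, r.Prime → r ∣ d → r ∈ DD.primeFactors} with hSdd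
  set Sw : Set ℕ := {w : ℕ | 1 ≤ w ∧ ∀ r, r.Prime → r ∣ w → r ^ 2 ∣ w} with hSww
  set aa : ℕ → ℝ := Set.indicator Sd (fun x => (x:ℝ) ^ (-ε')) with haa
  set bb : ℕ → ℝ := Set.indicator Sw (fun y => (y:ℝ) ^ (-(1/2 + ε'))) with hbb
  set cc : ℕ → ℝ := fun z => (z:ℝ) ^ (-(13:ℝ)/12) with hcc
  have haa0 : ∀ n, 0 ≤ aa n :=
    Set.indicator_nonneg (fun d _ => Real.rpow_nonneg (Nat.cast_nonneg d) _)
  have hbb0 : ∀ n, 0 ≤ bb n :=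
    Set.indicator_nonneg (fun d _ => Real.rpow_nonneg (Nat.cast_nonneg d) _)
  have hcc0 : ∀ n, 0 ≤ cc n := fun n => Real.rpow_nonneg (Nat.cast_nonneg n) _
  have hsaa : Summable aa :=
    summable_smooth ε' hε'0 DD.primeFactors (fun p hp => Nat.prime_of_mem_primeFactors hp)
  have hsbb : Summable bb := by
    have := summable_squarefull (1/2 + ε') (by linarith) (by linarith)
    simpa [hbb, hSww] using this
  have hscc : Summable cc := Real.summable_nat_rpow.mpr (by norm_num)
  set H : ℕ × (ℕ × ℕ) → ℝ := fun x => (A * aa x.1) * ((K * cc x.2.1) * (C₃ * bb x.2.2)) with hH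
  have hH0 : ∀ x, 0 ≤ H x := fun x => mul_nonneg (mul_nonneg hA.le (haa0 _))
    (mul_nonneg (mul_nonneg hK0.le (hcc0 _)) (mul_nonneg hC₃.le (hbb0 _)))
  have hHsum : Summable H := by
    have hin : Summable (fun y : ℕ × ℕ => (K * cc y.1) * (C₃ * bb y.2)) :=
      Summable.mul_of_nonneg (hscc.mul_left K) (hsbb.mul_left C₃)
        (fun n => mul_nonneg hK0.le (hcc0 n)) (fun n => mul_nonneg hC₃.le (hbb0 n))
    exact Summable.mul_of_nonneg (hsaa.mul_left A) hin
      (fun n => mul_nonneg hA.le (haa0 n))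
      (fun y => mul_nonneg (mul_nonneg hK0.le (hcc0 _)) (mul_nonneg hC₃.le (hbb0 _)))
  -- decomposition map
  set i : ℕ → ℕ × (ℕ × ℕ) := fun q =>
    if q = 0 then (0, (0, 0))
    else (npart q (fun p => p ∣ DD),
          (npart q (fun p => ¬ p ∣ DD ∧ q.factorization p = 1),
           npart q (fun p => ¬ p ∣ DD ∧ ¬ q.factorization p = 1))) with hi
  -- splitting identity
  have hsplit : ∀ q : ℕ, q ≠ 0 → npart q (fun p => p ∣ DD) *
      (npart q (fun p => ¬ p ∣ DD ∧ q.factorization p = 1) *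
        npart q (fun p => ¬ p ∣ DD ∧ ¬ q.factorization p = 1)) = q := by
    intro q hq
    have hsw := npart_split q (fun p => ¬ p ∣ DD) (fun p => q.factorization p = 1)
    have hdm := npart_mul_npart_compl hq (fun p => p ∣ DD)
    rw [hsw, hdm]
  -- master bound
  have master : ∀ (q : ℕ) (N : ℤ), q ≠ 0 → (q:ℝ) ^ α * ‖SN q N‖ ≤ H (i q) := by
    intro q N hq
    set d := npart q (fun p => p ∣ DD) with hd
    set s := npart q (fun p => ¬ p ∣ DD ∧ q.factorization p = 1) with hs
    set w := npart q (fun p => ¬ p ∣ DD ∧ ¬ q.factorization p = 1) with hw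
    have hd1 : 1 ≤ d := npart_pos _ _
    have hs1 : 1 ≤ s := npart_pos _ _
    have hw1 : 1 ≤ w := npart_pos _ _
    have hd0R : (0:ℝ) < (d:ℝ) := by exact_mod_cast hd1
    have hs0R : (0:ℝ) < (s:ℝ) := by exact_mod_cast hs1
    have hw0R : (0:ℝ) < (w:ℝ) := by exact_mod_cast hw1
    have hq' : d * (s * w) = q := hsplit q hq
    have hcds : Nat.Coprime d (s * w) :=
      Nat.Coprime.mul_right
        (coprime_npart_npart _ _ (fun p _ h1 h2 => h2.1 h1))
        (coprime_npart_npart _ _ (fun p _ h1 h2 => h2.1 h1))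
    have hcsw : Nat.Coprime s w :=
      coprime_npart_npart _ _ (fun p _ h1 h2 => h2.2 h1.2)
    have hsDD : Nat.Coprime s DD := coprime_npart_right _ (fun p _ h1 h2 => h1.1 h2)
    have hwDD : Nat.Coprime w DD := coprime_npart_right _ (fun p _ h1 h2 => h1.1 h2)
    have hssf : Squarefree s := by
      rw [hs]
      refine (Nat.squarefree_iff_factorization_le_one (npart_pos _ _).ne').mpr fun r => ?_
      rw [factorization_npart]
      split
      · next hmem => exact le_of_eq (Finset.mem_filter.mp hmem).2.2
      · exact Nat.zero_le 1
    have hdSd : d ∈ Sd := by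
      refine ⟨hd1, fun r hr hrd => ?_⟩
      have hmem := (prime_dvd_npart_iff hr _).mp (hd ▸ hrd)
      exact Nat.mem_primeFactors.mpr ⟨hr, hmem.2, hDD0⟩
    have hwSw : w ∈ Sw := by
      refine ⟨hw1, fun r hr hrd => ?_⟩
      have hmem := (prime_dvd_npart_iff hr _).mp (hw ▸ hrd)
      have hfac1 : q.factorization r ≠ 0 := by
        rw [← Finsupp.mem_support_iff, Nat.support_factorization]; exact hmem.1
      have hge : 2 ≤ q.factorization r := by
        have := hmem.2.2
        omega
      rw [hw]
      refine (Nat.Prime.pow_dvd_iff_le_factorization hr (npart_pos _ _).ne').mpr ?_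
      rw [factorization_npart, if_pos (Finset.mem_filter.mpr ⟨hmem.1, hmem.2⟩)]
      exact hge
    -- the three factor bounds
    have e1 : (d:ℝ)^α * ‖SN d N‖ ≤ A * (d:ℝ)^(-ε') := by
      have hex : α + -(1:ℝ)/3 = -ε' := by rw [hαdef]; ring
      calc (d:ℝ)^α * ‖SN d N‖ ≤ (d:ℝ)^α * (A * (d:ℝ)^(-(1:ℝ)/3)) :=
            mul_le_mul_of_nonneg_left (bnd_gen d N hd1) (Real.rpow_nonneg hd0R.le _)
        _ = A * (d:ℝ)^(α + -(1:ℝ)/3) := by rw [Real.rpow_add hd0R]; ring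
        _ = A * (d:ℝ)^(-ε') := by rw [hex]
    have e2 : (s:ℝ)^α * ‖SN s N‖ ≤ K * (s:ℝ)^(-(13:ℝ)/12) := by
      calc (s:ℝ)^α * ‖SN s N‖
          ≤ (s:ℝ)^α * ∏ p ∈ s.primeFactors, (C₄ * (p:ℝ)^(-(3:ℝ)/2)) :=
            mul_le_mul_of_nonneg_left (bnd_sf s hssf hsDD N) (Real.rpow_nonneg hs0R.le _)
        _ ≤ (max 1 C₄) ^ (P₀ + 1) * (s:ℝ)^(-(13:ℝ)/12) :=
            sf_prod_bound C₄ hC₄ α hα0.le hα3 P₀ hP₀ s hssf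
        _ = K * (s:ℝ)^(-(13:ℝ)/12) := by rw [hKdef, hMdef]
    have e3 : (w:ℝ)^α * ‖SN w N‖ ≤ C₃ * (w:ℝ)^(-(1/2 + ε')) := by
      have hex : α + -(5:ℝ)/6 = -(1/2 + ε') := by rw [hαdef]; ring
      calc (w:ℝ)^α * ‖SN w N‖ ≤ (w:ℝ)^α * (C₃ * (w:ℝ)^(-(5:ℝ)/6)) :=
            mul_le_mul_of_nonneg_left (bnd_good w N hw1 hwDD) (Real.rpow_nonneg hw0R.le _)
        _ = C₃ * (w:ℝ)^(α + -(5:ℝ)/6) := by rw [Real.rpow_add hw0R]; ring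
        _ = C₃ * (w:ℝ)^(-(1/2 + ε')) := by rw [hex]
    have hnorm : ‖SN q N‖ = ‖SN d N‖ * (‖SN s N‖ * ‖SN w N‖) := by
      conv_lhs => rw [← hq']
      rw [hmult d (s*w) hcds N, hmult s w hcsw N, norm_mul, norm_mul]
    have hcast : (q:ℝ) = (d:ℝ) * ((s:ℝ) * (w:ℝ)) := by exact_mod_cast hq'.symm
    have hHiq : H (i q) = (A * (d:ℝ)^(-ε')) *
        ((K * (s:ℝ)^(-(13:ℝ)/12)) * (C₃ * (w:ℝ)^(-(1/2 + ε')))) := by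
      have h_aa : aa d = (d:ℝ)^(-ε') := Set.indicator_of_mem hdSd _
      have h_bb : bb w = (w:ℝ)^(-(1/2 + ε')) := Set.indicator_of_mem hwSw _
      simp only [hH, hi, if_neg hq, ← hd, ← hs, ← hw]
      rw [h_aa, h_bb]
    rw [hHiq]
    calc (q:ℝ)^α * ‖SN q N‖
        = ((d:ℝ)^α * ‖SN d N‖) * (((s:ℝ)^α * ‖SN s N‖) * ((w:ℝ)^α * ‖SN w N‖)) := by
          rw [hnorm, hcast, Real.mul_rpow hd0R.le (by positivity),
            Real.mul_rpow hs0R.le hw0R.le]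
          ring
      _ ≤ (A * (d:ℝ)^(-ε')) * ((K * (s:ℝ)^(-(13:ℝ)/12)) * (C₃ * (w:ℝ)^(-(1/2 + ε')))) := by
          refine mul_le_mul e1 (mul_le_mul e2 e3 (by positivity) ?_) (by positivity) ?_
          · exact mul_nonneg hK0.le (Real.rpow_nonneg hs0R.le _)
          · exact mul_nonneg hA.le (Real.rpow_nonneg hd0R.le _)
  -- injectivity of the decomposition
  have hiInj : Function.Injective i := by
    intro x y hxy
    by_cases hx : x = 0 <;> by_cases hy : y = 0
    · rw [hx, hy]
    · exfalso
      simp only [hi, if_pos hx, if_neg hy, Prod.mk.injEq] at hxy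
      exact (npart_pos y (fun p => p ∣ DD)).ne' hxy.1.symm
    · exfalso
      simp only [hi, if_neg hx, if_pos hy, Prod.mk.injEq] at hxy
      exact (npart_pos x (fun p => p ∣ DD)).ne' hxy.1
    · simp only [hi, if_neg hx, if_neg hy, Prod.mk.injEq] at hxy
      rw [← hsplit x hx, ← hsplit y hy, hxy.1, hxy.2.1, hxy.2.2]
  -- uniform comparison
  have hSNle : ∀ (N : ℤ) (q : ℕ), ‖SN q N‖ ≤ H (i q) := by
    intro N q
    rcases eq_or_ne q 0 with rfl | hq
    · have h0 : SN 0 N = 0 := by rw [hSN]; simp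
      rw [h0, norm_zero]
      exact hH0 _
    · have hq1 : (1:ℝ) ≤ (q:ℝ) := by exact_mod_cast Nat.one_le_iff_ne_zero.mpr hq
      have h1 : (1:ℝ) ≤ (q:ℝ)^α := by
        have := Real.rpow_le_rpow_of_exponent_le hq1 hα0.le
        rwa [Real.rpow_zero] at this
      calc ‖SN q N‖ = 1 * ‖SN q N‖ := (one_mul _).symm
        _ ≤ (q:ℝ)^α * ‖SN q N‖ := mul_le_mul_of_nonneg_right h1 (norm_nonneg _)
        _ ≤ H (i q) := master q N hq
  have hsummable : ∀ N : ℤ, Summable (fun q : ℕ => ‖SN q N‖) := fun N =>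
    summable_of_maj hHsum i hiInj (fun q => norm_nonneg _) (hSNle N)
  have hHiSum : Summable (fun q : ℕ => H (i q)) := hHsum.comp_injective hiInj
  set TT : ℝ := ∑' q : ℕ, H (i q) with hTT
  have hTT0 : 0 ≤ TT := tsum_nonneg (fun q => hH0 _)
  refine ⟨TT + 1, by linarith, hsummable, ?_⟩
  intro N Q hQ
  have hQ1 : (1:ℝ) ≤ (Q:ℝ) := by exact_mod_cast hQ
  have hQ0 : (0:ℝ) < (Q:ℝ) := by linarith
  have htail_le : ∀ q : ℕ, (if Q < q then ‖SN q N‖ else 0) ≤ (Q:ℝ)^(-α) * H (i q) := by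
    intro q
    by_cases hlt : Q < q
    · rw [if_pos hlt]
      have hq1 : (1:ℝ) ≤ (q:ℝ) := by
        have : 1 ≤ q := by omega
        exact_mod_cast this
      have hq0 : (0:ℝ) < (q:ℝ) := by linarith
      have hqQ : (q:ℝ)^(-α) ≤ (Q:ℝ)^(-α) := by
        rw [Real.rpow_neg hq0.le, Real.rpow_neg hQ0.le]
        refine inv_anti₀ (Real.rpow_pos_of_pos hQ0 α) ?_
        exact Real.rpow_le_rpow hQ0.le (by exact_mod_cast hlt.le) hα0.le
      calc ‖SN q N‖ = (q:ℝ)^(-α) * ((q:ℝ)^α * ‖SN q N‖) := by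
            rw [← mul_assoc, ← Real.rpow_add hq0]
            norm_num
        _ ≤ (q:ℝ)^(-α) * H (i q) :=
            mul_le_mul_of_nonneg_left (master q N (by omega)) (Real.rpow_nonneg hq0.le _)
        _ ≤ (Q:ℝ)^(-α) * H (i q) := mul_le_mul_of_nonneg_right hqQ (hH0 _)
    · rw [if_neg hlt]
      exact mul_nonneg (Real.rpow_nonneg hQ0.le _) (hH0 _)
  have hsum_tail : Summable (fun q : ℕ => if Q < q then ‖SN q N‖ else 0) := by
    refine Summable.of_nonneg_of_le (fun q => ?_) (fun q => ?_) (hsummable N)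
    · split
      · exact norm_nonneg _
      · exact le_refl 0
    · split
      · exact le_refl _
      · exact norm_nonneg _
  have hsum_rhs : Summable (fun q : ℕ => (Q:ℝ)^(-α) * H (i q)) := hHiSum.mul_left _
  have hexple : -α ≤ -(1:ℝ)/3 + ε := by rw [hαdef]; linarith
  calc (∑' q : ℕ, if Q < q then ‖SN q N‖ else 0)
      ≤ ∑' q : ℕ, (Q:ℝ)^(-α) * H (i q) := Summable.tsum_le_tsum htail_le hsum_tail hsum_rhs
    _ = (Q:ℝ)^(-α) * TT := by rw [tsum_mul_left]
    _ ≤ (Q:ℝ)^(-(1:ℝ)/3 + ε) * TT :=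
        mul_le_mul_of_nonneg_right (Real.rpow_le_rpow_of_exponent_le hQ1 hexple) hTT0
    _ ≤ (TT + 1) * (Q:ℝ)^(-(1:ℝ)/3 + ε) := by
        rw [mul_comm ((Q:ℝ)^(-(1:ℝ)/3 + ε)) TT]
        exact mul_le_mul_of_nonneg_right (by linarith)
          (Real.rpow_nonneg hQ0.le _)
end
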